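/- arXiv:1202.6638 — 6 statements merged into one kernel-verified Lean document; each statement's English description precedes it below -/
import Mathlib

section
/- Let Ω ⊆ ℂ^N be a pseudoconvex domain, φ : Ω → Ω a holomorphic map and (n_l) a strictly increasing sequence of natural numbers. If C_φ is hypercyclic with respect to (n_l), then: (1) φ is injective; (2) the image φ(Ω) is a Runge domain with respect to Ω; (3) the sequence of iterates (φ^{n_l})_l is run-away. -/
open Set Filter Topology Metric

noncomputable section

/-- ℂ^N -/
abbrev CN (N : ℕ) := Fin N → ℂ

/-- A domain: a nonempty open connected set. -/
def CNDomain {N : ℕ} (Ω : Set (CN N)) : Prop :=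
  IsOpen Ω ∧ IsConnected Ω

/-- The holomorphic hull of `K` with respect to `Ω`. -/
def holHull {N : ℕ} (Ω K : Set (CN N)) : Set (CN N) :=
  {z | z ∈ Ω ∧ ∀ f : CN N → ℂ, DifferentiableOn ℂ f Ω → ‖f z‖ ≤ ⨆ w ∈ K, ‖f w‖}

/-- `K` is `Ω`-convex if it equals its holomorphic hull w.r.t. `Ω`. -/
def OmegaConvex {N : ℕ} (Ω K : Set (CN N)) : Prop := holHull Ω K = K

/-- Pseudoconvexity, via the solution of the Levi problem: holomorphic convexity. -/
def Pseudoconvex {N : ℕ} (Ω : Set (CN N)) : Prop :=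
  ∀ K : Set (CN N), K ⊆ Ω → IsCompact K → IsCompact (holHull Ω K)

/-- The hull of a compact set `A ⊆ ℂ` with respect to entire functions. -/
def entireHull (A : Set ℂ) : Set ℂ :=
  {w | ∀ f : ℂ → ℂ, Differentiable ℂ f → ‖f w‖ ≤ ⨆ a ∈ A, ‖f a‖}

/-- `U` is a Runge domain with respect to `Ω`: every function holomorphic on `U` is a
locally uniform limit on `U` of (restrictions of) functions holomorphic on `Ω`. -/
def RungeIn {N : ℕ} (U Ω : Set (CN N)) : Prop :=
  ∀ f : CN N → ℂ, DifferentiableOn ℂ f U →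
    ∀ K : Set (CN N), K ⊆ U → IsCompact K → ∀ ε : ℝ, 0 < ε →
      ∃ g : CN N → ℂ, DifferentiableOn ℂ g Ω ∧ ∀ z ∈ K, ‖g z - f z‖ < ε

/-- `C_φ` is hypercyclic with respect to the sequence `(n l)`. -/
def HypercyclicWrt {N : ℕ} (Ω : Set (CN N)) (φ : CN N → CN N) (n : ℕ → ℕ) : Prop :=
  ∃ f : CN N → ℂ, DifferentiableOn ℂ f Ω ∧
    ∀ g : CN N → ℂ, DifferentiableOn ℂ g Ω →
      ∀ K : Set (CN N), K ⊆ Ω → IsCompact K → ∀ ε : ℝ, 0 < ε →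
        ∃ l : ℕ, ∀ z ∈ K, ‖f (φ^[n l] z) - g z‖ < ε

/-- `C_φ` is hereditarily hypercyclic with respect to `(n l)`:
it is hypercyclic with respect to every subsequence. -/
def HereditarilyHypercyclicWrt {N : ℕ} (Ω : Set (CN N)) (φ : CN N → CN N) (n : ℕ → ℕ) : Prop :=
  ∀ k : ℕ → ℕ, StrictMono k → HypercyclicWrt Ω φ (n ∘ k)

/-- A sequence of self-maps of `Ω` is run-away. -/
def RunAway {N : ℕ} (Ω : Set (CN N)) (f : ℕ → CN N → CN N) : Prop :=
  ∀ K : Set (CN N), K ⊆ Ω → IsCompact K → ∀ L : Set (CN N), L ⊆ Ω → IsCompact L →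
    ∃ l : ℕ, Disjoint (f l '' K) L

/-- A sequence of self-maps of `Ω` is compactly divergent. -/
def CompactlyDivergent {N : ℕ} (Ω : Set (CN N)) (f : ℕ → CN N → CN N) : Prop :=
  ∀ K : Set (CN N), K ⊆ Ω → IsCompact K → ∀ L : Set (CN N), L ⊆ Ω → IsCompact L →
    ∃ l₀ : ℕ, ∀ l ≥ l₀, Disjoint (f l '' K) L

/-- The Möbius pseudodistance `c*_Ω(z, w)`. -/
def mobiusDist {N : ℕ} (Ω : Set (CN N)) (z w : CN N) : ℝ :=
  sSup {r : ℝ | ∃ F : CN N → ℂ, DifferentiableOn ℂ F Ω ∧ (∀ x ∈ Ω, ‖F x‖ < 1) ∧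
    F w = 0 ∧ r = ‖F z‖}

/-- The Carathéodory pseudodistance `c_Ω(z, w)`. -/
def caratDist {N : ℕ} (Ω : Set (CN N)) (z w : CN N) : ℝ :=
  Real.log ((1 + mobiusDist Ω z w) / (1 - mobiusDist Ω z w))

/-- `Ω` is a hypercyclic domain: the necessary conditions (c1), (c2), (c3) are
sufficient for hypercyclicity in `Ω`. -/
def HypercyclicDomain {N : ℕ} (Ω : Set (CN N)) : Prop :=
  ∀ φ : CN N → CN N, DifferentiableOn ℂ φ Ω → MapsTo φ Ω Ω →
    ∀ n : ℕ → ℕ, StrictMono n →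
      InjOn φ Ω → RungeIn (φ '' Ω) Ω → RunAway Ω (fun l => φ^[n l]) →
        HypercyclicWrt Ω φ n

/-- A sequence of maps from a planar set `D` to `Ω ⊆ ℂ^N` is compactly divergent. -/
def CompactlyDivergentFrom {N : ℕ} (D : Set ℂ) (Ω : Set (CN N)) (f : ℕ → ℂ → CN N) : Prop :=
  ∀ K : Set ℂ, K ⊆ D → IsCompact K → ∀ L : Set (CN N), L ⊆ Ω → IsCompact L →
    ∃ n₀ : ℕ, ∀ n ≥ n₀, Disjoint (f n '' K) L

/-- `Ω` is taut. -/
def Taut {N : ℕ} (Ω : Set (CN N)) : Prop :=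
  ∀ f : ℕ → ℂ → CN N,
    (∀ n, DifferentiableOn ℂ (f n) (ball (0 : ℂ) 1)) →
    (∀ n, MapsTo (f n) (ball (0 : ℂ) 1) Ω) →
    CompactlyDivergentFrom (ball (0 : ℂ) 1) Ω f ∨
      ∃ k : ℕ → ℕ, StrictMono k ∧ ∃ g : ℂ → CN N,
        DifferentiableOn ℂ g (ball (0 : ℂ) 1) ∧ MapsTo g (ball (0 : ℂ) 1) Ω ∧
        TendstoLocallyUniformlyOn (fun m => f (k m)) g atTop (ball (0 : ℂ) 1)


namespace Stmt2Aux

variable {N : ℕ}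

lemma iter_mapsTo {Ω : Set (CN N)} {φ : CN N → CN N} (h : MapsTo φ Ω Ω) (m : ℕ) :
    MapsTo (φ^[m]) Ω Ω := h.iterate m

lemma iter_diff {Ω : Set (CN N)} {φ : CN N → CN N} (hd : DifferentiableOn ℂ φ Ω)
    (hm : MapsTo φ Ω Ω) (m : ℕ) : DifferentiableOn ℂ (φ^[m]) Ω := by
  induction m with
  | zero => simpa using differentiableOn_id
  | succ k ih =>
    rw [Function.iterate_succ]
    exact ih.comp hd hm

/-- Approximate factorization through `φ`: every `g ∈ O(Ω)` is approximable by `G ∘ φ`. -/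
lemma univA {Ω : Set (CN N)} {φ : CN N → CN N} {n : ℕ → ℕ}
    (hφd : DifferentiableOn ℂ φ Ω) (hφm : MapsTo φ Ω Ω) (hhyp : HypercyclicWrt Ω φ n) :
    ∀ g : CN N → ℂ, DifferentiableOn ℂ g Ω → ∀ C : Set (CN N), C ⊆ Ω → IsCompact C →
      ∀ ε : ℝ, 0 < ε →
        ∃ G : CN N → ℂ, DifferentiableOn ℂ G Ω ∧ ∀ z ∈ C, ‖G (φ z) - g z‖ < ε := by
  intro g hg C hCΩ hCc ε hε
  rcases C.eq_empty_or_nonempty with rfl | ⟨z₀, hz₀⟩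
  · exact ⟨g, hg, by simp⟩
  obtain ⟨f, hf, hu⟩ := hhyp
  have hε' : 0 < min ε 1 := lt_min hε one_pos
  obtain ⟨l₁, h₁⟩ := hu g hg C hCΩ hCc _ hε'
  obtain ⟨l₂, h₂⟩ := hu (fun z => g z + 2) (hg.add_const 2) C hCΩ hCc _ hε'
  cases hnl1 : n l₁ with
  | succ m =>
    refine ⟨fun w => f (φ^[m] w), hf.comp (iter_diff hφd hφm m) (iter_mapsTo hφm m), ?_⟩
    intro z hz
    have h := h₁ z hz
    rw [hnl1, Function.iterate_succ_apply] at h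
    exact lt_of_lt_of_le h (min_le_left _ _)
  | zero =>
    cases hnl2 : n l₂ with
    | succ m =>
      refine ⟨fun w => f (φ^[m] w) - 2,
        (hf.comp (iter_diff hφd hφm m) (iter_mapsTo hφm m)).sub_const 2, ?_⟩
      intro z hz
      have h := h₂ z hz
      rw [hnl2, Function.iterate_succ_apply] at h
      have e : f (φ^[m] (φ z)) - (g z + 2) = f (φ^[m] (φ z)) - 2 - g z := by ring
      rw [e] at h
      exact lt_of_lt_of_le h (min_le_left _ _)
    | zero =>
      exfalso
      have e₁ := h₁ z₀ hz₀
      have e₂ := h₂ z₀ hz₀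
      rw [hnl1, Function.iterate_zero_apply] at e₁
      rw [hnl2, Function.iterate_zero_apply] at e₂
      have h2 : ‖(g z₀ + 2) - g z₀‖ = 2 := by simp
      have htri : ‖(g z₀ + 2) - g z₀‖ ≤ ‖f z₀ - g z₀‖ + ‖f z₀ - (g z₀ + 2)‖ := by
        have e : (g z₀ + 2) - g z₀ = (f z₀ - g z₀) - (f z₀ - (g z₀ + 2)) := by ring
        rw [e]
        exact norm_sub_le _ _
      have hm1 : min ε 1 ≤ 1 := min_le_right _ _
      linarith

/-- Vector version: approximate left inverses for `φ`. -/
lemma univA_vec {Ω : Set (CN N)} {φ : CN N → CN N} {n : ℕ → ℕ}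
    (hφd : DifferentiableOn ℂ φ Ω) (hφm : MapsTo φ Ω Ω) (hhyp : HypercyclicWrt Ω φ n) :
    ∀ C : Set (CN N), C ⊆ Ω → IsCompact C → ∀ ε : ℝ, 0 < ε →
      ∃ G : CN N → CN N, DifferentiableOn ℂ G Ω ∧ ∀ z ∈ C, ‖G (φ z) - z‖ ≤ ε := by
  intro C hCΩ hCc ε hε
  have h : ∀ i : Fin N, ∃ G : CN N → ℂ, DifferentiableOn ℂ G Ω ∧
      ∀ z ∈ C, ‖G (φ z) - z i‖ < ε := fun i =>
    univA hφd hφm hhyp (fun z => z i)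
      ((ContinuousLinearMap.proj i : CN N →L[ℂ] ℂ).differentiable.differentiableOn)
      C hCΩ hCc ε hε
  choose G hGd hG using h
  refine ⟨fun w i => G i w, differentiableOn_pi.2 hGd, ?_⟩
  intro z hz
  have hcoord : ∀ i, ‖((fun i => G i (φ z)) - z) i‖ ≤ ε := by
    intro i
    simpa [Pi.sub_apply] using (hG i z hz).le
  exact pi_norm_le_iff_of_nonneg hε.le |>.2 hcoord

/-- Cauchy-type estimate via the Schwarz lemma: a bounded holomorphic function has a
quantitatively bounded derivative on an inner ball. -/
lemma fderiv_bound {Ω : Set (CN N)} (hΩ : IsOpen Ω) {u : CN N → CN N}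
    (hu : DifferentiableOn ℂ u Ω) {x₀ : CN N} {r M : ℝ} (hr : 0 < r)
    (hball : closedBall x₀ r ⊆ Ω) (hM : ∀ z ∈ closedBall x₀ r, ‖u z‖ ≤ M) :
    ∀ z ∈ ball x₀ (r / 2), ‖fderiv ℂ u z‖ ≤ 4 * M / r := by
  have hM0 : 0 ≤ M := le_trans (norm_nonneg _) (hM x₀ (mem_closedBall_self hr.le))
  intro z hz
  have hzr : dist z x₀ < r / 2 := mem_ball.1 hz
  have hzΩ : z ∈ Ω := hball (mem_closedBall.2 (by linarith))
  have hud : DifferentiableAt ℂ u z := hu.differentiableAt (hΩ.mem_nhds hzΩ)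
  refine ContinuousLinearMap.opNorm_le_bound _ (by positivity) (fun v => ?_)
  rcases eq_or_ne v 0 with rfl | hv
  · simp
  have hv' : 0 < ‖v‖ := norm_pos_iff.2 hv
  set R₁ : ℝ := (r / 2) / ‖v‖ with hR₁def
  have hR₁0 : 0 < R₁ := by positivity
  set g : ℂ → CN N := fun lam => u (z + lam • v) with hgdef
  have hmem : ∀ lam : ℂ, lam ∈ ball (0 : ℂ) R₁ → z + lam • v ∈ closedBall x₀ r := by
    intro lam hlam
    have h1 : ‖lam‖ < R₁ := by simpa using mem_ball.1 hlam
    have hdist : dist (z + lam • v) x₀ ≤ dist z x₀ + ‖lam • v‖ := by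
      rw [dist_eq_norm, dist_eq_norm]
      calc ‖z + lam • v - x₀‖ = ‖(z - x₀) + lam • v‖ := by ring_nf
        _ ≤ ‖z - x₀‖ + ‖lam • v‖ := norm_add_le _ _
    have h2 : ‖lam • v‖ ≤ R₁ * ‖v‖ := by
      rw [norm_smul]
      exact mul_le_mul_of_nonneg_right h1.le (norm_nonneg v)
    have h3 : R₁ * ‖v‖ = r / 2 := by
      field_simp [hR₁def]
      rw [hR₁def, div_mul_cancel₀ _ hv'.ne']; ring
    exact mem_closedBall.2 (by linarith)
  have hgd : DifferentiableOn ℂ g (ball 0 R₁) := by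
    intro lam hlam
    have h1 : DifferentiableAt ℂ (fun lam : ℂ => z + lam • v) lam :=
      (differentiableAt_id.smul_const v).const_add z
    have h2 : DifferentiableAt ℂ u (z + lam • v) :=
      hu.differentiableAt (hΩ.mem_nhds (hball (hmem lam hlam)))
    exact (h2.comp lam h1).differentiableWithinAt
  have hder : HasDerivAt g (fderiv ℂ u z v) 0 := by
    have h1 : HasDerivAt (fun lam : ℂ => z + lam • v) v 0 := by
      simpa using ((hasDerivAt_id (0 : ℂ)).smul_const v).const_add z
    have h2 : HasFDerivAt u (fderiv ℂ u z) (z + (0 : ℂ) • v) := by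
      simpa using hud.hasFDerivAt
    exact h2.comp_hasDerivAt 0 h1
  have key : ∀ ζ : ℝ, 0 < ζ → ‖fderiv ℂ u z v‖ ≤ (2 * M + ζ) / R₁ := by
    intro ζ hζ
    have hmaps : MapsTo g (ball 0 R₁) (ball (g 0) (2 * M + ζ)) := by
      intro lam hlam
      have h0 : (0 : ℂ) ∈ ball (0 : ℂ) R₁ := mem_ball_self hR₁0
      have b1 : ‖u (z + lam • v)‖ ≤ M := hM _ (hmem lam hlam)
      have b2 : ‖u (z + (0 : ℂ) • v)‖ ≤ M := hM _ (hmem 0 h0)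
      have hdist : dist (g lam) (g 0) ≤ ‖u (z + lam • v)‖ + ‖u (z + (0 : ℂ) • v)‖ := by
        rw [dist_eq_norm]
        exact norm_sub_le _ _
      exact mem_ball.2 (by simp only [hgdef]; linarith)
    have h := Complex.norm_deriv_le_div_of_mapsTo_ball hgd (hmaps.mono_right ball_subset_closedBall) hR₁0
    rwa [hder.deriv] at h
  refine le_of_forall_pos_le_add (fun η hη => ?_)
  have hζ : 0 < η * (r / 2) / ‖v‖ := by positivity
  have h := key _ hζ
  have e : (2 * M + η * (r / 2) / ‖v‖) / R₁ = 4 * M / r * ‖v‖ + η := by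
    rw [hR₁def]
    field_simp
    ring
  linarith [e ▸ h]

/-- Schwarz-type Lipschitz estimate on the half ball. -/
lemma schwarz_lip {Ω : Set (CN N)} (hΩ : IsOpen Ω) {u : CN N → CN N}
    (hu : DifferentiableOn ℂ u Ω) {x₀ : CN N} {r M : ℝ} (hr : 0 < r)
    (hball : closedBall x₀ r ⊆ Ω) (hM : ∀ z ∈ closedBall x₀ r, ‖u z‖ ≤ M) :
    ∀ x ∈ ball x₀ (r / 2), ∀ y ∈ ball x₀ (r / 2), ‖u x - u y‖ ≤ 4 * M / r * ‖x - y‖ := by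
  intro x hx y hy
  have hs : Convex ℝ (ball x₀ (r / 2)) := convex_ball _ _
  have hsub : ball x₀ (r / 2) ⊆ Ω := fun w hw =>
    hball (mem_closedBall.2 (by have := mem_ball.1 hw; linarith))
  have hdiff : ∀ w ∈ ball x₀ (r / 2), HasFDerivWithinAt u (fderiv ℂ u w) (ball x₀ (r / 2)) w :=
    fun w hw => ((hu.differentiableAt (hΩ.mem_nhds (hsub hw))).hasFDerivAt).hasFDerivWithinAt
  have hbd : ∀ w ∈ ball x₀ (r / 2), ‖fderiv ℂ u w‖ ≤ 4 * M / r :=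
    fderiv_bound hΩ hu hr hball hM
  exact hs.norm_image_sub_le_of_norm_hasFDerivWithin_le hdiff hbd hy hx

/-- `φ` is a local homeomorphism at each point of `Ω`. -/
lemma local_homeo {Ω : Set (CN N)} (hΩ : IsOpen Ω) (hnt : Nontrivial (CN N))
    {φ : CN N → CN N} {n : ℕ → ℕ} (hφd : DifferentiableOn ℂ φ Ω) (hφm : MapsTo φ Ω Ω)
    (hhyp : HypercyclicWrt Ω φ n) :
    ∀ x₀ ∈ Ω, ∃ e : OpenPartialHomeomorph (CN N) (CN N),
      x₀ ∈ e.source ∧ e.source ⊆ Ω ∧ ∀ z ∈ e.source, e z = φ z := by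
  haveI := hnt
  intro x₀ hx₀
  obtain ⟨ρ, hρ0, hρ⟩ := Metric.isOpen_iff.1 hΩ x₀ hx₀
  set r : ℝ := ρ / 2 with hrdef
  have hr : 0 < r := by positivity
  have hball : closedBall x₀ r ⊆ Ω := by
    refine Subset.trans ?_ hρ
    intro w hw
    have hw' := mem_closedBall.1 hw
    exact mem_ball.2 (by rw [hrdef] at hw'; linarith)
  have hφAt : DifferentiableAt ℂ φ x₀ := hφd.differentiableAt (hΩ.mem_nhds hx₀)
  set A : CN N →L[ℂ] CN N := fderiv ℂ φ x₀ with hAdef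
  have hA : HasFDerivAt φ A x₀ := hφAt.hasFDerivAt
  obtain ⟨G, hGd, hG⟩ := univA_vec hφd hφm hhyp (closedBall x₀ r) hball
    (isCompact_closedBall _ _) (r / 100) (by positivity)
  have hud : DifferentiableOn ℂ (fun z => G (φ z) - z) Ω :=
    (hGd.comp hφd hφm).sub differentiableOn_id
  have hlip := schwarz_lip hΩ hud hr hball hG
  have hc25 : 4 * (r / 100) / r = 1 / 25 := by field_simp; ring
  have hGAt : DifferentiableAt ℂ G (φ x₀) := hGd.differentiableAt (hΩ.mem_nhds (hφm hx₀))
  set B : CN N →L[ℂ] CN N := fderiv ℂ G (φ x₀) with hBdef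
  have hU : HasFDerivAt (fun z => G (φ z) - z)
      (B.comp A - ContinuousLinearMap.id ℂ (CN N)) x₀ :=
    (hGAt.hasFDerivAt.comp x₀ hA).sub (hasFDerivAt_id x₀)
  have hlipW : LipschitzOnWith (Real.toNNReal (1 / 25)) (fun z => G (φ z) - z)
      (ball x₀ (r / 2)) := by
    rw [lipschitzOnWith_iff_dist_le_mul]
    intro x hx y hy
    rw [dist_eq_norm, dist_eq_norm]
    have h := hlip x hx y hy
    rw [hc25] at h
    rw [Real.coe_toNNReal _ (by norm_num : (0:ℝ) ≤ 1/25)]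
    exact h
  have hPnorm : ‖B.comp A - ContinuousLinearMap.id ℂ (CN N)‖ ≤ 1 / 25 := by
    have h := hU.le_of_lipschitzOn (ball_mem_nhds x₀ (by positivity)) hlipW
    rwa [Real.coe_toNNReal _ (by norm_num : (0:ℝ) ≤ 1/25)] at h
  have honesub : ‖(1 : CN N →L[ℂ] CN N) - B.comp A‖ < 1 := by
    have e : (1 : CN N →L[ℂ] CN N) - B.comp A
        = -(B.comp A - ContinuousLinearMap.id ℂ (CN N)) := by
      rw [neg_sub, ContinuousLinearMap.one_def]
    rw [e, norm_neg]
    linarith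
  set Punit : (CN N →L[ℂ] CN N)ˣ := Units.oneSub _ honesub with hPdef
  have hPval : (Punit : CN N →L[ℂ] CN N) = B.comp A := by
    show (1 : CN N →L[ℂ] CN N) - ((1 : CN N →L[ℂ] CN N) - B.comp A) = B.comp A
    exact sub_sub_cancel _ _
  have hPinj : Function.Injective (B.comp A) := by
    intro a b hab
    have h1 : (↑Punit⁻¹ * ↑Punit : CN N →L[ℂ] CN N) a
        = (↑Punit⁻¹ * ↑Punit : CN N →L[ℂ] CN N) b := by
      simp only [ContinuousLinearMap.mul_apply, hPval, hab]
    rwa [Units.inv_mul, ContinuousLinearMap.one_apply, ContinuousLinearMap.one_apply] at h1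
  have hAinj : Function.Injective A := by
    intro a b hab
    exact hPinj (by simp only [ContinuousLinearMap.comp_apply, hab])
  have hAsurj : Function.Surjective A :=
    (LinearMap.injective_iff_surjective (f := (A : CN N →ₗ[ℂ] CN N))).1 hAinj
  set eL : CN N ≃ₗ[ℂ] CN N := LinearEquiv.ofBijective (A : CN N →ₗ[ℂ] CN N) ⟨hAinj, hAsurj⟩
    with heLdef
  set Ahat : CN N ≃L[ℂ] CN N := eL.toContinuousLinearEquiv with hAhatdef
  have hAhatcoe : ∀ w, (Ahat : CN N →L[ℂ] CN N) w = A w := fun w => rfl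
  set δ : ℝ := ‖(Ahat.symm : CN N →L[ℂ] CN N)‖ with hδdef
  have hδ : 0 < δ := by
    rcases eq_or_lt_of_le (norm_nonneg ((Ahat.symm : CN N →L[ℂ] CN N))) with h | h
    · exfalso
      obtain ⟨v, hv⟩ := exists_ne (0 : CN N)
      have hz : (Ahat.symm : CN N →L[ℂ] CN N) = 0 := by
        rwa [eq_comm, ContinuousLinearMap.opNorm_zero_iff] at h
      have hvv : Ahat.symm (Ahat v) = v := Ahat.symm_apply_apply v
      rw [show Ahat.symm (Ahat v) = (Ahat.symm : CN N →L[ℂ] CN N) (Ahat v) from rfl, hz] at hvv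
      exact hv (by simpa using hvv.symm)
    · exact h
  have hlittle : (fun x => φ x - φ x₀ - A (x - x₀)) =o[𝓝 x₀] fun x => x - x₀ := hA.isLittleO
  have hev := hlittle.def (show (0:ℝ) < 1 / (8 * δ) by positivity)
  obtain ⟨ε₂, hε₂0, hε₂⟩ := Metric.eventually_nhds_iff.1 hev
  set s : ℝ := min (ε₂ / 2) r with hsdef
  have hs0 : 0 < s := lt_min (by positivity) hr
  have hsball : closedBall x₀ s ⊆ Ω :=
    Subset.trans (closedBall_subset_closedBall (min_le_right _ _)) hball
  set u₂ : CN N → CN N := fun x => φ x - φ x₀ - A (x - x₀) with hu₂def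
  have hu₂d : DifferentiableOn ℂ u₂ Ω := by
    refine (hφd.sub_const (φ x₀)).sub ?_
    exact ((A.differentiable).comp (differentiable_id.sub_const x₀)).differentiableOn
  set M₂ : ℝ := 1 / (8 * δ) * s with hM₂def
  have hM₂ : ∀ x ∈ closedBall x₀ s, ‖u₂ x‖ ≤ M₂ := by
    intro x hx
    have hd : dist x x₀ < ε₂ := lt_of_le_of_lt (mem_closedBall.1 hx)
      (lt_of_le_of_lt (min_le_left _ _) (by linarith))
    have h1 := hε₂ hd
    have h2 : ‖x - x₀‖ ≤ s := by rw [← dist_eq_norm]; exact mem_closedBall.1 hx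
    calc ‖u₂ x‖ ≤ 1 / (8 * δ) * ‖x - x₀‖ := h1
      _ ≤ 1 / (8 * δ) * s := mul_le_mul_of_nonneg_left h2 (by positivity)
  have hlip₂ := schwarz_lip hΩ hu₂d hs0 hsball hM₂
  have hc₂ : 4 * M₂ / s = 1 / (2 * δ) := by
    rw [hM₂def]
    field_simp
    ring
  set c : NNReal := Real.toNNReal (1 / (2 * δ)) with hcdef
  have hccoe : (c : ℝ) = 1 / (2 * δ) := Real.coe_toNNReal _ (by positivity)
  have happrox : ApproximatesLinearOn φ (Ahat : CN N →L[ℂ] CN N) (ball x₀ (s / 2)) c := by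
    intro x hx y hy
    have h := hlip₂ x hx y hy
    rw [hc₂] at h
    have e : φ x - φ y - (Ahat : CN N →L[ℂ] CN N) (x - y) = u₂ x - u₂ y := by
      rw [hAhatcoe]
      simp only [hu₂def, map_sub]
      abel
    rw [e, hccoe]
    exact h
  have hcineq : c < (‖((Ahat.symm : CN N →L[ℂ] CN N))‖₊)⁻¹ := by
    rw [← NNReal.coe_lt_coe, NNReal.coe_inv, coe_nnnorm, hccoe, ← hδdef, ← one_div]
    exact one_div_lt_one_div_of_lt hδ (by linarith)
  refine ⟨happrox.toOpenPartialHomeomorph φ (ball x₀ (s / 2)) (Or.inr hcineq) isOpen_ball,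
    ?_, ?_, ?_⟩
  · rw [ApproximatesLinearOn.toOpenPartialHomeomorph_source]
    exact mem_ball_self (by positivity)
  · rw [ApproximatesLinearOn.toOpenPartialHomeomorph_source]
    exact fun w hw => hsball (mem_closedBall.2 (by
      have := mem_ball.1 hw
      linarith))
  · intro z hz
    rfl

/-- Fibers over compact subsets of the image can be lifted to a compact set. -/
lemma lift {Ω : Set (CN N)} (hΩ : IsOpen Ω) (hnt : Nontrivial (CN N))
    {φ : CN N → CN N} {n : ℕ → ℕ} (hφd : DifferentiableOn ℂ φ Ω) (hφm : MapsTo φ Ω Ω)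
    (hhyp : HypercyclicWrt Ω φ n) (hinj : InjOn φ Ω)
    {K : Set (CN N)} (hK : K ⊆ φ '' Ω) (hKc : IsCompact K) :
    ∃ C : Set (CN N), C ⊆ Ω ∧ IsCompact C ∧ K ⊆ φ '' C := by
  refine ⟨Ω ∩ φ ⁻¹' K, inter_subset_left, ?_, ?_⟩
  · apply IsSeqCompact.isCompact
    intro x hx
    obtain ⟨t₀, ht₀K, σ, hσ, hconv⟩ := hKc.isSeqCompact (fun m => (hx m).2)
    obtain ⟨x₀, hx₀Ω, hφx₀⟩ := hK ht₀K
    subst hφx₀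
    obtain ⟨e, hx₀e, heΩ, heφ⟩ := local_homeo hΩ hnt hφd hφm hhyp x₀ hx₀Ω
    have htgt : φ x₀ ∈ e.target := by
      rw [← heφ x₀ hx₀e]
      exact e.map_source hx₀e
    have hWnhds : e.target ∈ 𝓝 (φ x₀) := e.open_target.mem_nhds htgt
    have hev : ∀ᶠ k in atTop, φ (x (σ k)) ∈ e.target := hconv.eventually_mem hWnhds
    have hid : ∀ᶠ k in atTop, x (σ k) = e.symm (φ (x (σ k))) := by
      filter_upwards [hev] with k hk
      have hws : e.symm (φ (x (σ k))) ∈ e.source := e.map_target hk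
      have hre : e (e.symm (φ (x (σ k)))) = φ (x (σ k)) := e.right_inv hk
      rw [heφ _ hws] at hre
      exact hinj (hx (σ k)).1 (heΩ hws) hre.symm
    have hsymm₀ : e.symm (φ x₀) = x₀ := by
      have h1 : e x₀ = φ x₀ := heφ x₀ hx₀e
      rw [← h1]
      exact e.left_inv hx₀e
    have hcont : Tendsto (fun k => e.symm (φ (x (σ k)))) atTop (𝓝 x₀) := by
      have hca : ContinuousAt e.symm (φ x₀) := e.continuousAt_symm htgt
      have h2 := hca.tendsto.comp hconv
      rwa [hsymm₀] at h2
    refine ⟨x₀, ⟨hx₀Ω, by rw [mem_preimage]; exact ht₀K⟩, σ, hσ, ?_⟩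
    exact hcont.congr' (by filter_upwards [hid] with k hk; exact hk.symm)
  · intro t ht
    obtain ⟨w, hwΩ, hwt⟩ := hK ht
    exact ⟨w, ⟨hwΩ, by rw [mem_preimage, hwt]; exact ht⟩, hwt⟩

end Stmt2Aux

open Stmt2Aux in
theorem stmt_2 {N : ℕ} (Ω : Set (CN N)) (hdom : CNDomain Ω) (hpsc : Pseudoconvex Ω)
    (φ : CN N → CN N) (hφd : DifferentiableOn ℂ φ Ω) (hφm : MapsTo φ Ω Ω)
    (n : ℕ → ℕ) (hn : StrictMono n)
    (hhyp : HypercyclicWrt Ω φ n) :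
    InjOn φ Ω ∧ RungeIn (φ '' Ω) Ω ∧ RunAway Ω (fun l => φ^[n l]) := by
  -- Injectivity
  have hinj : InjOn φ Ω := by
    obtain ⟨f, hf, hu⟩ := hhyp
    intro a ha b hb hab
    by_contra hne
    obtain ⟨i, hi⟩ : ∃ i, a i ≠ b i := by
      by_contra hcon
      push_neg at hcon
      exact hne (funext hcon)
    set cc : ℂ := if f a - f b = 1 then 2 else 1 with hccdef
    have hcc0 : cc ≠ 0 := by
      rw [hccdef]
      split <;> norm_num
    have hccne : cc ≠ f a - f b := by
      rw [hccdef]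
      split
      · rename_i h
        rw [h]; norm_num
      · rename_i h
        intro hcon
        exact h hcon.symm
    set g : CN N → ℂ := fun z => f b + cc * ((z i - b i) * (a i - b i)⁻¹) with hgdef
    have hgd : DifferentiableOn ℂ g Ω := by
      apply Differentiable.differentiableOn
      apply Differentiable.const_add
      apply Differentiable.const_mul
      apply Differentiable.mul_const
      exact ((ContinuousLinearMap.proj i : CN N →L[ℂ] ℂ).differentiable).sub_const (b i)
    have hga : g a = f b + cc := by
      simp only [hgdef]
      rw [mul_inv_cancel₀ (sub_ne_zero.2 hi), mul_one]
    have hgb : g b = f b := by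
      simp only [hgdef]
      simp
    have hX : 0 < ‖g a - f a‖ := by
      rw [hga, norm_pos_iff]
      intro hcon
      exact hccne (by linear_combination hcon)
    have hY : 0 < ‖g a - g b‖ := by
      rw [hga, hgb]
      have e : f b + cc - f b = cc := by ring
      rw [e]
      exact norm_pos_iff.2 hcc0
    set ε : ℝ := min ‖g a - f a‖ ‖g a - g b‖ / 2 with hεdef
    have hε : 0 < ε := by
      rw [hεdef]
      have := lt_min hX hY
      positivity
    obtain ⟨l, hl⟩ := hu g hgd {a, b} (by
      intro w hw
      rcases hw with rfl | hw
      · exact ha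
      · rw [mem_singleton_iff] at hw; rw [hw]; exact hb)
      ((Set.toFinite ({a, b} : Set (CN N))).isCompact) ε hε
    have hla := hl a (mem_insert _ _)
    have hlb := hl b (mem_insert_of_mem _ rfl)
    cases hnl : n l with
    | zero =>
      rw [hnl, Function.iterate_zero_apply] at hla
      have h1 : ‖g a - f a‖ < ε := by
        rw [norm_sub_rev (g a) (f a)]
        exact hla
      have h2 : ε ≤ ‖g a - f a‖ / 2 := by
        rw [hεdef]
        have := min_le_left ‖g a - f a‖ ‖g a - g b‖
        linarith
      linarith
    | succ m =>
      rw [hnl, Function.iterate_succ_apply, hab] at hla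
      rw [hnl, Function.iterate_succ_apply] at hlb
      have htri : ‖g a - g b‖ ≤ ‖f (φ^[m] (φ b)) - g b‖ + ‖f (φ^[m] (φ b)) - g a‖ := by
        have e : g a - g b = (f (φ^[m] (φ b)) - g b) - (f (φ^[m] (φ b)) - g a) := by ring
        rw [e]
        exact norm_sub_le _ _
      have h2 : ε ≤ ‖g a - g b‖ / 2 := by
        rw [hεdef]
        have := min_le_right ‖g a - f a‖ ‖g a - g b‖
        linarith
      linarith
  -- Run-away
  have hrun : RunAway Ω (fun l => φ^[n l]) := by
    intro K hKΩ hKc L hLΩ hLc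
    by_contra hcon
    push_neg at hcon
    obtain ⟨f, hf, hu⟩ := hhyp
    obtain ⟨Abd, hAbd⟩ := hLc.exists_bound_of_continuousOn (hf.continuousOn.mono hLΩ)
    obtain ⟨l, hl⟩ := hu (fun _ => ((Abd + 2 : ℝ) : ℂ)) (differentiableOn_const _)
      (K ∪ L) (union_subset hKΩ hLΩ) (hKc.union hLc) 1 one_pos
    obtain ⟨y, hyK, hyL⟩ := Set.not_disjoint_iff.1 (hcon l)
    obtain ⟨z, hzK, hzy⟩ := hyK
    have hzy' : φ^[n l] z = y := hzy
    have hAbd0 : 0 ≤ Abd := le_trans (norm_nonneg _) (hAbd y hyL)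
    have h1 := hl z (mem_union_left _ hzK)
    rw [hzy'] at h1
    have h2 : ‖((Abd + 2 : ℝ) : ℂ)‖ ≤ ‖f y‖ + ‖f y - ((Abd + 2 : ℝ) : ℂ)‖ := by
      have e : ((Abd + 2 : ℝ) : ℂ) = f y - (f y - ((Abd + 2 : ℝ) : ℂ)) := by ring
      calc ‖((Abd + 2 : ℝ) : ℂ)‖ = ‖f y - (f y - ((Abd + 2 : ℝ) : ℂ))‖ := by rw [← e]
        _ ≤ ‖f y‖ + ‖f y - ((Abd + 2 : ℝ) : ℂ)‖ := norm_sub_le _ _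
    have h4 : ‖((Abd + 2 : ℝ) : ℂ)‖ = Abd + 2 := by
      rw [Complex.norm_real, Real.norm_eq_abs]
      exact abs_of_nonneg (by linarith)
    have h5 := hAbd y hyL
    rw [h4] at h2
    linarith
  refine ⟨hinj, ?_, hrun⟩
  -- Runge-ness of the image
  rcases subsingleton_or_nontrivial (CN N) with hsub | hnt
  · exfalso
    obtain ⟨f, hf, hu⟩ := hhyp
    obtain ⟨z₀, hz₀⟩ := hdom.2.nonempty
    obtain ⟨l₁, h₁⟩ := hu (fun _ => 0) (differentiableOn_const 0) {z₀}
      (singleton_subset_iff.2 hz₀) isCompact_singleton 1 one_pos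
    obtain ⟨l₂, h₂⟩ := hu (fun _ => 2) (differentiableOn_const 2) {z₀}
      (singleton_subset_iff.2 hz₀) isCompact_singleton 1 one_pos
    have e1 := h₁ z₀ rfl
    have e2 := h₂ z₀ rfl
    have heq : φ^[n l₁] z₀ = φ^[n l₂] z₀ := Subsingleton.elim _ _
    rw [heq] at e1
    have e : (f (φ^[n l₂] z₀) - 0) - (f (φ^[n l₂] z₀) - 2) = (2 : ℂ) := by ring
    have htri : (2:ℝ) ≤ ‖f (φ^[n l₂] z₀) - 0‖ + ‖f (φ^[n l₂] z₀) - 2‖ := by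
      calc (2:ℝ) = ‖(f (φ^[n l₂] z₀) - 0) - (f (φ^[n l₂] z₀) - 2)‖ := by rw [e]; simp
        _ ≤ ‖f (φ^[n l₂] z₀) - 0‖ + ‖f (φ^[n l₂] z₀) - 2‖ := norm_sub_le _ _
    linarith
  · intro h hh K hKU hKc ε hε
    obtain ⟨C, hCΩ, hCc, hKC⟩ := lift hdom.1 hnt hφd hφm hhyp hinj hKU hKc
    have hhφ : DifferentiableOn ℂ (fun z => h (φ z)) Ω :=
      hh.comp hφd (mapsTo_image φ Ω)
    obtain ⟨G, hGd, hGa⟩ := univA hφd hφm hhyp _ hhφ C hCΩ hCc ε hε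
    refine ⟨G, hGd, ?_⟩
    intro t ht
    obtain ⟨w, hwC, rfl⟩ := hKC ht
    exact hGa w hwC
end
end

section
/- Let Ω ⊆ ℂ^N be a pseudoconvex domain, φ : Ω → Ω a holomorphic map and (n_l) a strictly increasing sequence of natural numbers. If C_φ is hereditarily hypercyclic with respect to (n_l), then: (1) φ is injective; (2) the image φ(Ω) is a Runge domain with respect to Ω; (3) the sequence of iterates (φ^{n_l})_l is compactly divergent. -/
open Set Filter Topology Metric

noncomputable section

/-- Auxiliary: a holomorphic function on an open subset of a complex normed space is strictly
differentiable at every point.  Proved via the Schwarz lemma applied on complex lines. -/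
theorem hasStrictFDerivAt_of_differentiableOn_aux {E F : Type*} [NormedAddCommGroup E]
    [NormedSpace ℂ E] [NormedAddCommGroup F] [NormedSpace ℂ F] {s : Set E} (hs : IsOpen s)
    {f : E → F} (hf : DifferentiableOn ℂ f s) {x : E} (hx : x ∈ s) :
    HasStrictFDerivAt f (fderiv ℂ f x) x := by
  have hdx : DifferentiableAt ℂ f x := hf.differentiableAt (hs.mem_nhds hx)
  set A := fderiv ℂ f x with hA
  set u : E → F := fun z => f z - f x - A (z - x) with hu
  have hud : ∀ z ∈ s, DifferentiableAt ℂ u z := by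
    intro z hz
    have h1 : DifferentiableAt ℂ f z := hf.differentiableAt (hs.mem_nhds hz)
    have h2 : DifferentiableAt ℂ (fun z => A (z - x)) z :=
      (A.differentiable.comp (differentiable_id.sub_const x)) z
    exact (h1.sub_const _).sub h2
  refine .of_isLittleO (Asymptotics.isLittleO_iff.2 ?_)
  intro c hc
  have hδ : (0:ℝ) < c / 6 := by linarith
  have hsmall : ∀ᶠ z in 𝓝 x, ‖u z‖ ≤ c / 6 * ‖z - x‖ ∧ z ∈ s := by
    have h1 : ∀ᶠ z in 𝓝 x, ‖u z‖ ≤ c / 6 * ‖z - x‖ :=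
      (hasFDerivAt_iff_isLittleO.1 hdx.hasFDerivAt).def hδ
    exact h1.and (hs.mem_nhds hx)
  rw [Metric.nhds_basis_closedBall.eventually_iff] at hsmall
  obtain ⟨ρ, hρ0, hρ⟩ := hsmall
  have hball : ∀ z ∈ closedBall x ρ, ‖u z‖ ≤ c / 6 * ρ ∧ z ∈ s := by
    intro z hz
    obtain ⟨h1, h2⟩ := hρ hz
    have h3 : ‖z - x‖ ≤ ρ := by rwa [mem_closedBall, dist_eq_norm] at hz
    exact ⟨h1.trans (by nlinarith), h2⟩
  have key : ∀ a ∈ ball x (ρ/4), ∀ b ∈ ball x (ρ/4), ‖u a - u b‖ ≤ c * ‖a - b‖ := by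
    intro a ha b hb
    rcases eq_or_ne a b with rfl | hab
    · simp
    have hw : b - a ≠ 0 := sub_ne_zero.2 (Ne.symm hab)
    have hwn : (0:ℝ) < ‖b - a‖ := norm_pos_iff.2 hw
    have ha' : ‖a - x‖ < ρ/4 := by rwa [mem_ball, dist_eq_norm] at ha
    have hb' : ‖b - x‖ < ρ/4 := by rwa [mem_ball, dist_eq_norm] at hb
    set R₁ : ℝ := ρ / (2 * ‖b - a‖) with hR₁
    have hR₁0 : 0 < R₁ := by positivity
    have hmem : ∀ t : ℂ, t ∈ ball (0:ℂ) R₁ → a + t • (b - a) ∈ closedBall x ρ := by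
      intro t ht
      rw [mem_ball, dist_zero_right] at ht
      rw [mem_closedBall, dist_eq_norm]
      have he : a + t • (b - a) - x = (a - x) + t • (b - a) := by abel
      rw [he]
      have h2 : ‖t • (b - a)‖ ≤ ρ/2 := by
        rw [norm_smul]
        have := mul_le_mul_of_nonneg_right ht.le hwn.le
        calc ‖t‖ * ‖b - a‖ ≤ R₁ * ‖b - a‖ := this
          _ = ρ/2 := by rw [hR₁]; field_simp
      calc ‖(a - x) + t • (b - a)‖ ≤ ‖a - x‖ + ‖t • (b - a)‖ := norm_add_le _ _
        _ ≤ ρ := by linarith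
    set g : ℂ → F := fun t => u (a + t • (b - a)) with hg
    have hgd : DifferentiableOn ℂ g (ball 0 R₁) := by
      intro t ht
      have hz := hmem t ht
      exact ((hud _ (hball _ hz).2).comp t
        (((differentiable_id.smul_const (b - a)).const_add a) t)).differentiableWithinAt
    have haρ : a ∈ closedBall x ρ := by
      rw [mem_closedBall, dist_eq_norm]; linarith
    have hg0 : g 0 = u a := by simp [hg]
    have hmaps : MapsTo g (ball 0 R₁) (ball (g 0) (c / 6 * ρ * 3)) := by
      intro t ht
      rw [mem_ball, dist_eq_norm, hg0]
      have h1 : ‖u (a + t • (b - a))‖ ≤ c / 6 * ρ := (hball _ (hmem t ht)).1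
      have h2 : ‖u a‖ ≤ c / 6 * ρ := (hball a haρ).1
      have h3 : (0:ℝ) < c / 6 * ρ := by positivity
      calc ‖g t - u a‖ ≤ ‖g t‖ + ‖u a‖ := norm_sub_le _ _
        _ < c / 6 * ρ * 3 := by
            have : ‖g t‖ = ‖u (a + t • (b - a))‖ := rfl
            rw [this]; linarith
    have h1ball : (1:ℂ) ∈ ball (0:ℂ) R₁ := by
      rw [mem_ball, dist_zero_right, norm_one, hR₁, lt_div_iff₀ (by positivity)]
      have : ‖b - a‖ ≤ ‖b - x‖ + ‖a - x‖ := by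
        calc ‖b - a‖ = ‖(b - x) - (a - x)‖ := by congr 1; abel
          _ ≤ ‖b - x‖ + ‖a - x‖ := norm_sub_le _ _
      linarith
    have hSch := Complex.dist_le_div_mul_dist_of_mapsTo_ball hgd (hmaps.mono_right ball_subset_closedBall) h1ball
    have hg1 : g 1 = u b := by
      simp only [hg, one_smul]
      congr 1; abel
    rw [hg1, hg0, dist_eq_norm, dist_zero_right, norm_one, mul_one] at hSch
    have hcalc : (c / 6 * ρ * 3) / R₁ = c * ‖b - a‖ := by
      rw [hR₁]; field_simp; ring
    rw [hcalc] at hSch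
    calc ‖u a - u b‖ = ‖u b - u a‖ := norm_sub_rev _ _
      _ ≤ c * ‖b - a‖ := hSch
      _ = c * ‖a - b‖ := by rw [norm_sub_rev]
  rw [nhds_prod_eq]
  filter_upwards [Filter.prod_mem_prod (ball_mem_nhds x (by linarith : (0:ℝ) < ρ/4))
    (ball_mem_nhds x (by linarith : (0:ℝ) < ρ/4))] with p hp
  have hkey := key p.1 hp.1 p.2 hp.2
  have heq : u p.1 - u p.2 = f p.1 - f p.2 - A (p.1 - p.2) := by
    have hAe : A (p.1 - x) - A (p.2 - x) = A (p.1 - p.2) := by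
      rw [← map_sub]; congr 1; abel
    simp only [hu]
    rw [← hAe]; abel
  rw [← heq]
  exact hkey

theorem stmt_3 {N : ℕ} (Ω : Set (CN N)) (hdom : CNDomain Ω) (hpsc : Pseudoconvex Ω)
    (φ : CN N → CN N) (hφd : DifferentiableOn ℂ φ Ω) (hφm : MapsTo φ Ω Ω)
    (n : ℕ → ℕ) (hn : StrictMono n)
    (hhyp : HereditarilyHypercyclicWrt Ω φ n) :
    InjOn φ Ω ∧ RungeIn (φ '' Ω) Ω ∧ CompactlyDivergent Ω (fun l => φ^[n l]) := by
  classical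
  obtain ⟨hΩo, hΩconn⟩ := hdom
  -- a hypercyclic function for the shifted subsequence, whose exponents are all positive
  obtain ⟨h, hhd, hh⟩ := hhyp (fun l => l + 1) (fun a b hab => Nat.add_lt_add_right hab 1)
  simp only [Function.comp_apply] at hh
  have npos : ∀ l, 0 < n (l + 1) := fun l =>
    Nat.lt_of_le_of_lt (Nat.zero_le (n l)) (hn (Nat.lt_succ_self l))
  have hiterm : ∀ m : ℕ, MapsTo (φ^[m]) Ω Ω := fun m => hφm.iterate m
  have hiter : ∀ m : ℕ, DifferentiableOn ℂ (φ^[m]) Ω := by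
    intro m
    induction m with
    | zero => rw [Function.iterate_zero]; exact differentiableOn_id
    | succ t ih => rw [Function.iterate_succ']; exact hφd.comp ih (hφm.iterate t)
  have hproj : ∀ i : Fin N, Differentiable ℂ (fun z : CN N => z i) := by
    intro i
    exact (ContinuousLinearMap.proj (R := ℂ) (φ := fun _ : Fin N => ℂ) i).differentiable
  -- iterate rewriting helper
  have hitsucc : ∀ (l : ℕ) (z : CN N), φ^[n (l + 1) - 1] (φ z) = φ^[n (l + 1)] z := by
    intro l z
    obtain ⟨t, ht⟩ : ∃ t, n (l + 1) = t + 1 := ⟨n (l + 1) - 1, by have := npos l; omega⟩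
    rw [ht]
    simp only [Nat.add_sub_cancel]
    rw [← Function.iterate_succ_apply]
  ---- Part 1 : injectivity
  have hinj : InjOn φ Ω := by
    intro a ha b hb hab
    by_contra hne
    obtain ⟨i, hi⟩ : ∃ i, a i ≠ b i := Function.ne_iff.1 hne
    have hd : b i - a i ≠ 0 := sub_ne_zero.2 (Ne.symm hi)
    set g : CN N → ℂ := fun z => (z i - a i) / (b i - a i) with hg
    have hgd : DifferentiableOn ℂ g Ω := by
      rw [hg]
      simp only [div_eq_mul_inv]
      exact (((hproj i).sub_const (a i)).mul_const _).differentiableOn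
    have hKc : IsCompact ({a, b} : Set (CN N)) :=
      ((Set.finite_singleton b).insert a).isCompact
    have hKΩ : ({a, b} : Set (CN N)) ⊆ Ω := by
      intro z hz
      rcases hz with rfl | hz
      · exact ha
      · rw [Set.mem_singleton_iff] at hz; exact hz ▸ hb
    obtain ⟨l, hl⟩ := hh g hgd {a, b} hKΩ hKc (1/2) (by norm_num)
    have h1 := hl a (Set.mem_insert a {b})
    have h2 := hl b (Set.mem_insert_of_mem a rfl)
    have hIT : φ^[n (l + 1)] a = φ^[n (l + 1)] b := by
      rw [← Nat.succ_pred_eq_of_pos (npos l), Function.iterate_succ_apply,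
        Function.iterate_succ_apply, hab]
    rw [hIT] at h1
    have hga : g a = 0 := by simp [hg]
    have hgb : g b = 1 := by simp [hg]; exact hd
    rw [hga] at h1
    rw [hgb] at h2
    set X := h (φ^[n (l + 1)] b)
    have : (1:ℂ) = (X - 0) - (X - 1) := by ring
    have h3 : (1:ℝ) ≤ ‖X - 0‖ + ‖X - 1‖ := by
      calc (1:ℝ) = ‖(1:ℂ)‖ := by simp
        _ = ‖(X - 0) - (X - 1)‖ := by rw [← this]
        _ ≤ ‖X - 0‖ + ‖X - 1‖ := norm_sub_le _ _
    linarith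
  ---- Part 3 : compact divergence
  have hcd : CompactlyDivergent Ω (fun l => φ^[n l]) := by
    intro K hK hKc L hL hLc
    by_contra hc
    push_neg at hc
    obtain ⟨k, hk, hkp⟩ := Filter.extraction_of_frequently_atTop
      (Filter.frequently_atTop.2 hc)
    obtain ⟨f, hfd, hf⟩ := hhyp k hk
    simp only [Function.comp_apply] at hf
    obtain ⟨C, hC⟩ := hLc.exists_bound_of_continuousOn (hfd.continuousOn.mono hL)
    obtain ⟨l, hl⟩ := hf (fun _ => ((max C 0 + 1 : ℝ) : ℂ))
      (differentiableOn_const _) K hK hKc (1/2) (by norm_num)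
    obtain ⟨x, hx1, hx2⟩ := Set.not_disjoint_iff.1 (hkp l)
    obtain ⟨z, hz, hzx⟩ := hx1
    have h1 := hl z hz
    rw [show φ^[n (k l)] z = x from hzx] at h1
    have h2 : ‖f x‖ ≤ max C 0 := le_trans (hC x hx2) (le_max_left _ _)
    have h3 : ‖((max C 0 + 1 : ℝ) : ℂ)‖ = max C 0 + 1 := by
      rw [Complex.norm_real, Real.norm_eq_abs, abs_of_nonneg]
      positivity
    have h4 : max C 0 + 1 ≤ ‖f x - ((max C 0 + 1 : ℝ) : ℂ)‖ + ‖f x‖ := by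
      calc max C 0 + 1 = ‖((max C 0 + 1 : ℝ) : ℂ)‖ := h3.symm
        _ = ‖(((max C 0 + 1 : ℝ) : ℂ) - f x) + f x‖ := by congr 1; ring
        _ ≤ ‖((max C 0 + 1 : ℝ) : ℂ) - f x‖ + ‖f x‖ := norm_add_le _ _
        _ = ‖f x - ((max C 0 + 1 : ℝ) : ℂ)‖ + ‖f x‖ := by rw [norm_sub_rev]
    linarith
  ---- Approximate left inverses built from the hypercyclic function
  have hpsi : ∀ L : Set (CN N), L ⊆ Ω → IsCompact L → ∀ ε : ℝ, 0 < ε →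
      ∃ ψ : CN N → CN N, DifferentiableOn ℂ ψ Ω ∧ ∀ z ∈ L, ‖ψ (φ z) - z‖ ≤ ε := by
    intro L hL hLc ε hε
    have hex : ∀ i : Fin N, ∃ l, ∀ z ∈ L, ‖h (φ^[n (l + 1)] z) - z i‖ < ε := fun i =>
      hh (fun z => z i) (hproj i).differentiableOn L hL hLc ε hε
    choose l hl using hex
    refine ⟨fun w i => h (φ^[n (l i + 1) - 1] w), ?_, ?_⟩
    · exact differentiableOn_pi.2 fun i => hhd.comp (hiter _) (hiterm _)
    · intro z hz
      rw [pi_norm_le_iff_of_nonneg hε.le]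
      intro i
      simp only [Pi.sub_apply]
      rw [hitsucc (l i) z]
      exact (hl i z hz).le
  ---- local sections of φ around every point of the image
  have hloc : ∀ q ∈ φ '' Ω, ∃ V : Set (CN N), IsOpen V ∧ q ∈ V ∧
      ∃ τ : CN N → CN N, ContinuousOn τ V ∧ ∀ w ∈ V, τ w ∈ Ω ∧ φ (τ w) = w := by
    rintro q ⟨z₀, hz₀, rfl⟩
    have hAd : DifferentiableAt ℂ φ z₀ := hφd.differentiableAt (hΩo.mem_nhds hz₀)
    set A := fderiv ℂ φ z₀ with hA
    -- the derivative is injective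
    have hker : ∀ v : CN N, A v = 0 → v = 0 := by
      intro v hv
      by_contra hv0
      obtain ⟨r, hr0, hrball⟩ : ∃ r > 0, closedBall z₀ r ⊆ Ω :=
        Metric.nhds_basis_closedBall.mem_iff.1 (hΩo.mem_nhds hz₀)
      obtain ⟨ψ, hψd, hψ⟩ := hpsi (closedBall z₀ r) hrball (isCompact_closedBall _ _)
        (r/8) (by positivity)
      set v' : CN N := ((‖v‖⁻¹ : ℝ) : ℂ) • v with hv'
      have hv'n : ‖v'‖ = 1 := by
        rw [hv', norm_smul, Complex.norm_real, Real.norm_eq_abs,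
          abs_of_nonneg (by positivity), inv_mul_cancel₀ (norm_ne_zero_iff.2 hv0)]
      have hAv' : A v' = 0 := by rw [hv', map_smul, hv, smul_zero]
      set u : CN N → CN N := fun w => ψ (φ w) - w with hu
      have hud : DifferentiableOn ℂ u Ω :=
        (hψd.comp hφd hφm).sub differentiableOn_id
      have hub : ∀ z ∈ closedBall z₀ r, ‖u z‖ ≤ r/8 := hψ
      have hmem : ∀ t : ℂ, t ∈ ball (0:ℂ) r → z₀ + t • v' ∈ closedBall z₀ r := by
        intro t ht
        rw [mem_ball, dist_zero_right] at ht
        rw [mem_closedBall, dist_eq_norm]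
        have : z₀ + t • v' - z₀ = t • v' := by abel
        rw [this, norm_smul, hv'n, mul_one]
        exact ht.le
      set F : ℂ → CN N := fun t => u (z₀ + t • v') with hF
      have hFd : DifferentiableOn ℂ F (ball (0:ℂ) r) := by
        intro t ht
        exact ((hud.differentiableAt (hΩo.mem_nhds (hrball (hmem t ht)))).comp t
          (((differentiable_id.smul_const v').const_add z₀) t)).differentiableWithinAt
      have hF0 : F 0 = u z₀ := by simp [hF]
      have hFm : MapsTo F (ball (0:ℂ) r) (ball (F 0) (r/2)) := by
        intro t ht
        rw [mem_ball, dist_eq_norm, hF0]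
        have h1 : ‖u (z₀ + t • v')‖ ≤ r/8 := hub _ (hmem t ht)
        have h2 : ‖u z₀‖ ≤ r/8 := hub _ (mem_closedBall_self hr0.le)
        calc ‖F t - u z₀‖ ≤ ‖F t‖ + ‖u z₀‖ := norm_sub_le _ _
          _ < r/2 := by
              have : ‖F t‖ = ‖u (z₀ + t • v')‖ := rfl
              rw [this]; linarith
      have hSch := Complex.norm_deriv_le_div_of_mapsTo_ball hFd (hFm.mono_right ball_subset_closedBall) hr0
      -- compute the derivative of F at 0
      have hline : HasDerivAt (fun t : ℂ => z₀ + t • v') v' 0 := by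
        have h1 : HasDerivAt (fun t : ℂ => t • v') ((1:ℂ) • v') 0 :=
          (hasDerivAt_id 0).smul_const v'
        rw [one_smul] at h1
        exact h1.const_add z₀
      have huz : DifferentiableAt ℂ u z₀ := hud.differentiableAt (hΩo.mem_nhds hz₀)
      have hFder : HasDerivAt F (fderiv ℂ u z₀ v') 0 := by
        have h2 := huz.hasFDerivAt.comp_hasDerivAt_of_eq 0 hline (by simp)
        exact h2
      have hψq : DifferentiableAt ℂ ψ (φ z₀) := hψd.differentiableAt (hΩo.mem_nhds (hφm hz₀))
      have hcompd : DifferentiableAt ℂ (fun w => ψ (φ w)) z₀ := hψq.comp z₀ hAd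
      have hfu : fderiv ℂ u z₀ v' = -v' := by
        have hsub : fderiv ℂ u z₀ = fderiv ℂ (fun w => ψ (φ w)) z₀ - fderiv ℂ id z₀ := by
          rw [hu]
          exact fderiv_sub hcompd differentiableAt_id
        have hcomp : fderiv ℂ (fun w => ψ (φ w)) z₀ = (fderiv ℂ ψ (φ z₀)).comp A :=
          fderiv_comp z₀ hψq hAd
        rw [hsub, hcomp, fderiv_id]
        simp [ContinuousLinearMap.sub_apply, ContinuousLinearMap.comp_apply, hAv', map_zero]
      rw [hFder.deriv, hfu, norm_neg, hv'n] at hSch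
      have : (r/2)/r = 1/2 := by field_simp <;> ring
      rw [this] at hSch
      linarith
    have hAinj : Function.Injective A := by
      intro v w hvw
      have : A (v - w) = 0 := by rw [map_sub, hvw, sub_self]
      exact sub_eq_zero.1 (hker _ this)
    have hAsurj : Function.Surjective A := by
      have hiff := LinearMap.injective_iff_surjective (f := (A : CN N →ₗ[ℂ] CN N))
      exact hiff.1 hAinj
    set e₀ : CN N ≃ₗ[ℂ] CN N :=
      LinearEquiv.ofBijective (A : CN N →ₗ[ℂ] CN N) ⟨hAinj, hAsurj⟩ with he₀
    set e : CN N ≃L[ℂ] CN N := e₀.toContinuousLinearEquiv with he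
    have hcoe : (e : CN N →L[ℂ] CN N) = A := by
      ext v; rfl
    have hstrict : HasStrictFDerivAt φ (e : CN N →L[ℂ] CN N) z₀ := by
      rw [hcoe]
      exact hasStrictFDerivAt_of_differentiableOn_aux hΩo hφd hz₀
    set EE := HasStrictFDerivAt.toOpenPartialHomeomorph φ hstrict with hEE
    have hEcoe : ⇑EE = φ := hstrict.toOpenPartialHomeomorph_coe
    have hsrc : z₀ ∈ EE.source := hstrict.mem_toOpenPartialHomeomorph_source
    have htgt : φ z₀ ∈ EE.target := hstrict.image_mem_toOpenPartialHomeomorph_target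
    refine ⟨EE.target ∩ EE.symm ⁻¹' Ω,
      EE.continuousOn_symm.isOpen_inter_preimage EE.open_target hΩo, ⟨htgt, ?_⟩,
      ⇑EE.symm, EE.continuousOn_symm.mono inter_subset_left, ?_⟩
    · show EE.symm (φ z₀) ∈ Ω
      have h1 : EE z₀ = φ z₀ := by rw [hEcoe]
      rw [← h1, EE.left_inv hsrc]
      exact hz₀
    · intro w hw
      refine ⟨hw.2, ?_⟩
      have := EE.right_inv hw.1
      rwa [hEcoe] at this
  ---- compact subsets of the image are images of compact sets
  have himg : ∀ K : Set (CN N), K ⊆ φ '' Ω → IsCompact K →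
      ∃ L : Set (CN N), L ⊆ Ω ∧ IsCompact L ∧ K ⊆ φ '' L := by
    intro K hK hKc
    set σ := Function.invFunOn φ Ω with hσ
    have hσmem : ∀ w ∈ φ '' Ω, σ w ∈ Ω ∧ φ (σ w) = w := by
      intro w hw
      obtain ⟨z, hz, hzw⟩ := hw
      exact ⟨Function.invFunOn_mem ⟨z, hz, hzw⟩, Function.invFunOn_eq ⟨z, hz, hzw⟩⟩
    have hσc : ContinuousOn σ K := by
      intro q hq
      obtain ⟨V, hVo, hqV, τ, hτc, hτ⟩ := hloc q (hK hq)
      have hEq : ∀ w ∈ V ∩ φ '' Ω, σ w = τ w := by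
        rintro w ⟨hwV, hwΩ⟩
        exact hinj (hσmem w hwΩ).1 (hτ w hwV).1 (by rw [(hσmem w hwΩ).2, (hτ w hwV).2])
      have hτwa : ContinuousWithinAt τ K q := (hτc.continuousAt (hVo.mem_nhds hqV)).continuousWithinAt
      refine hτwa.congr_of_eventuallyEq ?_ (hEq q ⟨hqV, hK hq⟩)
      filter_upwards [mem_nhdsWithin_of_mem_nhds (hVo.mem_nhds hqV), self_mem_nhdsWithin]
        with w hwV hwK
      exact hEq w ⟨hwV, hK hwK⟩
    refine ⟨σ '' K, ?_, hKc.image_of_continuousOn hσc, ?_⟩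
    · rintro z ⟨w, hw, rfl⟩
      exact (hσmem w (hK hw)).1
    · intro w hw
      exact ⟨σ w, Set.mem_image_of_mem σ hw, (hσmem w (hK hw)).2⟩
  ---- Part 2 : Runge-ness of the image
  have hrunge : RungeIn (φ '' Ω) Ω := by
    intro f hfd K hK hKc ε hε
    obtain ⟨L, hL, hLc, hKL⟩ := himg K hK hKc
    have hfφ : DifferentiableOn ℂ (fun z => f (φ z)) Ω :=
      hfd.comp hφd fun z hz => Set.mem_image_of_mem φ hz
    obtain ⟨l, hl⟩ := hh (fun z => f (φ z)) hfφ L hL hLc ε hε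
    refine ⟨fun w => h (φ^[n (l + 1) - 1] w), hhd.comp (hiter _) (hiterm _), ?_⟩
    intro w hw
    obtain ⟨z, hz, hzw⟩ := hKL hw
    rw [← hzw]
    show ‖h (φ^[n (l + 1) - 1] (φ z)) - f (φ z)‖ < ε
    rw [hitsucc l z]
    exact hl z hz
  exact ⟨hinj, hrunge, hcd⟩
end
end

section
/- Let Ω ⊆ ℂ^N be a pseudoconvex domain. Then the conditions (c1) φ injective, (c2) φ(Ω) Runge with respect to Ω, (c3) (φ^{n_l}) run-away are sufficient for hypercyclicity in Ω if and only if the conditions (h1) φ injective, (h2) φ(Ω) Runge with respect to Ω, (h3) (φ^{n_l}) compactly divergent are sufficient for hereditary hypercyclicity in Ω. That is: [for every holomorphic φ : Ω → Ω and every strictly increasing sequence (n_l) satisfying (c1), (c2), (c3), C_φ is hypercyclic with respect to (n_l)] if and only if [for every holomorphic φ : Ω → Ω and every strictly increasing sequence (n_l) satisfying (h1), (h2), (h3), C_φ is hereditarily hypercyclic with respect to (n_l)]. -/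
open Set Filter Topology Metric

noncomputable section

/-- A run-away sequence of iterates has a compactly divergent subsequence. -/
lemma runaway_subseq_compactlyDivergent {N : ℕ} (Ω : Set (CN N)) (hΩo : IsOpen Ω)
    (hΩne : Ω.Nonempty) (φ : CN N → CN N) (hφc : ContinuousOn φ Ω) (hmaps : MapsTo φ Ω Ω)
    (n : ℕ → ℕ) (hra : RunAway Ω (fun l => φ^[n l])) :
    ∃ k : ℕ → ℕ, StrictMono k ∧ CompactlyDivergent Ω (fun l => φ^[n (k l)]) := by
  obtain ⟨z₀, hz₀⟩ := hΩne
  -- exhaustion by compacts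
  set Kc : ℕ → Set (CN N) := fun j =>
    insert z₀ (closedBall (0 : CN N) j ∩ {z | ((j : ENNReal) + 1)⁻¹ ≤ EMetric.infEdist z Ωᶜ})
    with hKc
  have hKcΩ : ∀ j, Kc j ⊆ Ω := by
    intro j z hz
    rcases hz with hz | ⟨_, hz2⟩
    · simpa [hz] using hz₀
    · by_contra hzΩ
      have h0 : EMetric.infEdist z Ωᶜ = 0 := EMetric.infEdist_zero_of_mem hzΩ
      simp only [Set.mem_setOf_eq, h0] at hz2
      have : ((j : ENNReal) + 1)⁻¹ ≠ 0 := by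
        simp [ENNReal.inv_ne_zero]
      exact this (le_antisymm hz2 bot_le)
  have hKcC : ∀ j, IsCompact (Kc j) := by
    intro j
    apply IsCompact.insert
    apply (isCompact_closedBall (0 : CN N) j).inter_right
    exact isClosed_le continuous_const EMetric.continuous_infEdist
  have hKcM : Monotone Kc := by
    intro i j hij
    apply Set.insert_subset_insert
    apply Set.inter_subset_inter
    · exact closedBall_subset_closedBall (by exact_mod_cast hij)
    · intro z hz
      simp only [Set.mem_setOf_eq] at hz ⊢
      refine le_trans ?_ hz
      apply ENNReal.inv_le_inv.2
      have : (i : ENNReal) ≤ j := by exact_mod_cast hij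
      exact add_le_add_left this 1
  have hcover : ∀ S : Set (CN N), IsCompact S → S ⊆ Ω → ∃ j, S ⊆ Kc j := by
    intro S hSc hSΩ
    rcases S.eq_empty_or_nonempty with rfl | hSne
    · exact ⟨0, by simp⟩
    obtain ⟨x, hxS, hxmin⟩ := hSc.exists_isMinOn hSne
      (EMetric.continuous_infEdist (s := Ωᶜ)).continuousOn
    have hxpos : 0 < EMetric.infEdist x Ωᶜ := by
      rw [EMetric.infEdist, EMetric.infEdist_pos_iff_notMem_closure]
      rw [hΩo.isClosed_compl.closure_eq]
      simpa using hSΩ hxS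
    obtain ⟨j₁, hj₁⟩ := ENNReal.exists_inv_nat_lt hxpos.ne'
    obtain ⟨r, hr⟩ := hSc.isBounded.subset_closedBall (0 : CN N)
    obtain ⟨j₂, hj₂⟩ := exists_nat_ge r
    refine ⟨max j₁ j₂, fun z hz => Or.inr ⟨?_, ?_⟩⟩
    · refine closedBall_subset_closedBall ?_ (hr hz)
      exact le_trans hj₂ (by exact_mod_cast le_max_right j₁ j₂)
    · have h1 : ((max j₁ j₂ : ℕ) : ENNReal) + 1 ≥ (j₁ : ENNReal) := by
        have : (j₁ : ENNReal) ≤ ((max j₁ j₂ : ℕ) : ENNReal) := by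
          exact_mod_cast le_max_left j₁ j₂
        exact le_trans this (le_add_of_nonneg_right bot_le)
      calc (((max j₁ j₂ : ℕ) : ENNReal) + 1)⁻¹ ≤ ((j₁ : ENNReal))⁻¹ := ENNReal.inv_le_inv.2 h1
        _ ≤ EMetric.infEdist x Ωᶜ := hj₁.le
        _ ≤ EMetric.infEdist z Ωᶜ := hxmin hz
  -- iterates
  have hit : ∀ i, MapsTo (φ^[i]) Ω Ω := fun i => hmaps.iterate i
  have hitc : ∀ i, ContinuousOn (φ^[i]) Ω := by
    intro i
    induction i with
    | zero => simpa using continuousOn_id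
    | succ i ih =>
      rw [Function.iterate_succ']
      exact hφc.comp ih (hit i)
  -- key extraction
  have A : ∀ j m : ℕ, ∃ l, m < l ∧ Disjoint (φ^[n l] '' Kc j) (Kc j) := by
    intro j m
    set L : Set (CN N) := Kc j ∪ ⋃ i ∈ Set.Iic m, φ^[n i] '' Kc j with hL
    have hLΩ : L ⊆ Ω := by
      apply Set.union_subset (hKcΩ j)
      refine Set.iUnion₂_subset fun i _ => ?_
      exact (Set.image_mono (hKcΩ j)).trans ((hit (n i)).image_subset)
    have hLc : IsCompact L := by
      apply (hKcC j).union
      apply Set.Finite.isCompact_biUnion (Set.finite_Iic m)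
      intro i _
      exact (hKcC j).image_of_continuousOn ((hitc (n i)).mono (hKcΩ j))
    obtain ⟨l, hl⟩ := hra (Kc j) (hKcΩ j) (hKcC j) L hLΩ hLc
    refine ⟨l, ?_, hl.mono_right Set.subset_union_left⟩
    by_contra hml
    push_neg at hml
    have hsub : φ^[n l] '' Kc j ⊆ L := by
      apply Set.subset_union_of_subset_right
      exact Set.subset_biUnion_of_mem (u := fun i => φ^[n i] '' Kc j) hml
    have hne : (φ^[n l] '' Kc j).Nonempty := ⟨_, Set.mem_image_of_mem _ (Set.mem_insert z₀ _)⟩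
    obtain ⟨x, hx⟩ := hne
    exact Set.disjoint_left.1 hl hx (hsub hx)
  -- build the subsequence
  set k : ℕ → ℕ := fun j => Nat.rec (A 0 0).choose (fun j' kj => (A (j' + 1) kj).choose) j
    with hk
  have hkS : StrictMono k := by
    apply strictMono_nat_of_lt_succ
    intro j
    exact (A (j + 1) (k j)).choose_spec.1
  have hkD : ∀ j, Disjoint (φ^[n (k j)] '' Kc j) (Kc j) := by
    intro j
    cases j with
    | zero => exact (A 0 0).choose_spec.2
    | succ j => exact (A (j + 1) (k j)).choose_spec.2
  refine ⟨k, hkS, ?_⟩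
  intro K hKΩ hKc L hLΩ hLc
  obtain ⟨j₀, hj₀⟩ := hcover (K ∪ L) (hKc.union hLc) (Set.union_subset hKΩ hLΩ)
  refine ⟨j₀, fun l hl => ?_⟩
  have hKsub : K ⊆ Kc l := (Set.subset_union_left.trans hj₀).trans (hKcM hl)
  have hLsub : L ⊆ Kc l := (Set.subset_union_right.trans hj₀).trans (hKcM hl)
  exact (hkD l).mono (Set.image_mono hKsub) hLsub

theorem stmt_12 {N : ℕ} (Ω : Set (CN N)) (hdom : CNDomain Ω) (hpsc : Pseudoconvex Ω) :
    (∀ φ : CN N → CN N, DifferentiableOn ℂ φ Ω → MapsTo φ Ω Ω →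
      ∀ n : ℕ → ℕ, StrictMono n →
        InjOn φ Ω → RungeIn (φ '' Ω) Ω → RunAway Ω (fun l => φ^[n l]) →
          HypercyclicWrt Ω φ n) ↔
    (∀ φ : CN N → CN N, DifferentiableOn ℂ φ Ω → MapsTo φ Ω Ω →
      ∀ n : ℕ → ℕ, StrictMono n →
        InjOn φ Ω → RungeIn (φ '' Ω) Ω → CompactlyDivergent Ω (fun l => φ^[n l]) →
          HereditarilyHypercyclicWrt Ω φ n) := by
  constructor
  · -- hypercyclic domain → hereditary version
    intro H φ hφd hφm n hn hinj hrunge hcd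
    intro k hk
    apply H φ hφd hφm (n ∘ k) (hn.comp hk) hinj hrunge
    intro K hKΩ hKc L hLΩ hLc
    obtain ⟨l₀, hl₀⟩ := hcd K hKΩ hKc L hLΩ hLc
    exact ⟨l₀, hl₀ (k l₀) (hk.le_apply)⟩
  · -- hereditary version → hypercyclic domain
    intro H φ hφd hφm n hn hinj hrunge hra
    obtain ⟨k, hkS, hkD⟩ := runaway_subseq_compactlyDivergent Ω hdom.1 hdom.2.1 φ
      hφd.continuousOn hφm n hra
    have hH := H φ hφd hφm (n ∘ k) (hn.comp hkS) hinj hrunge hkD id strictMono_id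
    obtain ⟨f, hf, hfs⟩ := hH
    refine ⟨f, hf, ?_⟩
    intro g hg K hKΩ hKc ε hε
    obtain ⟨l, hl⟩ := hfs g hg K hKΩ hKc ε hε
    exact ⟨k l, hl⟩
end
end

section
/- Let Ω ⊆ ℂ^N be a bounded domain such that for each boundary point a ∈ ∂Ω there exists a holomorphic function f_a : Ω → ℂ with |f_a| < 1 on Ω and f_a(z) → 1 as z → a with z ∈ Ω (a peak function for a). Then for every z₀ ∈ Ω one has lim_{z → ∂Ω} c_Ω(z, z₀) = ∞, i.e. for every M > 0 there exists a compact set L ⊆ Ω such that c_Ω(z, z₀) > M for all z ∈ Ω \ L. -/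
open Set Filter Topology Metric

noncomputable section

lemma normSq_identity (a w : ℂ) :
    Complex.normSq (w - a) + (1 - Complex.normSq a) * (1 - Complex.normSq w)
      = Complex.normSq (1 - (starRingEnd ℂ) a * w) := by
  simp only [Complex.normSq_apply, Complex.sub_re, Complex.sub_im, Complex.mul_re,
    Complex.mul_im, Complex.one_re, Complex.one_im, Complex.conj_re, Complex.conj_im]
  ring

lemma denom_ne_zero {a w : ℂ} (ha : ‖a‖ < 1) (hw : ‖w‖ ≤ 1) :
    1 - (starRingEnd ℂ) a * w ≠ 0 := by
  intro h
  have h1 : (starRingEnd ℂ) a * w = 1 := by linear_combination -h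
  have : ‖(starRingEnd ℂ) a * w‖ < 1 := by
    rw [norm_mul, RCLike.norm_conj]
    nlinarith [norm_nonneg a, norm_nonneg w]
  rw [h1] at this; simp at this

lemma mobius_norm_lt {a w : ℂ} (ha : ‖a‖ < 1) (hw : ‖w‖ < 1) :
    ‖(w - a) / (1 - (starRingEnd ℂ) a * w)‖ < 1 := by
  have hd := denom_ne_zero ha hw.le
  have hdpos : 0 < ‖1 - (starRingEnd ℂ) a * w‖ := norm_pos_iff.2 hd
  rw [norm_div, div_lt_one hdpos]
  have hid := normSq_identity a w
  have hsa : Complex.normSq a = ‖a‖ ^ 2 := by rw [← Complex.sq_norm]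
  have hsw : Complex.normSq w = ‖w‖ ^ 2 := by rw [← Complex.sq_norm]
  have h1 : Complex.normSq (w - a) = ‖w - a‖ ^ 2 := by rw [← Complex.sq_norm]
  have h2 : Complex.normSq (1 - (starRingEnd ℂ) a * w) = ‖1 - (starRingEnd ℂ) a * w‖ ^ 2 := by
    rw [← Complex.sq_norm]
  have p1 : 0 < 1 - ‖a‖ ^ 2 := by nlinarith [norm_nonneg a]
  have p2 : 0 < 1 - ‖w‖ ^ 2 := by nlinarith [norm_nonneg w]
  have hlt : ‖w - a‖ ^ 2 < ‖1 - (starRingEnd ℂ) a * w‖ ^ 2 := by nlinarith [mul_pos p1 p2]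
  exact lt_of_pow_lt_pow_left₀ 2 (norm_nonneg _) hlt

/-- Schwarz–Pick inequality, raw form. -/
lemma sp_raw {g : ℂ → ℂ} (hd : DifferentiableOn ℂ g (ball 0 1))
    (hg : ∀ x ∈ ball (0 : ℂ) 1, ‖g x‖ < 1) {t : ℂ} (ht : t ∈ ball (0 : ℂ) 1) :
    ‖g t - g 0‖ ≤ ‖t‖ * ‖1 - (starRingEnd ℂ) (g 0) * g t‖ := by
  have h0 : (0 : ℂ) ∈ ball (0 : ℂ) 1 := by simp
  set a := g 0 with ha_def
  have ha : ‖a‖ < 1 := hg 0 h0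
  set H : ℂ → ℂ := fun x => (g x - a) / (1 - (starRingEnd ℂ) a * g x) with hH
  have hden : ∀ x ∈ ball (0 : ℂ) 1, 1 - (starRingEnd ℂ) a * g x ≠ 0 := fun x hx =>
    denom_ne_zero ha (hg x hx).le
  have hHd : DifferentiableOn ℂ H (ball 0 1) := by
    apply DifferentiableOn.div
    · exact hd.sub (differentiableOn_const a)
    · exact (differentiableOn_const _).sub ((differentiableOn_const _).mul hd)
    · exact hden
  have hHmaps : MapsTo H (ball (0 : ℂ) 1) (ball (0 : ℂ) 1) := fun x hx => by
    rw [mem_ball_zero_iff]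
    exact mobius_norm_lt ha (hg x hx)
  have hH0 : H 0 = 0 := by simp [hH, ha_def]
  have := Complex.norm_le_norm_of_mapsTo_ball hHd (hHmaps.mono_right ball_subset_closedBall) hH0
    (mem_ball_zero_iff.1 ht)
  have hdt := hden t ht
  have hdtpos : 0 < ‖1 - (starRingEnd ℂ) a * g t‖ := norm_pos_iff.2 hdt
  rw [hH, norm_div, div_le_iff₀ hdtpos] at this
  exact this

/-- algebra: from the Schwarz–Pick inequality with t = 1/2, bound the norm. -/
lemma sp_bound {a w : ℂ} (ha : ‖a‖ < 1) (hw : ‖w‖ < 1)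
    (hab : ‖w - a‖ ≤ (1 / 2) * ‖1 - (starRingEnd ℂ) a * w‖)
    {b : ℝ} (hb : ‖a‖ ≤ b) (hb1 : b < 1) : ‖w‖ ≤ (2 * b + 1) / (2 + b) := by
  have hid := normSq_identity a w
  have hsa : Complex.normSq a = ‖a‖ ^ 2 := by rw [← Complex.sq_norm]
  have hsw : Complex.normSq w = ‖w‖ ^ 2 := by rw [← Complex.sq_norm]
  set s := ‖w‖
  set α := ‖a‖
  have hs0 : 0 ≤ s := norm_nonneg _
  have hα0 : 0 ≤ α := norm_nonneg _
  have h1 : Complex.normSq (w - a) = ‖w - a‖ ^ 2 := by rw [← Complex.sq_norm]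
  have h2 : Complex.normSq (1 - (starRingEnd ℂ) a * w) = ‖1 - (starRingEnd ℂ) a * w‖ ^ 2 := by
    rw [← Complex.sq_norm]
  -- squares
  have hsq : ‖w - a‖ ^ 2 ≤ (1/4) * ‖1 - (starRingEnd ℂ) a * w‖ ^ 2 := by
    nlinarith [norm_nonneg (w - a), norm_nonneg (1 - (starRingEnd ℂ) a * w)]
  -- key quadratic inequality
  have hkey : s ^ 2 * (4 - α ^ 2) - 6 * α * s + 4 * α ^ 2 - 1 ≤ 0 := by
    nlinarith [sq_nonneg (‖w - a‖ - (s - α)), abs_norm_sub_norm_le w a,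
      abs_le.1 (abs_norm_sub_norm_le w a)]
  -- conclude s*(2+α) ≤ 2α+1
  have hmain : s * (2 + α) ≤ 2 * α + 1 := by
    by_contra hcon
    push_neg at hcon
    have hfac : ((2 + α) * s - (2 * α + 1)) * ((2 - α) * s - (2 * α - 1)) ≤ 0 := by
      nlinarith [hkey]
    have hpos : 0 < (2 + α) * s - (2 * α + 1) := by nlinarith
    have hpos2 : 0 < (2 - α) * s - (2 * α - 1) := by nlinarith [mul_pos hpos hpos]
    nlinarith [mul_pos hpos hpos2]
  rw [le_div_iff₀ (by nlinarith : (0:ℝ) < 2 + b)]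
  nlinarith [hmain]

lemma norm_conj_symm (a w : ℂ) :
    ‖1 - (starRingEnd ℂ) a * w‖ = ‖1 - (starRingEnd ℂ) w * a‖ := by
  rw [← RCLike.norm_conj (1 - (starRingEnd ℂ) a * w)]
  congr 1
  simp [map_sub, map_mul]
  ring

/-- Local Schwarz–Pick on a ball inside Ω. -/
lemma local_sp {N : ℕ} {Ω : Set (CN N)} {F : CN N → ℂ}
    (hF : DifferentiableOn ℂ F Ω) (hF1 : ∀ x ∈ Ω, ‖F x‖ < 1)
    {z y : CN N} {r : ℝ} (hr : 0 < r)
    (hball : ball z (2 * r) ⊆ Ω) (hy : dist y z ≤ r) :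
    ‖F y - F z‖ ≤ (1 / 2) * ‖1 - (starRingEnd ℂ) (F z) * F y‖ := by
  rcases eq_or_ne y z with rfl | hne
  · simp only [sub_self, norm_zero]
    positivity
  have hd0 : 0 < dist y z := dist_pos.2 hne
  set d := dist y z with hd_def
  set c : ℝ := 2 * r / d with hc_def
  have hc0 : 0 < c := by positivity
  set μ : ℂ → CN N := fun t => z + ((c : ℂ) * t) • (y - z) with hμ
  have hnorm_yz : ‖y - z‖ = d := by rw [hd_def, dist_eq_norm]
  have hmaps : MapsTo μ (ball (0 : ℂ) 1) (ball z (2 * r)) := by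
    intro t ht
    rw [mem_ball_zero_iff] at ht
    rw [mem_ball, dist_eq_norm, hμ]
    simp only [add_sub_cancel_left]
    rw [norm_smul, norm_mul, Complex.norm_real, Real.norm_eq_abs, abs_of_pos hc0, hnorm_yz]
    calc c * ‖t‖ * d < c * 1 * d := by
          apply mul_lt_mul_of_pos_right _ hd0
          exact mul_lt_mul_of_pos_left ht hc0
      _ = 2 * r := by rw [mul_one, hc_def, div_mul_cancel₀ _ hd0.ne']
  have hμdiff : Differentiable ℂ μ := by
    apply (differentiable_const z).add
    exact (differentiable_id.const_mul ((c : ℂ))).smul_const (y - z)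
  have hmapsΩ : MapsTo μ (ball (0 : ℂ) 1) Ω := hmaps.mono_right hball
  set g : ℂ → ℂ := F ∘ μ with hg_def
  have hgdiff : DifferentiableOn ℂ g (ball 0 1) :=
    hF.comp hμdiff.differentiableOn hmapsΩ
  have hg1 : ∀ x ∈ ball (0 : ℂ) 1, ‖g x‖ < 1 := fun x hx => hF1 _ (hmapsΩ hx)
  have hμ0 : μ 0 = z := by simp [hμ]
  set t₀ : ℂ := ((d / (2 * r) : ℝ) : ℂ) with ht₀_def
  have hμt₀ : μ t₀ = y := by
    have : (c : ℂ) * t₀ = 1 := by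
      have hdC : (d : ℂ) ≠ 0 := by exact_mod_cast hd0.ne'
      have hrC : (r : ℂ) ≠ 0 := by exact_mod_cast hr.ne'
      rw [ht₀_def, hc_def]
      push_cast
      field_simp
    rw [hμ]
    simp only [this, one_smul]
    abel
  have hnt₀ : ‖t₀‖ ≤ 1 / 2 := by
    rw [ht₀_def, Complex.norm_real, Real.norm_eq_abs, abs_of_pos (by positivity)]
    rw [div_le_div_iff₀ (by positivity) (by norm_num)]
    linarith
  have ht₀ball : t₀ ∈ ball (0 : ℂ) 1 := by
    rw [mem_ball_zero_iff]
    linarith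
  have := sp_raw hgdiff hg1 ht₀ball
  rw [hg_def] at this
  simp only [Function.comp_apply, hμ0, hμt₀] at this
  calc ‖F y - F z‖ ≤ ‖t₀‖ * ‖1 - (starRingEnd ℂ) (F z) * F y‖ := this
    _ ≤ (1 / 2) * ‖1 - (starRingEnd ℂ) (F z) * F y‖ :=
        mul_le_mul_of_nonneg_right hnt₀ (norm_nonneg _)

lemma mobius_lt_one {N : ℕ} {Ω : Set (CN N)} (hO : IsOpen Ω) (hconn : IsPreconnected Ω)
    {z₀ : CN N} (hz₀ : z₀ ∈ Ω) {z : CN N} (hz : z ∈ Ω) :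
    ∃ b : ℝ, 0 ≤ b ∧ b < 1 ∧ ∀ F : CN N → ℂ, DifferentiableOn ℂ F Ω →
      (∀ x ∈ Ω, ‖F x‖ < 1) → F z₀ = 0 → ‖F z‖ ≤ b := by
  classical
  set P : CN N → Prop := fun w => ∃ b : ℝ, 0 ≤ b ∧ b < 1 ∧ ∀ F : CN N → ℂ,
    DifferentiableOn ℂ F Ω → (∀ x ∈ Ω, ‖F x‖ < 1) → F z₀ = 0 → ‖F w‖ ≤ b with hP
  set U : Set (CN N) := {w | w ∈ Ω ∧ P w} with hU
  set V : Set (CN N) := {w | w ∈ Ω ∧ ¬ P w} with hV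
  have hb' : ∀ b : ℝ, 0 ≤ b → b < 1 → (0 : ℝ) ≤ (2 * b + 1) / (2 + b) ∧
      (2 * b + 1) / (2 + b) < 1 := by
    intro b hb0 hb1
    constructor
    · positivity
    · rw [div_lt_one (by linarith)]; linarith
  have hUopen : IsOpen U := by
    rw [Metric.isOpen_iff]
    rintro w ⟨hwΩ, b, hb0, hb1, hbF⟩
    obtain ⟨ε, hε, hball⟩ := Metric.isOpen_iff.1 hO w hwΩ
    refine ⟨ε / 3, by linarith, ?_⟩
    intro y hy
    have hball2 : ball w (2 * (ε / 3)) ⊆ Ω := fun x hx =>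
      hball (mem_ball.2 (lt_of_lt_of_le (mem_ball.1 hx) (by linarith)))
    have hyΩ : y ∈ Ω := hball2 (mem_ball.2 (lt_of_lt_of_le (mem_ball.1 hy) (by linarith)))
    refine ⟨hyΩ, (2 * b + 1) / (2 + b), (hb' b hb0 hb1).1, (hb' b hb0 hb1).2, ?_⟩
    intro F hFd hF1 hF0
    have hsp := local_sp hFd hF1 (by linarith : (0:ℝ) < ε / 3) hball2 (mem_ball.1 hy).le
    exact sp_bound (hF1 w hwΩ) (hF1 y hyΩ) hsp (hbF F hFd hF1 hF0) hb1
  have hVopen : IsOpen V := by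
    rw [Metric.isOpen_iff]
    rintro w ⟨hwΩ, hnP⟩
    obtain ⟨ε, hε, hball⟩ := Metric.isOpen_iff.1 hO w hwΩ
    refine ⟨ε / 3, by linarith, ?_⟩
    intro y hy
    have hball2 : ball w (2 * (ε / 3)) ⊆ Ω := fun x hx =>
      hball (mem_ball.2 (lt_of_lt_of_le (mem_ball.1 hx) (by linarith)))
    have hyΩ : y ∈ Ω := hball2 (mem_ball.2 (lt_of_lt_of_le (mem_ball.1 hy) (by linarith)))
    refine ⟨hyΩ, ?_⟩
    rintro ⟨b, hb0, hb1, hbF⟩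
    apply hnP
    refine ⟨(2 * b + 1) / (2 + b), (hb' b hb0 hb1).1, (hb' b hb0 hb1).2, ?_⟩
    intro F hFd hF1 hF0
    have hsp := local_sp hFd hF1 (by linarith : (0:ℝ) < ε / 3) hball2 (mem_ball.1 hy).le
    rw [norm_sub_rev, norm_conj_symm] at hsp
    exact sp_bound (hF1 y hyΩ) (hF1 w hwΩ) hsp (hbF F hFd hF1 hF0) hb1
  have hsub : Ω ⊆ U ∪ V := by
    intro w hw
    by_cases h : P w
    · exact Or.inl ⟨hw, h⟩
    · exact Or.inr ⟨hw, h⟩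
  have hz₀U : z₀ ∈ Ω ∩ U := by
    refine ⟨hz₀, hz₀, 0, le_refl _, one_pos, ?_⟩
    intro F hFd hF1 hF0
    rw [hF0, norm_zero]
  by_contra hnPz
  have hzV : z ∈ Ω ∩ V := by
    refine ⟨hz, hz, ?_⟩
    intro hPz
    obtain ⟨b, hb0, hb1, hbF⟩ := hPz
    exact hnPz ⟨b, hb0, hb1, hbF⟩
  obtain ⟨x, hxΩ, hxU, hxV⟩ := hconn U V hUopen hVopen hsub ⟨z₀, hz₀U⟩ ⟨z, hzV⟩
  exact hxV.2 hxU.2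


theorem stmt_14 {N : ℕ} (Ω : Set (CN N)) (hdom : CNDomain Ω)
    (hbdd : Bornology.IsBounded Ω)
    (hpeak : ∀ a ∈ frontier Ω, ∃ f : CN N → ℂ, DifferentiableOn ℂ f Ω ∧
      (∀ z ∈ Ω, ‖f z‖ < 1) ∧ Tendsto f (𝓝[Ω] a) (𝓝 (1 : ℂ))) :
    ∀ z₀ ∈ Ω, ∀ M : ℝ, 0 < M → ∃ L : Set (CN N), L ⊆ Ω ∧ IsCompact L ∧
      ∀ z ∈ Ω \ L, M < caratDist Ω z z₀ := by
  classical
  obtain ⟨hO, hconn⟩ := hdom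
  intro z₀ hz₀ M hM
  set E : ℝ := Real.exp M + 1 with hE_def
  have hexp := Real.exp_pos M
  have hE1 : 1 < E := by simp only [hE_def]; linarith
  set τ : ℝ := (E - 1) / (E + 1) with hτ_def
  have hτ0 : 0 < τ := by apply div_pos <;> linarith
  have hτ1 : τ < 1 := by rw [div_lt_one (by linarith)]; linarith
  -- the defining set of the Möbius distance is bounded above by 1
  have hmem_bdd : ∀ z ∈ Ω, (1 : ℝ) ∈ upperBounds {r : ℝ | ∃ F : CN N → ℂ,
      DifferentiableOn ℂ F Ω ∧ (∀ x ∈ Ω, ‖F x‖ < 1) ∧ F z₀ = 0 ∧ r = ‖F z‖} := by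
    rintro z hz r ⟨F, _, hF1, _, rfl⟩
    exact (hF1 z hz).le
  -- boundary neighbourhoods where the Möbius distance exceeds τ
  have key : ∀ a ∈ frontier Ω, ∃ W : Set (CN N), IsOpen W ∧ a ∈ W ∧
      ∀ z ∈ W ∩ Ω, τ < mobiusDist Ω z z₀ := by
    intro a ha
    obtain ⟨f, hfd, hf1, hftend⟩ := hpeak a ha
    set c : ℂ := f z₀ with hc_def
    have hc : ‖c‖ < 1 := hf1 z₀ hz₀
    set G : CN N → ℂ := fun z => (f z - c) / (1 - (starRingEnd ℂ) c * f z) with hG_def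
    have hGd : DifferentiableOn ℂ G Ω := by
      rw [hG_def]
      simp only [div_eq_mul_inv]
      exact (hfd.sub (differentiableOn_const c)).mul
        (((differentiableOn_const _).sub ((differentiableOn_const _).mul hfd)).inv
          fun x hx => denom_ne_zero hc (hf1 x hx).le)
    have hG1 : ∀ x ∈ Ω, ‖G x‖ < 1 := fun x hx => mobius_norm_lt hc (hf1 x hx)
    have hG0 : G z₀ = 0 := by simp only [hG_def, hc_def, sub_self, zero_div]
    have hden1 : (1 : ℂ) - (starRingEnd ℂ) c * 1 ≠ 0 := denom_ne_zero hc (by norm_num)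
    have hGtend : Tendsto G (𝓝[Ω] a) (𝓝 ((1 - c) / (1 - (starRingEnd ℂ) c * 1))) := by
      apply Tendsto.div
      · exact hftend.sub tendsto_const_nhds
      · exact tendsto_const_nhds.sub (tendsto_const_nhds.mul hftend)
      · exact hden1
    have h1c : (1 : ℂ) - c ≠ 0 := by
      intro h
      have hc1 : c = 1 := by linear_combination -h
      rw [hc1] at hc
      simp at hc
    have hlim : ‖(1 - c) / (1 - (starRingEnd ℂ) c * 1)‖ = 1 := by
      rw [norm_div, norm_conj_symm c 1]
      simp only [map_one, one_mul]
      exact div_self (norm_ne_zero_iff.2 h1c)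
    have htn : Tendsto (fun z => ‖G z‖) (𝓝[Ω] a) (𝓝 1) := by
      have := hGtend.norm
      rwa [hlim] at this
    have hev : {z : CN N | τ < ‖G z‖} ∈ 𝓝[Ω] a :=
      htn.eventually (eventually_gt_nhds hτ1)
    obtain ⟨W, hWopen, haW, hWsub⟩ := mem_nhdsWithin.1 hev
    refine ⟨W, hWopen, haW, ?_⟩
    intro z hzW
    have hτG : τ < ‖G z‖ := hWsub hzW
    have hle : ‖G z‖ ≤ mobiusDist Ω z z₀ :=
      le_csSup ⟨1, hmem_bdd z hzW.2⟩ ⟨G, hGd, hG1, hG0, rfl⟩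
    linarith
  choose W hW1 hW2 hW3 using key
  set Wbig : Set (CN N) := ⋃ (a : CN N) (h : a ∈ frontier Ω), W a h with hWbig_def
  have hWbigopen : IsOpen Wbig :=
    isOpen_iUnion fun a => isOpen_iUnion fun h => hW1 a h
  have hfrsub : frontier Ω ⊆ Wbig := fun a ha =>
    mem_iUnion.2 ⟨a, mem_iUnion.2 ⟨ha, hW2 a ha⟩⟩
  refine ⟨closure Ω \ Wbig, ?_, ?_, ?_⟩
  · intro x hx
    have hxf : x ∉ frontier Ω := fun h => hx.2 (hfrsub h)
    have hxi : x ∈ closure Ω \ frontier Ω := ⟨hx.1, hxf⟩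
    rwa [closure_diff_frontier, hO.interior_eq] at hxi
  · exact Metric.isCompact_of_isClosed_isBounded (isClosed_closure.sdiff hWbigopen)
      (hbdd.closure.subset diff_subset)
  · rintro z ⟨hzΩ, hzL⟩
    have hzW : z ∈ Wbig := by
      by_contra h
      exact hzL ⟨subset_closure hzΩ, h⟩
    obtain ⟨a, haW⟩ := mem_iUnion.1 hzW
    obtain ⟨ha, hzWa⟩ := mem_iUnion.1 haW
    have hτm : τ < mobiusDist Ω z z₀ := hW3 a ha z ⟨hzWa, hzΩ⟩
    obtain ⟨b, hb0, hb1, hbF⟩ := mobius_lt_one hO hconn.isPreconnected hz₀ hzΩ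
    have hm_le : mobiusDist Ω z z₀ ≤ b := by
      apply csSup_le
      · refine ⟨0, fun _ => (0 : ℂ), differentiableOn_const 0, ?_, rfl, by simp⟩
        intro x hx
        simp
      · rintro r ⟨F, hFd, hF1, hF0, rfl⟩
        exact hbF F hFd hF1 hF0
    set m : ℝ := mobiusDist Ω z z₀ with hm_def
    have hm1 : m < 1 := lt_of_le_of_lt hm_le hb1
    have h1m : 0 < 1 - m := by linarith
    have hEeq : (1 + τ) / (1 - τ) = E := by
      rw [hτ_def]
      have hE1' : E + 1 ≠ 0 := by linarith
      field_simp
      ring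
    have hratio : E ≤ (1 + m) / (1 - m) := by
      rw [← hEeq, div_le_div_iff₀ (by linarith) h1m]
      nlinarith
    have hlogE : M < Real.log E := by
      rw [Real.lt_log_iff_exp_lt (by linarith)]
      simp only [hE_def]; linarith
    have hloglog : Real.log E ≤ Real.log ((1 + m) / (1 - m)) :=
      Real.log_le_log (by linarith) hratio
    calc M < Real.log E := hlogE
      _ ≤ Real.log ((1 + m) / (1 - m)) := hloglog
      _ = caratDist Ω z z₀ := rfl
end
end

section
/- Let Ω ⊆ ℂ^N be a bounded convex domain. Then for every boundary point a ∈ ∂Ω there exists a peak function for a (a holomorphic F : Ω → ℂ with |F| < 1 on Ω and F(z) → 1 as z → a, z ∈ Ω), and consequently for every z₀ ∈ Ω one has lim_{z → ∂Ω} c_Ω(z, z₀) = ∞, i.e. for every M > 0 there exists a compact set L ⊆ Ω such that c_Ω(z, z₀) > M for all z ∈ Ω \ L. -/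
open Set Filter Topology Metric

noncomputable section

set_option maxHeartbeats 1000000


lemma coe_smul_eq {N : ℕ} (r : ℝ) (x : CN N) : (r : ℂ) • x = r • x := by
  have h := smul_assoc r (1 : ℂ) x
  simpa [Complex.real_smul] using h.symm

lemma support_exists {N : ℕ} (Ω : Set (CN N)) (hopen : IsOpen Ω) (hconv : Convex ℝ Ω)
    (hne : Ω.Nonempty) {a : CN N} (ha : a ∉ Ω) :
    ∃ g : (CN N) →L[ℂ] ℂ, ‖g‖ = 1 ∧ ∀ z ∈ Ω, (g z).re < (g a).re := by
  obtain ⟨f, hf⟩ := geometric_hahn_banach_open_point hconv hopen ha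
  set g₀ : (CN N) →L[ℂ] ℂ := f.extendTo𝕜' with hg₀
  have hre : ∀ x, (g₀ x).re = f x := by
    intro x
    rw [hg₀, ContinuousLinearMap.extendTo𝕜', ContinuousLinearMap.extendTo𝕜'_apply]
    simp [Complex.sub_re, Complex.mul_re]
  have hg₀ne : g₀ ≠ 0 := by
    obtain ⟨w, hw⟩ := hne
    intro h
    have h1 := hre w
    have h2 := hre a
    rw [h] at h1 h2
    simp at h1 h2
    have := hf w hw
    rw [← h1, ← h2] at this
    exact lt_irrefl _ this
  have hn0 : 0 < ‖g₀‖ := by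
    rcases (norm_nonneg g₀).lt_or_eq with h | h
    · exact h
    · exact absurd (norm_eq_zero.mp h.symm) hg₀ne
  refine ⟨(‖g₀‖⁻¹ : ℝ) • g₀, ?_, ?_⟩
  · rw [norm_smul ((‖g₀‖⁻¹ : ℝ)) g₀]
    simp [abs_of_pos (inv_pos.2 hn0), inv_mul_cancel₀ hn0.ne']
  · intro z hz
    have h1 : ∀ x, (((‖g₀‖⁻¹ : ℝ) • g₀) x).re = ‖g₀‖⁻¹ * f x := by
      intro x
      rw [ContinuousLinearMap.smul_apply, Complex.real_smul, Complex.mul_re]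
      simp [hre]
    rw [h1, h1]
    exact mul_lt_mul_of_pos_left (hf z hz) (inv_pos.2 hn0)


lemma zeta_bounds (w : ℂ) (h : |w.im| ≤ 1) :
    1 < (1 + Complex.exp (-w)).re ∧ 0 < ((1 + Complex.exp (-w))⁻¹).re ∧
      ((1 + Complex.exp (-w))⁻¹).re < 1 ∧ |((1 + Complex.exp (-w))⁻¹).im| ≤ |w.im| / 2 := by
  set s := Real.exp (-w.re) with hs
  have hspos : 0 < s := Real.exp_pos _
  have hcos : 1/2 ≤ Real.cos w.im := by
    have h1 := Real.one_sub_sq_div_two_le_cos (x := w.im)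
    have h2 : w.im ^ 2 ≤ 1 := by
      rw [← sq_abs]
      nlinarith [abs_nonneg w.im]
    linarith
  have hcos1 : Real.cos w.im ≤ 1 := Real.cos_le_one _
  have hre : (1 + Complex.exp (-w)).re = 1 + s * Real.cos w.im := by
    simp [Complex.add_re, Complex.exp_re, Complex.neg_re, Complex.neg_im, Real.cos_neg, hs]
  have him : (1 + Complex.exp (-w)).im = -(s * Real.sin w.im) := by
    simp [Complex.add_im, Complex.exp_im, Complex.neg_re, Complex.neg_im, Real.sin_neg, hs]
  have hre1 : 1 < (1 + Complex.exp (-w)).re := by rw [hre]; nlinarith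
  have hns : Complex.normSq (1 + Complex.exp (-w)) =
      (1 + Complex.exp (-w)).re ^ 2 + (1 + Complex.exp (-w)).im ^ 2 := by
    rw [Complex.normSq_apply]; ring
  have hnslb : 2 * s ≤ Complex.normSq (1 + Complex.exp (-w)) := by
    rw [hns, hre]
    nlinarith [sq_nonneg ((1 + Complex.exp (-w)).im), sq_nonneg (1 - s * Real.cos w.im)]
  have hnspos : 0 < Complex.normSq (1 + Complex.exp (-w)) := by linarith
  have hnsgt : (1 + Complex.exp (-w)).re < Complex.normSq (1 + Complex.exp (-w)) := by
    rw [hns]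
    nlinarith [sq_nonneg ((1 + Complex.exp (-w)).im)]
  refine ⟨hre1, ?_, ?_, ?_⟩
  · rw [Complex.inv_re]
    exact div_pos (by linarith) hnspos
  · rw [Complex.inv_re]
    rw [div_lt_one hnspos]
    exact hnsgt
  · rw [Complex.inv_im]
    have himb : |(1 + Complex.exp (-w)).im| ≤ s * |w.im| := by
      rw [him, abs_neg, abs_mul, abs_of_pos hspos]
      exact mul_le_mul_of_nonneg_left (Real.abs_sin_le_abs) hspos.le
    rw [abs_div, abs_neg, abs_of_pos hnspos]
    calc |(1 + Complex.exp (-w)).im| / Complex.normSq (1 + Complex.exp (-w))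
        ≤ (s * |w.im|) / (2 * s) := by
          apply div_le_div₀ (by positivity) himb (by linarith) hnslb
      _ = |w.im| / 2 := by field_simp

lemma log_q_facts (lam : ℂ) (hlam : ‖lam‖ < 1) :
    0 < ((1 + lam) / (1 - lam)).re ∧
      |(Complex.log ((1 + lam) / (1 - lam))).im| < Real.pi / 2 ∧
      DifferentiableAt ℂ (fun x : ℂ => Complex.log ((1 + x) / (1 - x))) lam := by
  have hne : (1 : ℂ) - lam ≠ 0 := by
    intro h
    have : lam = 1 := by linear_combination -h
    rw [this] at hlam; norm_num at hlam
  have hnorm : Complex.normSq lam < 1 := by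
    have h1 : Complex.normSq lam = ‖lam‖ ^ 2 := by
      rw [Complex.normSq_eq_norm_sq]
    rw [h1]
    nlinarith [norm_nonneg lam]
  have hqre : 0 < ((1 + lam) / (1 - lam)).re := by
    rw [Complex.div_re]
    have hkey : (1 + lam).re * (1 - lam).re / Complex.normSq (1 - lam)
        + (1 + lam).im * (1 - lam).im / Complex.normSq (1 - lam)
        = (1 - Complex.normSq lam) / Complex.normSq (1 - lam) := by
      rw [← add_div]
      congr 1
      rw [Complex.normSq_apply]
      simp [Complex.add_re, Complex.add_im, Complex.sub_re, Complex.sub_im]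
      ring
    rw [hkey]
    exact div_pos (by linarith) (Complex.normSq_pos.2 hne)
  refine ⟨hqre, ?_, ?_⟩
  · rw [Complex.log_im]
    exact Complex.abs_arg_lt_pi_div_two_iff.2 (Or.inl hqre)
  · have hd : DifferentiableAt ℂ (fun x : ℂ => (1 + x) / (1 - x)) lam := by
      apply DifferentiableAt.div
      · exact (differentiableAt_const _).add differentiableAt_id
      · exact (differentiableAt_const _).sub differentiableAt_id
      · exact hne
    exact (Complex.differentiableAt_log (Complex.mem_slitPlane_iff.2 (Or.inl hqre))).comp lam hd

lemma bound_lt_one {N : ℕ} (Ω : Set (CN N)) (hopen : IsOpen Ω) (hconv : Convex ℝ Ω)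
    {z₀ z : CN N} (hz₀ : z₀ ∈ Ω) (hz : z ∈ Ω) :
    ∃ γ : ℝ, 0 ≤ γ ∧ γ < 1 ∧ ∀ F : CN N → ℂ, DifferentiableOn ℂ F Ω →
      (∀ x ∈ Ω, ‖F x‖ < 1) → F z₀ = 0 → ‖F z‖ ≤ γ := by
  by_cases hzz : z = z₀
  · refine ⟨0, le_rfl, one_pos, fun F _ _ hF0 => ?_⟩
    simp [hzz, hF0]
  have hvne : z - z₀ ≠ 0 := sub_ne_zero.2 hzz
  set v : CN N := z - z₀ with hv
  have hvpos : 0 < ‖v‖ := norm_pos_iff.2 hvne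
  obtain ⟨ε₁, hε₁, hb₁⟩ := Metric.isOpen_iff.1 hopen z₀ hz₀
  obtain ⟨ε₂, hε₂, hb₂⟩ := Metric.isOpen_iff.1 hopen z hz
  set η : ℝ := min ε₁ ε₂ / (2 * ‖v‖) with hηdef
  have hηpos : 0 < η := div_pos (lt_min hε₁ hε₂) (by positivity)
  have hηv : η * ‖v‖ < min ε₁ ε₂ := by
    have hkey : η * ‖v‖ = min ε₁ ε₂ / 2 := by
      rw [hηdef]; field_simp
    have : 0 < min ε₁ ε₂ := lt_min hε₁ hε₂
    rw [hkey]; linarith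
  have hend₁ : z₀ - η • v ∈ Ω := by
    apply hb₁
    rw [mem_ball, dist_eq_norm]
    have heq : z₀ - η • v - z₀ = -(η • v) := by abel
    rw [heq, norm_neg, norm_smul, Real.norm_eq_abs, abs_of_pos hηpos]
    exact lt_of_lt_of_le hηv (min_le_left _ _)
  have hend₂ : z + η • v ∈ Ω := by
    apply hb₂
    rw [mem_ball, dist_eq_norm]
    have heq : z + η • v - z = η • v := by abel
    rw [heq, norm_smul, Real.norm_eq_abs, abs_of_pos hηpos]
    exact lt_of_lt_of_le hηv (min_le_right _ _)
  have hzv : z = z₀ + v := by rw [hv]; abel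
  set K : Set (CN N) := (fun t : ℝ => z₀ + t • v) '' Icc (-η) (1 + η) with hK
  have hKcomp : IsCompact K := isCompact_Icc.image (by fun_prop)
  have hKsub : K ⊆ Ω := by
    rintro _ ⟨t, ht, rfl⟩
    have h12 : (0:ℝ) < 1 + 2*η := by linarith
    have ha0 : 0 ≤ (1 + η - t)/(1 + 2*η) := by
      apply div_nonneg _ h12.le; linarith [ht.2]
    have hb0 : 0 ≤ (t + η)/(1 + 2*η) := by
      apply div_nonneg _ h12.le; linarith [ht.1]
    have hab : (1 + η - t)/(1 + 2*η) + (t + η)/(1 + 2*η) = 1 := by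
      rw [← add_div]; field_simp; ring
    have hmem := hconv hend₁ hend₂ ha0 hb0 hab
    have hrw : ((1 + η - t)/(1 + 2*η)) • (z₀ - η • v) + ((t + η)/(1 + 2*η)) • (z + η • v)
        = z₀ + t • v := by
      rw [hzv]
      match_scalars
      · field_simp; ring
      · field_simp; ring
    rwa [hrw] at hmem
  obtain ⟨δ, hδpos, hδsub⟩ := hKcomp.exists_thickening_subset_open hopen hKsub
  have hinΩ : ∀ μ : ℂ, -η ≤ μ.re → μ.re ≤ 1 + η → |μ.im| * ‖v‖ < δ → z₀ + μ • v ∈ Ω := by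
    intro μ h1 h2 h3
    apply hδsub
    rw [Metric.mem_thickening_iff]
    refine ⟨z₀ + μ.re • v, ⟨μ.re, ⟨h1, h2⟩, rfl⟩, ?_⟩
    rw [dist_eq_norm]
    have heq : z₀ + μ • v - (z₀ + μ.re • v) = (μ - (μ.re : ℂ)) • v := by
      rw [← coe_smul_eq]
      rw [sub_smul]
      abel
    rw [heq, norm_smul]
    have hno : ‖μ - (μ.re : ℂ)‖ = |μ.im| := by
      have : μ - (μ.re : ℂ) = (μ.im : ℂ) * Complex.I := by
        rw [Complex.ext_iff]
        simp
      rw [this, norm_mul, Complex.norm_I, mul_one, Complex.norm_real, Real.norm_eq_abs]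
    rw [hno]
    exact h3
  set θ : ℝ := min 1 (δ / ((1 + 2*η) * ‖v‖)) with hθdef
  have h2ηpos : (0:ℝ) < 1 + 2*η := by linarith
  have hθpos : 0 < θ := lt_min one_pos (div_pos hδpos (by positivity))
  have hθ1 : θ ≤ 1 := min_le_left _ _
  have hθδ : θ ≤ δ / ((1 + 2*η) * ‖v‖) := min_le_right _ _
  set Φ : ℂ → CN N := fun w =>
    z₀ + (((1 + 2*η : ℝ) : ℂ) * (1 + Complex.exp (-w))⁻¹ - ((η:ℝ) : ℂ)) • v with hΦ
  have hstrip : ∀ w : ℂ, |w.im| < θ → Φ w ∈ Ω ∧ DifferentiableAt ℂ Φ w := by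
    intro w hw
    have hw1 : |w.im| ≤ 1 := le_of_lt (lt_of_lt_of_le hw hθ1)
    obtain ⟨hz1, hz2, hz3, hz4⟩ := zeta_bounds w hw1
    set μ : ℂ := ((1 + 2*η : ℝ) : ℂ) * (1 + Complex.exp (-w))⁻¹ - ((η:ℝ) : ℂ) with hμ
    have hμre : μ.re = (1 + 2*η) * ((1 + Complex.exp (-w))⁻¹).re - η := by
      simp [hμ, Complex.sub_re, Complex.mul_re]
    have hμim : μ.im = (1 + 2*η) * ((1 + Complex.exp (-w))⁻¹).im := by
      simp [hμ, Complex.sub_im, Complex.mul_im]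
    constructor
    · apply hinΩ
      · rw [hμre]; nlinarith
      · rw [hμre]; nlinarith
      · rw [hμim, abs_mul, abs_of_pos h2ηpos]
        have hb : (1 + 2*η) * |((1 + Complex.exp (-w))⁻¹).im| ≤ (1 + 2*η) * (θ/2) := by
          apply mul_le_mul_of_nonneg_left _ h2ηpos.le
          calc |((1 + Complex.exp (-w))⁻¹).im| ≤ |w.im| / 2 := hz4
            _ ≤ θ / 2 := by linarith
        calc (1 + 2*η) * |((1 + Complex.exp (-w))⁻¹).im| * ‖v‖
            ≤ (1 + 2*η) * (θ/2) * ‖v‖ := by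
              apply mul_le_mul_of_nonneg_right hb hvpos.le
          _ ≤ δ / 2 := by
              have := mul_le_mul_of_nonneg_right hθδ (by positivity : (0:ℝ) ≤ (1 + 2*η) * ‖v‖ / 2)
              calc (1 + 2*η) * (θ/2) * ‖v‖ = θ * ((1 + 2*η) * ‖v‖ / 2) := by ring
                _ ≤ (δ / ((1 + 2*η) * ‖v‖)) * ((1 + 2*η) * ‖v‖ / 2) := this
                _ = δ / 2 := by field_simp
          _ < δ := by linarith
    · have hζne : (1 + Complex.exp (-w)) ≠ 0 := by
        intro h
        rw [h] at hz1
        simp at hz1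
        exact absurd hz1 (by norm_num)
      apply DifferentiableAt.const_add
      apply DifferentiableAt.smul_const
      apply DifferentiableAt.sub_const
      apply DifferentiableAt.const_mul
      exact (((Complex.differentiable_exp.comp differentiable_neg) w).const_add 1).inv hζne
  clear_value v η θ
  -- endpoints on the real axis
  have hηfrac1 : (0:ℝ) < η/(1+η) := div_pos hηpos (by linarith)
  have hηfrac2 : (0:ℝ) < (1+η)/η := div_pos (by linarith) hηpos
  set x₀ : ℝ := Real.log (η/(1+η)) with hx₀
  set x₁ : ℝ := Real.log ((1+η)/η) with hx₁
  have hx01 : x₀ < x₁ := by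
    apply Real.log_lt_log hηfrac1
    rw [div_lt_div_iff₀ (by linarith) hηpos]
    nlinarith
  have hexp₀ : Complex.exp (-(x₀:ℂ)) = (((1+η)/η : ℝ) : ℂ) := by
    have h1 : -(x₀:ℂ) = ((-x₀ : ℝ) : ℂ) := by push_cast; ring
    rw [h1, ← Complex.ofReal_exp]
    congr 1
    rw [hx₀, Real.exp_neg, Real.exp_log hηfrac1]
    rw [← Real.exp_log hηfrac2, Real.exp_log hηfrac2]
    field_simp
  have hexp₁ : Complex.exp (-(x₁:ℂ)) = ((η/(1+η) : ℝ) : ℂ) := by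
    have h1 : -(x₁:ℂ) = ((-x₁ : ℝ) : ℂ) := by push_cast; ring
    rw [h1, ← Complex.ofReal_exp]
    congr 1
    rw [hx₁, Real.exp_neg, Real.exp_log hηfrac2]
    field_simp
  have hηC : ((η:ℝ):ℂ) ≠ 0 := by
    simp only [ne_eq, Complex.ofReal_eq_zero]; exact hηpos.ne'
  have h1ηC : ((1+η:ℝ):ℂ) ≠ 0 := by
    simp only [ne_eq, Complex.ofReal_eq_zero]; intro h; linarith
  have hΦ₀ : Φ ((x₀:ℝ):ℂ) = z₀ := by
    simp only [hΦ]
    rw [hexp₀]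
    have hη0 : η ≠ 0 := hηpos.ne'
    have hη2 : (1+2*η : ℝ) ≠ 0 := by positivity
    have hreal : (1+2*η) * (1 + (1+η)/η)⁻¹ - η = 0 := by
      have h1 : 1 + (1+η)/η = (1+2*η)/η := by field_simp; ring
      rw [h1]
      field_simp; ring
    have hsc : ((1 + 2*η : ℝ) : ℂ) * (1 + (((1+η)/η : ℝ) : ℂ))⁻¹ - ((η:ℝ) : ℂ) = 0 := by
      rw [show (1:ℂ) + (((1+η)/η : ℝ) : ℂ) = ((1 + (1+η)/η : ℝ) : ℂ) by push_cast; ring,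
        ← Complex.ofReal_inv, ← Complex.ofReal_mul, ← Complex.ofReal_sub, hreal,
        Complex.ofReal_zero]
    rw [hsc, zero_smul, add_zero]
  have hΦ₁ : Φ ((x₁:ℝ):ℂ) = z := by
    simp only [hΦ]
    rw [hexp₁]
    have hη1 : (1+η : ℝ) ≠ 0 := by positivity
    have hη2 : (1+2*η : ℝ) ≠ 0 := by positivity
    have hreal : (1+2*η) * (1 + η/(1+η))⁻¹ - η = 1 := by
      have h1 : 1 + η/(1+η) = (1+2*η)/(1+η) := by field_simp; ring
      rw [h1]
      field_simp; ring
    have hsc : ((1 + 2*η : ℝ) : ℂ) * (1 + ((η/(1+η) : ℝ) : ℂ))⁻¹ - ((η:ℝ) : ℂ) = 1 := by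
      rw [show (1:ℂ) + ((η/(1+η) : ℝ) : ℂ) = ((1 + η/(1+η) : ℝ) : ℂ) by push_cast; ring,
        ← Complex.ofReal_inv, ← Complex.ofReal_mul, ← Complex.ofReal_sub, hreal,
        Complex.ofReal_one]
    rw [hsc, one_smul, hzv]
  -- the Schwarz constant
  set d : ℝ := x₁ - x₀ with hd
  have hdpos : 0 < d := by rw [hd]; linarith
  have hπ : (0:ℝ) < Real.pi := Real.pi_pos
  set R : ℝ := Real.exp (Real.pi * d / (2*θ)) with hR
  have hRgt : 1 < R := by
    rw [hR]
    have : (0:ℝ) < Real.pi * d / (2*θ) := by positivity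
    calc (1:ℝ) = Real.exp 0 := Real.exp_zero.symm
      _ < R := Real.exp_lt_exp.2 this
  set γ : ℝ := (R - 1)/(R + 1) with hγdef
  have hγ0 : 0 ≤ γ := div_nonneg (by linarith) (by linarith)
  have hγ1 : γ < 1 := by
    rw [hγdef, div_lt_one (by linarith)]; linarith
  refine ⟨γ, hγ0, hγ1, ?_⟩
  intro F hFd hFlt hF0
  -- the map T
  set T : ℂ → ℂ := fun lam =>
    ((x₀:ℝ):ℂ) + ((2*θ/Real.pi : ℝ):ℂ) * Complex.log ((1+lam)/(1-lam)) with hT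
  have hTim : ∀ lam : ℂ, ‖lam‖ < 1 → |(T lam).im| < θ := by
    intro lam hlam
    obtain ⟨-, harg, -⟩ := log_q_facts lam hlam
    have h1 : (T lam).im = (2*θ/Real.pi) * (Complex.log ((1+lam)/(1-lam))).im := by
      rw [hT]
      simp [Complex.add_im, Complex.mul_im]
    rw [h1, abs_mul, abs_of_pos (by positivity : (0:ℝ) < 2*θ/Real.pi)]
    calc (2*θ/Real.pi) * |(Complex.log ((1+lam)/(1-lam))).im|
        < (2*θ/Real.pi) * (Real.pi/2) := by
          apply mul_lt_mul_of_pos_left harg (by positivity)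
      _ = θ := by field_simp
  have hT0 : T 0 = ((x₀:ℝ):ℂ) := by
    rw [hT]
    simp
  have hTγ : T ((γ:ℝ):ℂ) = ((x₁:ℝ):ℂ) := by
    simp only [hT]
    have hγq : ((1:ℂ) + ((γ:ℝ):ℂ))/(1 - ((γ:ℝ):ℂ)) = ((R:ℝ):ℂ) := by
      have h2 : (1:ℝ) - γ ≠ 0 := by linarith
      rw [show (1:ℂ) + ((γ:ℝ):ℂ) = (((1+γ:ℝ)):ℂ) by push_cast; ring,
        show (1:ℂ) - ((γ:ℝ):ℂ) = (((1-γ:ℝ)):ℂ) by push_cast; ring,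
        ← Complex.ofReal_div]
      congr 1
      rw [hγdef]
      field_simp
      ring
    rw [hγq, ← Complex.ofReal_log (by linarith : (0:ℝ) ≤ R)]
    rw [hR, Real.log_exp]
    rw [← Complex.ofReal_mul, ← Complex.ofReal_add]
    congr 1
    field_simp
    rw [hd]
    ring
  have hTdiff : ∀ lam ∈ ball (0:ℂ) 1, DifferentiableAt ℂ T lam := by
    intro lam hlam
    rw [mem_ball_zero_iff] at hlam
    obtain ⟨-, -, hdiff⟩ := log_q_facts lam hlam
    rw [hT]
    exact (hdiff.const_mul _).const_add _
  -- the composite map and the Schwarz lemma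
  set H : ℂ → ℂ := fun lam => F (Φ (T lam)) with hH
  have hmemΩ : ∀ lam ∈ ball (0:ℂ) 1, Φ (T lam) ∈ Ω := by
    intro lam hlam
    rw [mem_ball_zero_iff] at hlam
    exact (hstrip _ (hTim lam hlam)).1
  have hH0 : H 0 = 0 := by
    simp only [hH]
    rw [hT0, hΦ₀, hF0]
  have hHd : DifferentiableOn ℂ H (ball (0:ℂ) 1) := by
    intro lam hlam
    apply DifferentiableAt.differentiableWithinAt
    have h1 : DifferentiableAt ℂ T lam := hTdiff lam hlam
    have hlam' : ‖lam‖ < 1 := mem_ball_zero_iff.1 hlam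
    have h2 : DifferentiableAt ℂ Φ (T lam) := (hstrip _ (hTim lam hlam')).2
    have h3 : DifferentiableAt ℂ F (Φ (T lam)) :=
      hFd.differentiableAt (hopen.mem_nhds (hmemΩ lam hlam))
    exact (h3.comp _ h2).comp _ h1
  have hmaps : MapsTo H (ball (0:ℂ) 1) (ball (H 0) 1) := by
    intro lam hlam
    rw [hH0, mem_ball_zero_iff]
    exact hFlt _ (hmemΩ lam hlam)
  have hγball : ((γ:ℝ):ℂ) ∈ ball (0:ℂ) 1 := by
    rw [mem_ball_zero_iff, Complex.norm_real, Real.norm_eq_abs, abs_of_nonneg hγ0]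
    exact hγ1
  have hSch := Complex.dist_le_div_mul_dist_of_mapsTo_ball hHd (hmaps.mono_right ball_subset_closedBall) hγball
  rw [hH0] at hSch
  have hHγ : H ((γ:ℝ):ℂ) = F z := by
    simp only [hH]
    rw [hTγ, hΦ₁]
  rw [hHγ] at hSch
  calc ‖F z‖ = dist (F z) 0 := (dist_zero_right _).symm
    _ ≤ 1/1 * dist ((γ:ℝ):ℂ) 0 := hSch
    _ = γ := by
        rw [dist_zero_right, Complex.norm_real, Real.norm_eq_abs, abs_of_nonneg hγ0]
        ring

lemma normSq_sub_normSq (α p : ℂ) :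
    Complex.normSq (α + (starRingEnd ℂ) p) - Complex.normSq (α - p) = 4 * (α.re * p.re) := by
  simp only [Complex.normSq_apply, Complex.add_re, Complex.add_im, Complex.sub_re,
    Complex.sub_im, Complex.conj_re, Complex.conj_im]
  ring


theorem stmt_15 {N : ℕ} (Ω : Set (CN N)) (hdom : CNDomain Ω)
    (hbdd : Bornology.IsBounded Ω) (hconv : Convex ℝ Ω) :
    (∀ a ∈ frontier Ω, ∃ F : CN N → ℂ, DifferentiableOn ℂ F Ω ∧
      (∀ z ∈ Ω, ‖F z‖ < 1) ∧ Tendsto F (𝓝[Ω] a) (𝓝 (1 : ℂ))) ∧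
    (∀ z₀ ∈ Ω, ∀ M : ℝ, 0 < M → ∃ L : Set (CN N), L ⊆ Ω ∧ IsCompact L ∧
      ∀ z ∈ Ω \ L, M < caratDist Ω z z₀) := by
  obtain ⟨hopen, hconn⟩ := hdom
  have hne : Ω.Nonempty := hconn.nonempty
  constructor
  · -- Part 1: peak functions
    intro a ha
    have haΩ : a ∉ Ω := by
      rw [hopen.frontier_eq] at ha
      exact ha.2
    obtain ⟨g, hg1, hglt⟩ := support_exists Ω hopen hconv hne haΩ
    refine ⟨fun w => Complex.exp (g w - g a), ?_, ?_, ?_⟩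
    · apply Differentiable.differentiableOn
      exact Complex.differentiable_exp.comp (g.differentiable.sub_const _)
    · intro w hw
      rw [Complex.norm_exp]
      rw [Real.exp_lt_one_iff, Complex.sub_re, sub_neg]
      exact hglt w hw
    · have hcont : ContinuousAt (fun w => Complex.exp (g w - g a)) a := by
        apply Complex.continuous_exp.continuousAt.comp
        exact (g.continuous.sub continuous_const).continuousAt
      have h1 : Tendsto (fun w => Complex.exp (g w - g a)) (𝓝[Ω] a)
          (𝓝 (Complex.exp (g a - g a))) := hcont.tendsto.mono_left nhdsWithin_le_nhds
      simpa using h1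
  · -- Part 2
    intro z₀ hz₀ M hM
    by_cases hfr : frontier Ω = ∅
    · have hcl : IsClosed Ω := by
        rw [← closure_subset_iff_isClosed]
        intro x hx
        by_contra hxΩ
        have : x ∈ frontier Ω := by
          rw [hopen.frontier_eq]
          exact ⟨hx, hxΩ⟩
        rw [hfr] at this
        exact this
      refine ⟨Ω, subset_rfl, Metric.isCompact_of_isClosed_isBounded hcl hbdd, ?_⟩
      intro z hzd
      exact absurd hzd.1 hzd.2
    · have hfrne : (frontier Ω).Nonempty := nonempty_iff_ne_empty.2 hfr
      obtain ⟨ρ₀, hρ₀⟩ := (Metric.isBounded_iff_subset_closedBall 0).1 hbdd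
      set ρ : ℝ := max ρ₀ 1 with hρdef
      have hρpos : (0:ℝ) < ρ := lt_of_lt_of_le one_pos (le_max_right _ _)
      have hclsub : closure Ω ⊆ closedBall 0 ρ := by
        apply closure_minimal _ isClosed_closedBall
        exact hρ₀.trans (closedBall_subset_closedBall (le_max_left _ _))
      obtain ⟨r, hr, hball⟩ := Metric.isOpen_iff.1 hopen z₀ hz₀
      set C : ℝ := 2 * ρ + 1 with hC
      have hCpos : 0 < C := by positivity
      set E : ℝ := Real.exp (M + 1) with hE
      have hE1 : 1 < E := by
        rw [hE]
        calc (1:ℝ) = Real.exp 0 := Real.exp_zero.symm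
          _ < _ := Real.exp_lt_exp.2 (by linarith)
      set β : ℝ := (E - 1)/(E + 1) with hβ
      have hβ0 : 0 < β := div_pos (by linarith) (by linarith)
      have hβ1 : β < 1 := by rw [hβ, div_lt_one (by linarith)]; linarith
      set r₀ : ℝ := r / 4 with hr₀
      have hr₀pos : 0 < r₀ := by rw [hr₀]; linarith
      set ε : ℝ := (1 - β^2) * r₀^2 / (4 * C) with hε
      have hεpos : 0 < ε := by
        apply div_pos _ (by positivity)
        apply mul_pos _ (by positivity)
        nlinarith
      set L : Set (CN N) := closure Ω ∩ {x | ε ≤ infDist x (frontier Ω)} with hL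
      have hLsub : L ⊆ Ω := by
        rintro x ⟨hx1, hx2⟩
        by_contra hxΩ
        have hxf : x ∈ frontier Ω := by
          rw [hopen.frontier_eq]; exact ⟨hx1, hxΩ⟩
        have : infDist x (frontier Ω) = 0 := infDist_zero_of_mem hxf
        have hx2' : ε ≤ infDist x (frontier Ω) := hx2
        rw [this] at hx2'
        linarith
      have hLcomp : IsCompact L := by
        apply Metric.isCompact_of_isClosed_isBounded
        · exact isClosed_closure.inter (isClosed_le continuous_const
            (continuous_infDist_pt (frontier Ω)))
        · exact (hbdd.closure).subset (inter_subset_left)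
      refine ⟨L, hLsub, hLcomp, ?_⟩
      intro z hzmem
      obtain ⟨hzΩ, hzL⟩ := hzmem
      have hzdist : infDist z (frontier Ω) < ε := by
        by_contra h
        exact hzL ⟨subset_closure hzΩ, not_lt.1 h⟩
      have hfrcomp : IsCompact (frontier Ω) := by
        apply Metric.isCompact_of_isClosed_isBounded isClosed_frontier
        exact hbdd.closure.subset (frontier_subset_closure)
      obtain ⟨a, haf, hadist⟩ := hfrcomp.exists_infDist_eq_dist hfrne z
      have hza : dist z a < ε := by rw [← hadist]; exact hzdist
      have haΩ : a ∉ Ω := by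
        rw [hopen.frontier_eq] at haf
        exact haf.2
      obtain ⟨g, hg1, hglt⟩ := support_exists Ω hopen hconv hne haΩ
      -- key scalar quantities
      set p : ℂ := g z₀ - g a with hp
      set α : ℂ := g z - g a with hα
      have hpre : p.re < 0 := by
        rw [hp, Complex.sub_re]
        linarith [hglt z₀ hz₀]
      have hαre : α.re < 0 := by
        rw [hα, Complex.sub_re]
        linarith [hglt z hzΩ]
      -- p.re < -r₀
      have hpr₀ : p.re < -r₀ := by
        obtain ⟨w, hw1, hw2⟩ : ∃ w : CN N, ‖w‖ ≤ 1 ∧ 1/2 < ‖g w‖ := by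
          by_contra h
          push_neg at h
          have hbd : ‖g‖ ≤ 1/2 := by
            apply g.opNorm_le_bound (by norm_num)
            intro x
            rcases eq_or_ne x 0 with rfl | hx
            · simp
            · have hxpos : 0 < ‖x‖ := norm_pos_iff.2 hx
              have h1 : ‖(‖x‖⁻¹ : ℝ) • x‖ ≤ 1 := by
                rw [norm_smul, Real.norm_eq_abs, abs_of_pos (inv_pos.2 hxpos),
                  inv_mul_cancel₀ hxpos.ne']
              have h2 := h _ h1
              rw [ContinuousLinearMap.map_smul_of_tower, norm_smul, Real.norm_eq_abs,
                abs_of_pos (inv_pos.2 hxpos)] at h2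
              calc ‖g x‖ = ‖x‖ * (‖x‖⁻¹ * ‖g x‖) := by field_simp
                _ ≤ ‖x‖ * (1/2) := by
                    apply mul_le_mul_of_nonneg_left h2 hxpos.le
                _ = 1/2 * ‖x‖ := by ring
          rw [hg1] at hbd
          norm_num at hbd
        have hgwne : g w ≠ 0 := by
          intro h
          rw [h] at hw2
          simp at hw2
          linarith
        set c : ℂ := (‖g w‖ : ℂ) / g w with hc
        have hcnorm : ‖c‖ = 1 := by
          rw [hc, norm_div, Complex.norm_real, Real.norm_eq_abs, abs_of_nonneg (norm_nonneg _),
            div_self (norm_ne_zero_iff.2 hgwne)]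
        have hcgw : c * g w = (‖g w‖ : ℂ) := by
          rw [hc, div_mul_cancel₀ _ hgwne]
        set y : CN N := z₀ + (r/2 : ℝ) • (c • w) with hy
        have hymem : y ∈ Ω := by
          apply hball
          rw [mem_ball, hy, dist_eq_norm]
          have heq : z₀ + (r/2 : ℝ) • (c • w) - z₀ = (r/2 : ℝ) • (c • w) := by abel
          rw [heq, norm_smul, Real.norm_eq_abs, abs_of_pos (by linarith : (0:ℝ) < r/2),
            norm_smul, hcnorm, one_mul]
          calc r/2 * ‖w‖ ≤ r/2 * 1 := by
                apply mul_le_mul_of_nonneg_left hw1 (by linarith)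
            _ < r := by linarith
        have hgy : (g y).re = (g z₀).re + r/2 * ‖g w‖ := by
          rw [hy, map_add, ContinuousLinearMap.map_smul_of_tower, map_smul]
          rw [Complex.add_re, smul_eq_mul, hcgw]
          have : ((r/2 : ℝ) • (‖g w‖:ℂ)).re = r/2 * ‖g w‖ := by
            rw [Complex.real_smul, Complex.mul_re]
            simp
          rw [this]
        have := hglt y hymem
        rw [hgy] at this
        have h3 : (g z₀).re + r/2 * (1/2) < (g a).re := by
          nlinarith
        rw [hp, Complex.sub_re, hr₀]
        linarith
      -- -p.re ≤ C and -α.re < ε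
      have hnorm_le : ∀ x y : CN N, x ∈ closure Ω → y ∈ closure Ω → ‖g x - g y‖ ≤ 2*ρ := by
        intro x y hx hy
        rw [← map_sub]
        calc ‖g (x - y)‖ ≤ ‖g‖ * ‖x - y‖ := g.le_opNorm _
          _ = ‖x - y‖ := by rw [hg1, one_mul]
          _ ≤ ‖x‖ + ‖y‖ := norm_sub_le _ _
          _ ≤ ρ + ρ := by
              have h1 := mem_closedBall_zero_iff.1 (hclsub hx)
              have h2 := mem_closedBall_zero_iff.1 (hclsub hy)
              linarith
          _ = 2*ρ := by ring
      have hpC : -p.re ≤ C := by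
        have h1 : ‖p‖ ≤ 2*ρ := by
          rw [hp]
          exact hnorm_le z₀ a (subset_closure hz₀) (frontier_subset_closure haf)
        have h2 : |p.re| ≤ ‖p‖ := by
          exact Complex.abs_re_le_norm p
        rw [hC]
        calc -p.re ≤ |p.re| := neg_le_abs _
          _ ≤ 2*ρ := le_trans h2 h1
          _ ≤ 2*ρ + 1 := by linarith
      have hαε : -α.re < ε := by
        have h1 : -α.re = (g a - g z).re := by
          rw [hα]
          simp [Complex.sub_re]
        have h2 : (g a - g z).re ≤ ‖g a - g z‖ := by
          exact Complex.re_le_norm _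
        have h3 : ‖g a - g z‖ = ‖g (a - z)‖ := by rw [map_sub]
        have h4 : ‖g (a - z)‖ ≤ ‖a - z‖ := by
          calc ‖g (a - z)‖ ≤ ‖g‖ * ‖a - z‖ := g.le_opNorm _
            _ = ‖a - z‖ := by rw [hg1, one_mul]
        have h5 : ‖a - z‖ = dist z a := by rw [dist_eq_norm, norm_sub_rev]
        rw [h1]
        calc (g a - g z).re ≤ ‖a - z‖ := le_trans h2 (h3 ▸ h4)
          _ = dist z a := h5
          _ < ε := hza
      -- the function B
      set den : CN N → ℂ := fun w => (g w - g a) + (starRingEnd ℂ) p with hden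
      have hdenre : ∀ w ∈ Ω, (den w).re < 0 := by
        intro w hw
        rw [hden]
        simp only [Complex.add_re, Complex.sub_re, Complex.conj_re]
        have := hglt w hw
        linarith
      have hdenne : ∀ w ∈ Ω, den w ≠ 0 := by
        intro w hw h
        have := hdenre w hw
        rw [h] at this
        simp at this
      set B : CN N → ℂ := fun w => (g w - g z₀) / den w with hB
      have hBnum : ∀ w : CN N, g w - g z₀ = (g w - g a) - p := by
        intro w
        rw [hp]
        ring
      have hBdiff : DifferentiableOn ℂ B Ω := by
        have heq : B = fun w => (g w - g z₀) * (den w)⁻¹ := by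
          funext w
          simp only [hB, div_eq_mul_inv]
        rw [heq]
        exact ((g.differentiable.sub_const _).differentiableOn).mul
          ((((g.differentiable.sub_const _).add_const _).differentiableOn).inv hdenne)
      have hBlt : ∀ w ∈ Ω, ‖B w‖ < 1 := by
        intro w hw
        rw [hB]
        simp only
        rw [norm_div, div_lt_one (norm_pos_iff.2 (hdenne w hw))]
        have hkey := normSq_sub_normSq (g w - g a) p
        have hwre : (g w - g a).re < 0 := by
          rw [Complex.sub_re]; linarith [hglt w hw]
        have hpos : 0 < 4 * ((g w - g a).re * p.re) := by nlinarith
        have h2 : Complex.normSq ((g w - g a) - p) <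
            Complex.normSq ((g w - g a) + (starRingEnd ℂ) p) := by linarith
        rw [hBnum w]
        rw [hden]
        have hsq : ∀ u : ℂ, ‖u‖^2 = Complex.normSq u := by
          intro u
          rw [Complex.sq_norm]
        have := h2
        nlinarith [hsq ((g w - g a) - p), hsq ((g w - g a) + (starRingEnd ℂ) p),
          norm_nonneg ((g w - g a) - p), norm_nonneg ((g w - g a) + (starRingEnd ℂ) p)]
      have hB0 : B z₀ = 0 := by
        rw [hB]
        simp
      -- lower bound for ‖B z‖
      have hBz : β ≤ ‖B z‖ := by
        have hdz : den z = α + (starRingEnd ℂ) p := by rw [hden, hα]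
        have hdenlb : r₀^2 ≤ Complex.normSq (den z) := by
          have h1 : (den z).re = α.re + p.re := by
            rw [hdz]
            simp [Complex.add_re, Complex.conj_re]
          have h2 : (den z).re ≤ -r₀ := by rw [h1]; linarith
          have h3 : Complex.normSq (den z) = (den z).re^2 + (den z).im^2 := by
            rw [Complex.normSq_apply]; ring
          nlinarith [sq_nonneg ((den z).im)]
        have hkey := normSq_sub_normSq α p
        have hnum : Complex.normSq (α - p) =
            Complex.normSq (den z) - 4 * (α.re * p.re) := by
          rw [hdz]; linarith
        have hprod : 4 * (α.re * p.re) < 4 * ε * C := by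
          have h1 : 0 < -α.re := by linarith
          have h2 : 0 < -p.re := by linarith
          nlinarith
        have hfrac : 1 - β^2 = 4 * ε * C / r₀^2 := by
          rw [hε]
          field_simp
        have hBzsq : β^2 ≤ ‖B z‖^2 := by
          have hsq : ∀ u : ℂ, ‖u‖^2 = Complex.normSq u := fun u => by
            rw [Complex.sq_norm]
          have hBzval : ‖B z‖^2 = Complex.normSq (α - p) / Complex.normSq (den z) := by
            rw [hB]
            simp only
            rw [norm_div, div_pow, hsq, hsq, hBnum z, hα]
          rw [hBzval, hnum]
          have hns : 0 < Complex.normSq (den z) := by nlinarith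
          rw [le_div_iff₀ hns]
          have hc1 : 4 * (α.re * p.re) ≤ 4 * ε * C := le_of_lt hprod
          have hc2 : 4 * ε * C = (1 - β^2) * r₀^2 := by
            rw [hfrac]; field_simp
          have h1b : 0 ≤ 1 - β^2 := by nlinarith
          have h2b : 0 ≤ Complex.normSq (den z) - r₀^2 := by linarith
          nlinarith [mul_nonneg h1b h2b]
        nlinarith [norm_nonneg (B z), hβ0]
      -- upper bound γ < 1 for the Möbius distance
      obtain ⟨γ, hγ0, hγ1, hγbd⟩ := bound_lt_one Ω hopen hconv hz₀ hzΩ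
      set S : Set ℝ := {x : ℝ | ∃ F : CN N → ℂ, DifferentiableOn ℂ F Ω ∧
        (∀ w ∈ Ω, ‖F w‖ < 1) ∧ F z₀ = 0 ∧ x = ‖F z‖} with hS
      have hSeq : mobiusDist Ω z z₀ = sSup S := by
        rw [mobiusDist, hS]
      have hSB : ‖B z‖ ∈ S := ⟨B, hBdiff, hBlt, hB0, rfl⟩
      have hSbd : ∀ x ∈ S, x ≤ γ := by
        rintro x ⟨F, h1, h2, h3, rfl⟩
        exact hγbd F h1 h2 h3
      have hm1 : mobiusDist Ω z z₀ ≤ γ := by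
        rw [hSeq]
        exact Real.sSup_le hSbd hγ0
      have hm2 : β ≤ mobiusDist Ω z z₀ := by
        rw [hSeq]
        exact le_trans hBz (le_csSup ⟨γ, hSbd⟩ hSB)
      set m : ℝ := mobiusDist Ω z z₀ with hm
      have hmlt1 : m < 1 := lt_of_le_of_lt hm1 hγ1
      have h1m : 0 < 1 - m := by linarith
      have h1β : 0 < 1 - β := by linarith
      have hmono : (1 + β)/(1 - β) ≤ (1 + m)/(1 - m) := by
        rw [div_le_div_iff₀ h1β h1m]
        nlinarith
      have hEval : (1 + β)/(1 - β) = E := by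
        rw [hβ]
        field_simp
        ring
      rw [caratDist]
      calc M < M + 1 := by linarith
        _ = Real.log E := by rw [hE, Real.log_exp]
        _ ≤ Real.log ((1 + m)/(1 - m)) := by
            apply Real.log_le_log (by rw [← hEval]; positivity)
            rw [← hEval]
            exact hmono
end
end

section
/- Let Ω ⊆ ℂ^N be a pseudoconvex domain for which there exists a point z₀ ∈ Ω such that lim_{z → ∂∞Ω} c_Ω(z, z₀) = ∞, i.e. for every M > 0 there exists a compact set L ⊆ Ω such that c_Ω(z, z₀) > M for all z ∈ Ω \ L. Then Ω is taut. -/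
open Set Filter Topology Metric

noncomputable section

namespace Stmt17

/-- Möbius map of the unit disc swapping `0` and `a`. -/
def mob (a ζ : ℂ) : ℂ := (a - ζ) / (1 - (starRingEnd ℂ) a * ζ)

lemma normSq_identity (a ζ : ℂ) :
    Complex.normSq (1 - (starRingEnd ℂ) a * ζ) - Complex.normSq (a - ζ)
      = (1 - Complex.normSq a) * (1 - Complex.normSq ζ) := by
  simp only [Complex.normSq_apply, Complex.sub_re, Complex.sub_im, Complex.mul_re,
    Complex.mul_im, Complex.one_re, Complex.one_im, Complex.conj_re, Complex.conj_im]
  ring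

lemma mob_den_ne (a ζ : ℂ) (ha : ‖a‖ < 1) (hζ : ‖ζ‖ ≤ 1) :
    (1 : ℂ) - (starRingEnd ℂ) a * ζ ≠ 0 := by
  intro h
  have h1 : (starRingEnd ℂ) a * ζ = 1 := by linear_combination -h
  have : ‖(starRingEnd ℂ) a * ζ‖ < 1 := by
    rw [norm_mul, RingHomIsometric.norm_map]
    nlinarith [norm_nonneg a, norm_nonneg ζ]
  rw [h1] at this; simp at this

lemma norm_mob_lt_one {a ζ : ℂ} (ha : ‖a‖ < 1) (hζ : ‖ζ‖ < 1) : ‖mob a ζ‖ < 1 := by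
  have hne := mob_den_ne a ζ ha hζ.le
  have hpos : 0 < Complex.normSq (1 - (starRingEnd ℂ) a * ζ) := by
    rwa [Complex.normSq_pos]
  have hlt : Complex.normSq (a - ζ) < Complex.normSq (1 - (starRingEnd ℂ) a * ζ) := by
    have h := normSq_identity a ζ
    have h1 : Complex.normSq a < 1 := by
      rw [← Complex.sq_norm]; nlinarith [norm_nonneg a]
    have h2 : Complex.normSq ζ < 1 := by
      rw [← Complex.sq_norm]; nlinarith [norm_nonneg ζ]
    nlinarith
  rw [mob, norm_div, div_lt_one (norm_pos_iff.2 hne)]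
  have e1 : ‖a - ζ‖ = Real.sqrt (Complex.normSq (a - ζ)) := by
    rw [Complex.norm_def]
  have e2 : ‖1 - (starRingEnd ℂ) a * ζ‖
      = Real.sqrt (Complex.normSq (1 - (starRingEnd ℂ) a * ζ)) := by
    rw [Complex.norm_def]
  rw [e1, e2]
  exact Real.sqrt_lt_sqrt (Complex.normSq_nonneg _) hlt

lemma mob_mob {a ζ : ℂ} (ha : ‖a‖ < 1) (hζ : ‖ζ‖ < 1) : mob a (mob a ζ) = ζ := by
  have h1 := mob_den_ne a ζ ha hζ.le
  have h2 : (1 : ℂ) - (starRingEnd ℂ) a * a ≠ 0 := mob_den_ne a a ha ha.le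
  have h3 : (1 : ℂ) - (starRingEnd ℂ) a * mob a ζ ≠ 0 :=
    mob_den_ne a _ ha (norm_mob_lt_one ha hζ).le
  have key : a - (a - ζ) / (1 - (starRingEnd ℂ) a * ζ)
      = ζ * (1 - (starRingEnd ℂ) a * a) / (1 - (starRingEnd ℂ) a * ζ) := by
    rw [eq_div_iff h1, sub_mul, div_mul_cancel₀ _ h1]; ring
  have key2 : (1 : ℂ) - (starRingEnd ℂ) a * ((a - ζ) / (1 - (starRingEnd ℂ) a * ζ))
      = (1 - (starRingEnd ℂ) a * a) / (1 - (starRingEnd ℂ) a * ζ) := by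
    field_simp; ring
  show (a - mob a ζ) / (1 - (starRingEnd ℂ) a * mob a ζ) = ζ
  rw [mob, key, key2, div_div_div_cancel_right₀]
  · exact mul_div_cancel_right₀ ζ h2
  · exact h1


lemma mob_zero (a : ℂ) : mob a 0 = a := by simp [mob]

lemma mob_self (a : ℂ) : mob a a = 0 := by simp [mob]

lemma mob_differentiableOn {a : ℂ} (ha : ‖a‖ < 1) :
    DifferentiableOn ℂ (mob a) (ball (0 : ℂ) 1) := by
  apply DifferentiableOn.div
  · exact (differentiableOn_const a).sub differentiableOn_id
  · exact (differentiableOn_const 1).sub (differentiableOn_id.const_mul _)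
  · intro ζ hζ
    exact mob_den_ne a ζ ha (le_of_lt (mem_ball_zero_iff.1 hζ))

lemma mob_mapsTo {a : ℂ} (ha : ‖a‖ < 1) :
    MapsTo (mob a) (ball (0 : ℂ) 1) (ball (0 : ℂ) 1) := by
  intro ζ hζ
  simp only [mem_ball, dist_zero_right] at hζ ⊢
  exact norm_mob_lt_one ha hζ

/-- Monotone Möbius-sum bound. -/
lemma mobStep_mono {b b' s s' : ℝ} (hb0 : 0 ≤ b) (hbb : b ≤ b') (hb1 : b' ≤ 1)
    (hs0 : 0 ≤ s) (hss : s ≤ s') (hs1 : s' ≤ 1) :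
    (b + s) / (1 + b * s) ≤ (b' + s') / (1 + b' * s') := by
  have h1 : b * b' ≤ 1 := by nlinarith
  have h2 : s * s' ≤ 1 := by nlinarith
  rw [div_le_div_iff₀ (by nlinarith) (by nlinarith)]
  nlinarith [mul_nonneg (sub_nonneg.2 hbb) (sub_nonneg.2 h2),
    mul_nonneg (sub_nonneg.2 hss) (sub_nonneg.2 h1)]

lemma mobStep_lt_one {b s : ℝ} (hb0 : 0 ≤ b) (hb : b < 1) (hs0 : 0 ≤ s) (hs : s < 1) :
    (b + s) / (1 + b * s) < 1 := by
  rw [div_lt_one (by nlinarith)]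
  nlinarith

lemma mobStep_nonneg {b s : ℝ} (hb0 : 0 ≤ b) (hb : b ≤ 1) (hs0 : 0 ≤ s) (hs : s ≤ 1) :
    0 ≤ (b + s) / (1 + b * s) := by positivity

/-- The modulus bound for Möbius maps. -/
lemma norm_mob_le {a u : ℂ} (ha : ‖a‖ < 1) (hu : ‖u‖ < 1) :
    ‖mob a u‖ ≤ (‖a‖ + ‖u‖) / (1 + ‖a‖ * ‖u‖) := by
  have hne := mob_den_ne a u ha hu.le
  have hden : (0:ℝ) < 1 + ‖a‖ * ‖u‖ := by positivity
  rw [mob, norm_div, div_le_div_iff₀ (norm_pos_iff.2 hne) hden]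
  have h2 : (0:ℝ) ≤ (‖a‖ + ‖u‖) * ‖1 - (starRingEnd ℂ) a * u‖ := by positivity
  apply le_of_pow_le_pow_left₀ two_ne_zero h2
  have e1 : ‖a - u‖^2 = Complex.normSq (a - u) := by
    rw [Complex.sq_norm]
  have e2 : ‖1 - (starRingEnd ℂ) a * u‖^2 = Complex.normSq (1 - (starRingEnd ℂ) a * u) := by
    rw [Complex.sq_norm]
  have ea : ‖a‖^2 = Complex.normSq a := by rw [Complex.sq_norm]
  have eu : ‖u‖^2 = Complex.normSq u := by rw [Complex.sq_norm]
  have hX : |((starRingEnd ℂ) a * u).re| ≤ ‖a‖ * ‖u‖ := by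
    calc |((starRingEnd ℂ) a * u).re| ≤ ‖(starRingEnd ℂ) a * u‖ := Complex.abs_re_le_norm _
    _ = ‖a‖ * ‖u‖ := by rw [norm_mul, RingHomIsometric.norm_map]
  have hX' : -(‖a‖ * ‖u‖) ≤ ((starRingEnd ℂ) a * u).re := neg_le_of_abs_le hX
  have hnsq1 : Complex.normSq (a - u)
      = Complex.normSq a + Complex.normSq u - 2 * ((starRingEnd ℂ) a * u).re := by
    simp only [Complex.normSq_apply, Complex.sub_re, Complex.sub_im, Complex.mul_re,
      Complex.mul_im, Complex.conj_re, Complex.conj_im]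
    ring
  have hnsq2 : Complex.normSq (1 - (starRingEnd ℂ) a * u)
      = 1 - 2 * ((starRingEnd ℂ) a * u).re + Complex.normSq a * Complex.normSq u := by
    simp only [Complex.normSq_apply, Complex.sub_re, Complex.sub_im, Complex.mul_re,
      Complex.mul_im, Complex.conj_re, Complex.conj_im, Complex.one_re, Complex.one_im]
    ring
  rw [mul_pow, mul_pow, e1, e2, hnsq1, hnsq2, ← ea, ← eu]
  set α := ‖a‖; set s := ‖u‖; set X := ((starRingEnd ℂ) a * u).re
  have key : (α + s)^2 * (1 - 2*X + α^2 * s^2) - (α^2 + s^2 - 2*X) * (1 + α*s)^2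
      = 2*(α*s + X)*(1-α^2)*(1-s^2) := by ring
  nlinarith [mul_nonneg (mul_nonneg (by linarith : (0:ℝ) ≤ α*s + X) (by nlinarith [norm_nonneg a] : (0:ℝ) ≤ 1 - α^2)) (by nlinarith [norm_nonneg u] : (0:ℝ) ≤ 1 - s^2)]


/-- uniform Möbius-distance bound on `closedBall 0 r`. -/
def rad (r : ℝ) : ℝ := Real.sqrt (1 - (1 - r^2)^2 / 4)

lemma rad_nonneg (r : ℝ) : 0 ≤ rad r := Real.sqrt_nonneg _

lemma rad_lt_one {r : ℝ} (h0 : 0 ≤ r) (h1 : r < 1) : rad r < 1 := by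
  rw [rad]
  have hr2 : 0 < 1 - r^2 := by nlinarith
  have hr2' : r^2 ≤ 1 := by nlinarith
  have h : 1 - (1 - r^2)^2/4 < 1 := by nlinarith [mul_pos hr2 hr2]
  have h' : (0:ℝ) ≤ 1 - (1 - r^2)^2/4 := by nlinarith
  calc Real.sqrt (1 - (1-r^2)^2/4) < Real.sqrt 1 :=
        Real.sqrt_lt_sqrt h' h
  _ = 1 := Real.sqrt_one

/-- **Schwarz–Pick-type estimate**: uniform on `closedBall 0 r`. -/
lemma schwarz_pick {G : ℂ → ℂ} (hd : DifferentiableOn ℂ G (ball (0:ℂ) 1))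
    (hm : MapsTo G (ball (0:ℂ) 1) (ball (0:ℂ) 1))
    {r : ℝ} (h0 : 0 ≤ r) (h1 : r < 1) {z w : ℂ}
    (hz : z ∈ closedBall (0:ℂ) r) (hw : w ∈ closedBall (0:ℂ) r) :
    ‖G z‖ ≤ (‖G w‖ + rad r) / (1 + ‖G w‖ * rad r) := by
  rw [mem_closedBall_zero_iff] at hz hw
  have hz1 : z ∈ ball (0:ℂ) 1 := by rw [mem_ball_zero_iff]; linarith
  have hw1 : w ∈ ball (0:ℂ) 1 := by rw [mem_ball_zero_iff]; linarith
  have hwlt : ‖w‖ < 1 := by linarith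
  have hzlt : ‖z‖ < 1 := by linarith
  have hGz : ‖G z‖ < 1 := mem_ball_zero_iff.1 (hm hz1)
  have ha : ‖G w‖ < 1 := mem_ball_zero_iff.1 (hm hw1)
  set a := G w with ha_def
  -- the composed map
  have hGd : DifferentiableOn ℂ (fun ζ => G (mob w ζ)) (ball (0:ℂ) 1) :=
    hd.comp (mob_differentiableOn hwlt) (mob_mapsTo hwlt)
  have hHd : DifferentiableOn ℂ (fun ζ => mob a (G (mob w ζ))) (ball (0:ℂ) 1) :=
    (mob_differentiableOn ha).comp hGd (fun ζ hζ => hm ((mob_mapsTo hwlt) hζ))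
  set H : ℂ → ℂ := fun ζ => mob a (G (mob w ζ)) with hH
  have hH0 : H 0 = 0 := by
    simp only [hH, mob_zero, ← ha_def, mob_self]
  -- Schwarz lemma
  have hHm : MapsTo H (ball (0:ℂ) 1) (ball (H 0) 1) := by
    rw [hH0]
    exact fun ζ hζ => (mob_mapsTo ha) (hm ((mob_mapsTo hwlt) hζ))
  have schwarz : ∀ ζ ∈ ball (0:ℂ) 1, ‖H ζ‖ ≤ ‖ζ‖ := by
    intro ζ hζ
    have := Complex.dist_le_div_mul_dist_of_mapsTo_ball hHd (hHm.mono_right ball_subset_closedBall) hζ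
    simpa [hH0, dist_zero_right, dist_eq_norm] using this
  have hmw : mob w z ∈ ball (0:ℂ) 1 := mob_mapsTo hwlt hz1
  have step : ‖mob a (G z)‖ ≤ ‖mob w z‖ := by
    have h := schwarz (mob w z) hmw
    simpa only [hH, mob_mob hwlt hzlt] using h
  -- bound ‖mob w z‖ ≤ rad r
  have hmob_rad : ‖mob w z‖ ≤ rad r := by
    have hne := mob_den_ne w z hwlt hzlt.le
    have hD : (0:ℝ) < Complex.normSq (1 - (starRingEnd ℂ) w * z) := by rwa [Complex.normSq_pos]
    have hXa : |((starRingEnd ℂ) w * z).re| ≤ ‖w‖ * ‖z‖ := by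
      calc |((starRingEnd ℂ) w * z).re| ≤ ‖(starRingEnd ℂ) w * z‖ := Complex.abs_re_le_norm _
      _ = ‖w‖ * ‖z‖ := by rw [norm_mul, RingHomIsometric.norm_map]
    have hnsqw : Complex.normSq w = ‖w‖^2 := by rw [Complex.sq_norm]
    have hnsqz : Complex.normSq z = ‖z‖^2 := by rw [Complex.sq_norm]
    have hid := normSq_identity w z
    have hDrep : Complex.normSq (1 - (starRingEnd ℂ) w * z)
        = 1 - 2 * ((starRingEnd ℂ) w * z).re + Complex.normSq w * Complex.normSq z := by
      simp only [Complex.normSq_apply, Complex.sub_re, Complex.sub_im, Complex.mul_re,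
        Complex.mul_im, Complex.conj_re, Complex.conj_im, Complex.one_re, Complex.one_im]
      ring
    have hwz1 : ‖w‖ * ‖z‖ ≤ 1 := by nlinarith [norm_nonneg w, norm_nonneg z]
    have hD4 : Complex.normSq (1 - (starRingEnd ℂ) w * z) ≤ 4 := by
      rw [hDrep, hnsqw, hnsqz]
      have hX' := neg_le_of_abs_le hXa
      nlinarith [mul_nonneg (norm_nonneg w) (norm_nonneg z)]
    have hsq : ‖mob w z‖^2 ≤ 1 - (1 - r^2)^2/4 := by
      have e : ‖mob w z‖^2 = Complex.normSq (w - z) / Complex.normSq (1 - (starRingEnd ℂ) w * z) := by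
        rw [mob, norm_div, div_pow,
          Complex.sq_norm, Complex.sq_norm]
      rw [e, div_le_iff₀ hD]
      have hfac : (1 - r^2)^2 ≤ (1 - Complex.normSq w) * (1 - Complex.normSq z) := by
        rw [hnsqw, hnsqz]
        have e1 : ‖w‖^2 ≤ r^2 := by nlinarith [norm_nonneg w]
        have e2 : ‖z‖^2 ≤ r^2 := by nlinarith [norm_nonneg z]
        have h3 : (1 - r^2) * (1 - r^2) ≤ (1 - ‖w‖^2) * (1 - ‖z‖^2) :=
          mul_le_mul (by linarith) (by linarith) (by nlinarith) (by nlinarith)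
        nlinarith
      have h5 : (1 - r^2)^2/4 * Complex.normSq (1 - (starRingEnd ℂ) w * z) ≤ (1 - r^2)^2 := by
        have hq : (0:ℝ) ≤ (1 - r^2)^2/4 := by positivity
        calc (1 - r^2)^2/4 * Complex.normSq (1 - (starRingEnd ℂ) w * z)
            ≤ (1 - r^2)^2/4 * 4 := by exact mul_le_mul_of_nonneg_left hD4 hq
        _ = (1 - r^2)^2 := by ring
      have h6 := h5.trans hfac
      have goal : Complex.normSq (w - z)
          = Complex.normSq (1 - (starRingEnd ℂ) w * z)
            - (1 - Complex.normSq w) * (1 - Complex.normSq z) := by linarith [hid]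
      rw [goal]
      have expand : (1 - (1 - r^2)^2/4) * Complex.normSq (1 - (starRingEnd ℂ) w * z)
          = Complex.normSq (1 - (starRingEnd ℂ) w * z)
            - (1 - r^2)^2/4 * Complex.normSq (1 - (starRingEnd ℂ) w * z) := by ring
      rw [expand]
      linarith
    have : ‖mob w z‖ = Real.sqrt (‖mob w z‖^2) := (Real.sqrt_sq (norm_nonneg _)).symm
    rw [this, rad]
    exact Real.sqrt_le_sqrt hsq
  -- recover G z
  have hu : ‖mob a (G z)‖ < 1 := norm_mob_lt_one ha hGz
  have hrec : G z = mob a (mob a (G z)) := (mob_mob ha hGz).symm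
  calc ‖G z‖ = ‖mob a (mob a (G z))‖ := by rw [← hrec]
  _ ≤ (‖a‖ + ‖mob a (G z)‖) / (1 + ‖a‖ * ‖mob a (G z)‖) := norm_mob_le ha hu
  _ ≤ (‖a‖ + rad r) / (1 + ‖a‖ * rad r) := by
      apply mobStep_mono (norm_nonneg a) (le_refl _) ha.le (norm_nonneg _)
        ((step.trans hmob_rad)) (rad_lt_one h0 h1).le


section MobiusDist

variable {N : ℕ} {Ω : Set (CN N)} {z₀ : CN N}

/-- The defining set of the Möbius pseudodistance. -/
def mobSet (Ω : Set (CN N)) (z₀ z : CN N) : Set ℝ :=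
  {r : ℝ | ∃ F : CN N → ℂ, DifferentiableOn ℂ F Ω ∧ (∀ x ∈ Ω, ‖F x‖ < 1) ∧
    F z₀ = 0 ∧ r = ‖F z‖}

lemma mobiusDist_eq (Ω : Set (CN N)) (z₀ z : CN N) :
    mobiusDist Ω z z₀ = sSup (mobSet Ω z₀ z) := rfl

lemma zero_mem_mobSet (Ω : Set (CN N)) (z₀ z : CN N) : (0:ℝ) ∈ mobSet Ω z₀ z :=
  ⟨fun _ => 0, differentiableOn_const 0, fun x _ => by simp, rfl, by simp⟩

lemma bddAbove_mobSet {z : CN N} (hz : z ∈ Ω) : BddAbove (mobSet Ω z₀ z) := by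
  refine ⟨1, fun r hr => ?_⟩
  obtain ⟨F, _, h2, _, h4⟩ := hr
  exact h4 ▸ (h2 z hz).le

lemma mobiusDist_nonneg {z : CN N} (hz : z ∈ Ω) : 0 ≤ mobiusDist Ω z z₀ := by
  rw [mobiusDist_eq]
  exact le_csSup (bddAbove_mobSet hz) (zero_mem_mobSet Ω z₀ z)

lemma le_mobiusDist {z : CN N} (hz : z ∈ Ω) {F : CN N → ℂ}
    (h1 : DifferentiableOn ℂ F Ω) (h2 : ∀ x ∈ Ω, ‖F x‖ < 1) (h3 : F z₀ = 0) :
    ‖F z‖ ≤ mobiusDist Ω z z₀ :=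
  le_csSup (bddAbove_mobSet hz) ⟨F, h1, h2, h3, rfl⟩

lemma mobiusDist_le_one {z : CN N} (hz : z ∈ Ω) : mobiusDist Ω z z₀ ≤ 1 := by
  rw [mobiusDist_eq]
  refine Real.sSup_le (fun r hr => ?_) zero_le_one
  obtain ⟨F, _, h2, _, h4⟩ := hr
  exact h4 ▸ (h2 z hz).le

lemma mobiusDist_self_le_zero : mobiusDist Ω z₀ z₀ ≤ 0 := by
  rw [mobiusDist_eq]
  refine Real.sSup_le (fun r hr => ?_) le_rfl
  obtain ⟨F, _, _, h3, h4⟩ := hr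
  simp [h4, h3]

/-- Key step estimate along a small affine disc inside `Ω`. -/
lemma comp_step {F : CN N → ℂ}
    (hF1 : DifferentiableOn ℂ F Ω) (hF2 : ∀ x ∈ Ω, ‖F x‖ < 1)
    {b a : CN N} {δ : ℝ} (hδ : 0 < δ) (hball : ball b δ ⊆ Ω) (hab : ‖a - b‖ ≤ δ / 2) :
    ‖F a‖ ≤ (‖F b‖ + rad (1/2)) / (1 + ‖F b‖ * rad (1/2)) := by
  have hbΩ : b ∈ Ω := hball (mem_ball_self hδ)
  have hFb : ‖F b‖ < 1 := hF2 b hbΩ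
  have hr0 : (0:ℝ) ≤ 1/2 := by norm_num
  have hr1 : (1:ℝ)/2 < 1 := by norm_num
  by_cases hne : a = b
  · subst hne
    have hrad := rad_nonneg (1/2:ℝ)
    have hsq : (0:ℝ) ≤ 1 - ‖F a‖^2 := by nlinarith [norm_nonneg (F a)]
    rw [le_div_iff₀ (by nlinarith [norm_nonneg (F a)])]
    nlinarith [mul_nonneg hrad hsq]
  · set u : CN N := a - b with hu
    have hu0 : u ≠ 0 := sub_ne_zero.2 hne
    have hun : (0:ℝ) < ‖u‖ := norm_pos_iff.2 hu0
    set c : ℂ := ((δ / ‖u‖ : ℝ) : ℂ) with hc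
    set G : ℂ → ℂ := fun ζ => F (b + (c * ζ) • u) with hG
    have hinner : ∀ ζ : ℂ, ‖(c * ζ) • u‖ = δ * ‖ζ‖ := by
      intro ζ
      rw [norm_smul, norm_mul, hc, Complex.norm_real, Real.norm_eq_abs,
        abs_of_pos (by positivity)]
      field_simp
    have hmapsΩ : MapsTo (fun ζ : ℂ => b + (c * ζ) • u) (ball (0:ℂ) 1) (ball b δ) := by
      intro ζ hζ
      rw [mem_ball_zero_iff] at hζ
      rw [mem_ball, dist_eq_norm]
      have : b + (c * ζ) • u - b = (c * ζ) • u := by abel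
      rw [this, hinner]
      nlinarith
    have hGd : DifferentiableOn ℂ G (ball (0:ℂ) 1) := by
      apply DifferentiableOn.comp hF1 _ (fun ζ hζ => hball (hmapsΩ hζ))
      apply DifferentiableOn.const_add
      exact (differentiableOn_id.const_mul c).smul_const u
    have hGm : MapsTo G (ball (0:ℂ) 1) (ball (0:ℂ) 1) := by
      intro ζ hζ
      rw [mem_ball_zero_iff]
      exact hF2 _ (hball (hmapsΩ hζ))
    set t : ℂ := ((‖u‖ / δ : ℝ) : ℂ) with ht
    have hct : c * t = 1 := by
      rw [hc, ht, ← Complex.ofReal_mul]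
      rw [show δ / ‖u‖ * (‖u‖ / δ) = 1 by field_simp]
      simp
    have hGt : G t = F a := by
      rw [hG]
      simp only [hct, one_smul]
      congr 1
      rw [hu]; abel
    have hG0 : G 0 = F b := by
      rw [hG]; simp
    have htm : t ∈ closedBall (0:ℂ) (1/2) := by
      rw [mem_closedBall_zero_iff, ht, Complex.norm_real, Real.norm_eq_abs,
        abs_of_pos (by positivity)]
      rw [div_le_iff₀ hδ]
      linarith
    have h0m : (0:ℂ) ∈ closedBall (0:ℂ) (1/2) := by
      simp
    have := schwarz_pick hGd hGm hr0 hr1 htm h0m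
    rwa [hGt, hG0] at this

end MobiusDist


section LtOne

variable {N : ℕ} {Ω : Set (CN N)} {z₀ : CN N}

/-- Local propagation of the Möbius bound. -/
lemma local_bound (hΩ : IsOpen Ω) {b : CN N} (hb : b ∈ Ω) :
    ∃ ε > 0, ∀ x ∈ ball b ε, x ∈ Ω ∧
      mobiusDist Ω x z₀ ≤ (mobiusDist Ω b z₀ + rad (1/2)) /
        (1 + mobiusDist Ω b z₀ * rad (1/2)) ∧
      mobiusDist Ω b z₀ ≤ (mobiusDist Ω x z₀ + rad (1/2)) /
        (1 + mobiusDist Ω x z₀ * rad (1/2)) := by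
  obtain ⟨δ, hδ, hball⟩ := Metric.isOpen_iff.mp hΩ b hb
  refine ⟨δ/4, by positivity, fun x hx => ?_⟩
  have hxb : ‖x - b‖ < δ/4 := by
    rw [mem_ball, dist_eq_norm] at hx; exact hx
  have hxΩ : x ∈ Ω := hball (by
    rw [mem_ball, dist_eq_norm]
    calc ‖x - b‖ < δ/4 := hxb
    _ < δ := by linarith)
  have hr := rad_nonneg (1/2:ℝ)
  have hr1 := rad_lt_one (by norm_num : (0:ℝ) ≤ 1/2) (by norm_num)
  have hbd : ∀ y, y ∈ Ω → mobiusDist Ω y z₀ ≤ 1 := fun y hy => mobiusDist_le_one hy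
  refine ⟨hxΩ, ?_, ?_⟩
  · -- bound at x from bound at b
    rw [mobiusDist_eq]
    refine Real.sSup_le (fun r hrm => ?_)
      (mobStep_nonneg (mobiusDist_nonneg hb) (hbd b hb) hr hr1.le)
    obtain ⟨F, h1, h2, h3, h4⟩ := hrm
    have step := comp_step h1 h2 hδ hball (show ‖x - b‖ ≤ δ/2 by linarith)
    refine h4 ▸ step.trans (mobStep_mono (norm_nonneg _)
      (le_mobiusDist hb h1 h2 h3) (hbd b hb) hr le_rfl hr1.le)
  · -- bound at b from bound at x
    have hball' : ball x (δ/2) ⊆ Ω := by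
      intro y hy
      apply hball
      rw [mem_ball] at hy ⊢
      calc dist y b ≤ dist y x + dist x b := dist_triangle _ _ _
      _ < δ/2 + δ/4 := by
          rw [dist_eq_norm x b]
          exact add_lt_add hy hxb
      _ < δ := by linarith
    rw [mobiusDist_eq]
    refine Real.sSup_le (fun r hrm => ?_)
      (mobStep_nonneg (mobiusDist_nonneg hxΩ) (hbd x hxΩ) hr hr1.le)
    obtain ⟨F, h1, h2, h3, h4⟩ := hrm
    have hbx : ‖b - x‖ ≤ (δ/2)/2 := by
      rw [show b - x = -(x - b) by abel, norm_neg]; linarith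
    have step := comp_step h1 h2 (by positivity : (0:ℝ) < δ/2) hball' hbx
    refine h4 ▸ step.trans (mobStep_mono (norm_nonneg _)
      (le_mobiusDist hxΩ h1 h2 h3) (hbd x hxΩ) hr le_rfl hr1.le)

/-- On a connected domain the Möbius pseudodistance to an interior point is `< 1`. -/
lemma mobiusDist_lt_one (hdom : CNDomain Ω) (hz₀ : z₀ ∈ Ω) {z : CN N} (hz : z ∈ Ω) :
    mobiusDist Ω z z₀ < 1 := by
  obtain ⟨hΩ, hconn⟩ := hdom
  have hr := rad_nonneg (1/2:ℝ)
  have hr1 := rad_lt_one (by norm_num : (0:ℝ) ≤ 1/2) (by norm_num)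
  set U : Set (CN N) := {a | a ∈ Ω ∧ mobiusDist Ω a z₀ < 1} with hU
  set V : Set (CN N) := {a | a ∈ Ω ∧ 1 ≤ mobiusDist Ω a z₀} with hV
  have hUopen : IsOpen U := by
    rw [Metric.isOpen_iff]
    rintro a ⟨haΩ, halt⟩
    obtain ⟨ε, hε, hloc⟩ := local_bound (z₀ := z₀) hΩ haΩ
    refine ⟨ε, hε, fun x hx => ?_⟩
    obtain ⟨hxΩ, hb1, _⟩ := hloc x hx
    exact ⟨hxΩ, hb1.trans_lt (mobStep_lt_one (mobiusDist_nonneg haΩ) halt hr hr1)⟩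
  have hVopen : IsOpen V := by
    rw [Metric.isOpen_iff]
    rintro a ⟨haΩ, halt⟩
    obtain ⟨ε, hε, hloc⟩ := local_bound (z₀ := z₀) hΩ haΩ
    refine ⟨ε, hε, fun x hx => ?_⟩
    obtain ⟨hxΩ, _, hb2⟩ := hloc x hx
    refine ⟨hxΩ, ?_⟩
    by_contra h
    push_neg at h
    have : mobiusDist Ω a z₀ < 1 :=
      hb2.trans_lt (mobStep_lt_one (mobiusDist_nonneg hxΩ) h hr hr1)
    linarith
  have hdisj : Disjoint U V := by
    rw [Set.disjoint_iff]
    rintro a ⟨⟨_, h1⟩, ⟨_, h2⟩⟩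
    exact absurd (h2.trans_lt h1) (by norm_num)
  have hsub : Ω ⊆ U ∪ V := by
    intro a ha
    rcases lt_or_ge (mobiusDist Ω a z₀) 1 with h | h
    · exact Or.inl ⟨ha, h⟩
    · exact Or.inr ⟨ha, h⟩
  have hne : (Ω ∩ U).Nonempty := by
    refine ⟨z₀, hz₀, hz₀, ?_⟩
    exact lt_of_le_of_lt mobiusDist_self_le_zero (by norm_num)
  have := hconn.isPreconnected.subset_left_of_subset_union hUopen hVopen hdisj hsub hne
  exact (this hz).2

/-- Uniform Möbius bound on compact subsets. -/
lemma compact_mobius_bound (hdom : CNDomain Ω) (hz₀ : z₀ ∈ Ω)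
    {L : Set (CN N)} (hLΩ : L ⊆ Ω) (hL : IsCompact L) :
    ∃ β : ℝ, 0 ≤ β ∧ β < 1 ∧ ∀ b ∈ L, mobiusDist Ω b z₀ ≤ β := by
  classical
  rcases L.eq_empty_or_nonempty with rfl | hLne
  · exact ⟨0, le_rfl, by norm_num, fun b hb => absurd hb (notMem_empty b)⟩
  have hr := rad_nonneg (1/2:ℝ)
  have hr1 := rad_lt_one (by norm_num : (0:ℝ) ≤ 1/2) (by norm_num)
  set B : CN N → ℝ := fun b => (mobiusDist Ω b z₀ + rad (1/2)) /
    (1 + mobiusDist Ω b z₀ * rad (1/2)) with hB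
  set W : CN N → Set (CN N) := fun b =>
    if h : b ∈ Ω then ball b (Classical.choose (local_bound (z₀ := z₀) hdom.1 h)) else ∅
    with hW
  have hWnhds : ∀ b ∈ L, W b ∈ 𝓝 b := by
    intro b hb
    have hbΩ : b ∈ Ω := hLΩ hb
    rw [hW]
    simp only [dif_pos hbΩ]
    exact ball_mem_nhds b (Classical.choose_spec (local_bound (z₀ := z₀) hdom.1 hbΩ)).1
  obtain ⟨t, htL, hcov⟩ := hL.elim_nhds_subcover W hWnhds
  have htne : t.Nonempty := by
    by_contra h
    rw [Finset.not_nonempty_iff_eq_empty] at h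
    obtain ⟨x, hx⟩ := hLne
    have := hcov hx
    simp [h] at this
  refine ⟨t.sup' htne B, ?_, ?_, ?_⟩
  · obtain ⟨b, hb⟩ := htne
    refine le_trans ?_ (Finset.le_sup' B hb)
    exact mobStep_nonneg (mobiusDist_nonneg (hLΩ (htL b hb)))
      (mobiusDist_le_one (hLΩ (htL b hb))) hr hr1.le
  · rw [Finset.sup'_lt_iff]
    intro b hb
    exact mobStep_lt_one (mobiusDist_nonneg (hLΩ (htL b hb)))
      (mobiusDist_lt_one hdom hz₀ (hLΩ (htL b hb))) hr hr1
  · intro x hx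
    have := hcov hx
    rw [Set.mem_iUnion₂] at this
    obtain ⟨b, hb, hxW⟩ := this
    have hbΩ : b ∈ Ω := hLΩ (htL b hb)
    rw [hW] at hxW
    simp only [dif_pos hbΩ] at hxW
    have hspec := (Classical.choose_spec (local_bound (z₀ := z₀) hdom.1 hbΩ)).2 x hxW
    exact (hspec.2.1).trans (Finset.le_sup' B hb)

end LtOne


section StepA

variable {N : ℕ} {Ω : Set (CN N)} {z₀ : CN N}

lemma caratDist_le_of_mobius_le {z : CN N} (hz : z ∈ Ω) {γ : ℝ} (hγ1 : γ < 1)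
    (hc : mobiusDist Ω z z₀ ≤ γ) :
    caratDist Ω z z₀ ≤ Real.log ((1 + γ) / (1 - γ)) := by
  have h0 : 0 ≤ mobiusDist Ω z z₀ := mobiusDist_nonneg hz
  have h1 : mobiusDist Ω z z₀ < 1 := lt_of_le_of_lt hc hγ1
  rw [caratDist]
  apply Real.log_le_log (div_pos (by linarith) (by linarith))
  rw [div_le_div_iff₀ (by linarith) (by linarith)]
  nlinarith

lemma one_le_ratio {γ : ℝ} (h0 : 0 ≤ γ) (h1 : γ < 1) : 1 ≤ (1 + γ) / (1 - γ) := by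
  rw [le_div_iff₀ (by linarith)]
  linarith

/-- Main Step A: functions hitting `L₀` on `closedBall 0 r` have their image of
`closedBall 0 r` inside one fixed compact subset of `Ω`. -/
lemma image_in_compact (hdom : CNDomain Ω) (hz₀ : z₀ ∈ Ω)
    (hlim : ∀ M : ℝ, 0 < M → ∃ L : Set (CN N), L ⊆ Ω ∧ IsCompact L ∧
      ∀ z ∈ Ω \ L, M < caratDist Ω z z₀)
    {L₀ : Set (CN N)} (hL₀Ω : L₀ ⊆ Ω) (hL₀c : IsCompact L₀)
    {r : ℝ} (h0r : 0 ≤ r) (hr1 : r < 1) :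
    ∃ Lc : Set (CN N), Lc ⊆ Ω ∧ IsCompact Lc ∧
      ∀ f : ℂ → CN N, DifferentiableOn ℂ f (ball (0:ℂ) 1) →
        MapsTo f (ball (0:ℂ) 1) Ω → (∃ w ∈ closedBall (0:ℂ) r, f w ∈ L₀) →
        ∀ z ∈ closedBall (0:ℂ) r, f z ∈ Lc := by
  obtain ⟨β, hβ0, hβ1, hβ⟩ := compact_mobius_bound hdom hz₀ hL₀Ω hL₀c
  have hrad0 := rad_nonneg r
  have hrad1 := rad_lt_one h0r hr1
  set γ : ℝ := (β + rad r) / (1 + β * rad r) with hγ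
  have hγ0 : 0 ≤ γ := mobStep_nonneg hβ0 hβ1.le hrad0 hrad1.le
  have hγ1 : γ < 1 := mobStep_lt_one hβ0 hβ1 hrad0 hrad1
  set M : ℝ := Real.log ((1 + γ) / (1 - γ)) + 1 with hM
  have hMpos : 0 < M := by
    have h := Real.log_nonneg (one_le_ratio hγ0 hγ1)
    rw [hM]
    linarith
  obtain ⟨L, hLΩ, hLc, hLM⟩ := hlim M hMpos
  refine ⟨L, hLΩ, hLc, fun f hd hm ⟨w, hw, hfw⟩ z hz => ?_⟩
  have hsub : closedBall (0:ℂ) r ⊆ ball (0:ℂ) 1 := by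
    intro x hx
    rw [mem_closedBall_zero_iff] at hx
    rw [mem_ball_zero_iff]
    linarith
  have hfzΩ : f z ∈ Ω := hm (hsub hz)
  by_contra hnot
  have hgt := hLM (f z) ⟨hfzΩ, hnot⟩
  have hmob : mobiusDist Ω (f z) z₀ ≤ γ := by
    rw [mobiusDist_eq]
    refine Real.sSup_le (fun q hq => ?_) hγ0
    obtain ⟨F, h1, h2, h3, h4⟩ := hq
    have hGd : DifferentiableOn ℂ (fun ζ => F (f ζ)) (ball (0:ℂ) 1) :=
      DifferentiableOn.comp h1 hd hm
    have hGm : MapsTo (fun ζ => F (f ζ)) (ball (0:ℂ) 1) (ball (0:ℂ) 1) := by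
      intro ζ hζ
      rw [mem_ball_zero_iff]
      exact h2 _ (hm hζ)
    have hsp := schwarz_pick hGd hGm h0r hr1 hz hw
    have hFw : ‖F (f w)‖ ≤ β :=
      (le_mobiusDist (hL₀Ω hfw) h1 h2 h3).trans (hβ _ hfw)
    refine h4 ▸ hsp.trans ?_
    exact mobStep_mono (norm_nonneg _) hFw hβ1.le hrad0 le_rfl hrad1.le
  have hcarat := caratDist_le_of_mobius_le (z₀ := z₀) hfzΩ hγ1 hmob
  rw [hM] at hgt
  linarith

end StepA


section Lip

variable {N : ℕ}

/-- Interior Cauchy-type Lipschitz estimate for bounded holomorphic maps. -/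
lemma lip_of_bounded {g : ℂ → CN N} (hd : DifferentiableOn ℂ g (ball (0:ℂ) 1))
    {s C : ℝ} (hs0 : 0 ≤ s) (hs1 : s < 1)
    (hC : ∀ ζ ∈ closedBall (0:ℂ) ((1 + s)/2), ‖g ζ‖ ≤ C) :
    ∀ z ∈ closedBall (0:ℂ) s, ∀ w ∈ closedBall (0:ℂ) s,
      ‖g z - g w‖ ≤ ((2*C + 1)/((1 - s)/2)) * ‖z - w‖ := by
  have hR : (0:ℝ) < (1 - s)/2 := by linarith
  have hC0 : 0 ≤ C := le_trans (norm_nonneg _) (hC 0 (by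
    simp only [mem_closedBall, dist_self]
    positivity))
  set κ : ℝ := (2*C + 1)/((1 - s)/2) with hκ
  have hballsub : closedBall (0:ℂ) s ⊆ ball (0:ℂ) 1 := fun x hx => by
    rw [mem_closedBall_zero_iff] at hx
    rw [mem_ball_zero_iff]
    linarith
  -- derivative bound
  have hderiv : ∀ x ∈ closedBall (0:ℂ) s, ‖deriv g x‖ ≤ κ := by
    intro x hx
    rw [mem_closedBall_zero_iff] at hx
    have hsub1 : ball x ((1 - s)/2) ⊆ ball (0:ℂ) 1 := by
      intro ζ hζ
      rw [mem_ball] at hζ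
      rw [mem_ball_zero_iff]
      calc ‖ζ‖ = ‖ζ - x + x‖ := by ring_nf
      _ ≤ ‖ζ - x‖ + ‖x‖ := norm_add_le _ _
      _ < (1 - s)/2 + s := by
          rw [dist_eq_norm] at hζ
          exact add_lt_add_of_lt_of_le hζ hx
      _ < 1 := by linarith
    have hsub2 : ball x ((1 - s)/2) ⊆ closedBall (0:ℂ) ((1 + s)/2) := by
      intro ζ hζ
      rw [mem_ball, dist_eq_norm] at hζ
      rw [mem_closedBall_zero_iff]
      calc ‖ζ‖ = ‖ζ - x + x‖ := by ring_nf
      _ ≤ ‖ζ - x‖ + ‖x‖ := norm_add_le _ _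
      _ ≤ (1 - s)/2 + s := by
          exact add_le_add hζ.le hx
      _ = (1 + s)/2 := by ring
    have hmaps : MapsTo g (ball x ((1 - s)/2)) (ball (g x) (2*C + 1)) := by
      intro ζ hζ
      rw [mem_ball, dist_eq_norm]
      have h1 : ‖g ζ‖ ≤ C := hC ζ (hsub2 hζ)
      have h2 : ‖g x‖ ≤ C := hC x (by
        rw [mem_closedBall_zero_iff]; linarith)
      calc ‖g ζ - g x‖ ≤ ‖g ζ‖ + ‖g x‖ := norm_sub_le _ _
      _ ≤ 2*C := by linarith
      _ < 2*C + 1 := by linarith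
    have := Complex.norm_deriv_le_div_of_mapsTo_ball (hd.mono hsub1) (hmaps.mono_right ball_subset_closedBall) hR
    exact this
  -- mean value inequality
  intro z hz w hw
  have hfd : ∀ x ∈ closedBall (0:ℂ) s,
      HasFDerivWithinAt g
        ((ContinuousLinearMap.smulRight (1 : ℂ →L[ℂ] ℂ) (deriv g x)).restrictScalars ℝ)
        (closedBall (0:ℂ) s) x := by
    intro x hx
    have hda : DifferentiableAt ℂ g x :=
      hd.differentiableAt (isOpen_ball.mem_nhds (hballsub hx))
    have h1 : HasFDerivAt g (ContinuousLinearMap.smulRight (1 : ℂ →L[ℂ] ℂ) (deriv g x)) x :=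
      hasDerivAt_iff_hasFDerivAt.mp hda.hasDerivAt
    exact (h1.restrictScalars ℝ).hasFDerivWithinAt
  have hbd : ∀ x ∈ closedBall (0:ℂ) s,
      ‖(ContinuousLinearMap.smulRight (1 : ℂ →L[ℂ] ℂ) (deriv g x)).restrictScalars ℝ‖ ≤ κ := by
    intro x hx
    rw [ContinuousLinearMap.norm_restrictScalars, ContinuousLinearMap.norm_smulRight_apply,
      ContinuousLinearMap.one_def, ContinuousLinearMap.norm_id, one_mul]
    exact hderiv x hx
  exact Convex.norm_image_sub_le_of_norm_hasFDerivWithin_le hfd hbd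
    (convex_closedBall (0:ℂ) s) hw hz

end Lip


section Montel

variable {N : ℕ}

/-- Compactness of a uniformly Lipschitz, pointwise-compactly-bounded family. -/
lemma isCompact_lipschitz_set {K : Set ℂ} (hK : IsCompact K) {κ : ℝ} (hκ : 0 ≤ κ)
    {L : Set (CN N)} (hL : IsCompact L) :
    IsCompact {h : C(K, CN N) |
      (∀ x y : K, ‖h x - h y‖ ≤ κ * ‖(x:ℂ) - (y:ℂ)‖) ∧ ∀ x : K, h x ∈ L} := by
  haveI : CompactSpace K := isCompact_iff_compactSpace.mp hK
  set T : Set C(K, CN N) := {h | (∀ x y : K, ‖h x - h y‖ ≤ κ * ‖(x:ℂ) - (y:ℂ)‖) ∧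
    ∀ x : K, h x ∈ L} with hT
  apply ArzelaAscoli.isCompact_of_equicontinuous
  · have himg : ContinuousMap.toFun '' T = {u : K → CN N |
        (∀ x y : K, ‖u x - u y‖ ≤ κ * ‖(x:ℂ) - (y:ℂ)‖) ∧ ∀ x : K, u x ∈ L} := by
      ext u
      constructor
      · rintro ⟨h, hh, rfl⟩
        exact hh
      · intro hu
        have hlip : LipschitzWith (Real.toNNReal κ) u := by
          apply LipschitzWith.of_dist_le_mul
          intro x y
          rw [Real.coe_toNNReal κ hκ, dist_eq_norm, Subtype.dist_eq, dist_eq_norm]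
          exact hu.1 x y
        exact ⟨⟨u, hlip.continuous⟩, hu, rfl⟩
    rw [himg]
    have heq : {u : K → CN N |
        (∀ x y : K, ‖u x - u y‖ ≤ κ * ‖(x:ℂ) - (y:ℂ)‖) ∧ ∀ x : K, u x ∈ L}
        = (⋂ (x : K) (y : K), {u : K → CN N | ‖u x - u y‖ ≤ κ * ‖(x:ℂ) - (y:ℂ)‖})
          ∩ ⋂ (x : K), (fun u : K → CN N => u x) ⁻¹' L := by
      ext u
      simp [Set.mem_iInter, Set.mem_setOf_eq]
    rw [heq]
    apply IsCompact.of_isClosed_subset (isCompact_univ_pi (fun _ : K => hL))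
    · apply IsClosed.inter
      · exact isClosed_iInter fun x => isClosed_iInter fun y =>
          isClosed_le (((continuous_apply x).sub (continuous_apply y)).norm) continuous_const
      · exact isClosed_iInter fun x => hL.isClosed.preimage (continuous_apply x)
    · intro u hu
      rw [Set.mem_univ_pi]
      intro x
      exact Set.mem_iInter.mp hu.2 x
  · intro x₀
    apply Metric.equicontinuousAt_of_continuity_modulus (fun x => κ * dist x₀ x)
    · have : Tendsto (fun x : K => κ * dist x₀ x) (𝓝 x₀) (𝓝 (κ * dist x₀ x₀)) :=
        (continuous_const.mul (continuous_const.dist continuous_id)).tendsto x₀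
      simpa using this
    · apply Eventually.of_forall
      intro x i
      rw [dist_eq_norm]
      calc ‖(i : C(K, CN N)) x₀ - (i : C(K, CN N)) x‖
          ≤ κ * ‖(x₀:ℂ) - (x:ℂ)‖ := i.2.1 x₀ x
      _ = κ * dist x₀ x := by rw [Subtype.dist_eq, dist_eq_norm]

end Montel


section MontelMain

variable {N : ℕ}

/-- Montel-type theorem: a sequence of holomorphic maps on the disc whose images of an
exhausting family of closed balls lie in fixed compact subsets of `Ω` has a locally uniformly
convergent subsequence. -/
lemma montel {Ω : Set (CN N)} {g : ℕ → ℂ → CN N}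
    (hd : ∀ n, DifferentiableOn ℂ (g n) (ball (0:ℂ) 1))
    {s : ℕ → ℝ} (hs0 : ∀ j, 0 ≤ s j) (hs1 : ∀ j, s j < 1)
    (hexh : ∀ K : Set ℂ, K ⊆ ball (0:ℂ) 1 → IsCompact K →
      ∃ j, K ⊆ closedBall (0:ℂ) (s j))
    {Lc : ℕ → Set (CN N)} (hLcΩ : ∀ j, Lc j ⊆ Ω) (hLc : ∀ j, IsCompact (Lc j))
    (hmaps : ∀ j n, MapsTo (g n) (closedBall (0:ℂ) ((1 + s j)/2)) (Lc j)) :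
    ∃ φ : ℕ → ℕ, StrictMono φ ∧ ∃ h : ℂ → CN N,
      DifferentiableOn ℂ h (ball (0:ℂ) 1) ∧ MapsTo h (ball (0:ℂ) 1) Ω ∧
      TendstoLocallyUniformlyOn (fun m => g (φ m)) h atTop (ball (0:ℂ) 1) := by
  classical
  -- bounds on compacts
  have hCex : ∀ j, ∃ Cj : ℝ, 0 ≤ Cj ∧ ∀ x ∈ Lc j, ‖x‖ ≤ Cj := by
    intro j
    obtain ⟨R, hR⟩ := (hLc j).isBounded.subset_closedBall 0
    refine ⟨max R 0, le_max_right _ _, fun x hx => ?_⟩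
    have := hR hx
    rw [mem_closedBall_zero_iff] at this
    exact this.trans (le_max_left _ _)
  choose C hC0 hCb using hCex
  set κ : ℕ → ℝ := fun j => (2 * C j + 1)/((1 - s j)/2) with hκdef
  have hκ0 : ∀ j, 0 ≤ κ j := by
    intro j
    have := hC0 j
    have := hs1 j
    apply div_nonneg <;> linarith
  have hsballs : ∀ j, closedBall (0:ℂ) (s j) ⊆ ball (0:ℂ) 1 := by
    intro j x hx
    rw [mem_closedBall_zero_iff] at hx
    rw [mem_ball_zero_iff]
    exact lt_of_le_of_lt hx (hs1 j)
  have hsmall : ∀ j, closedBall (0:ℂ) (s j) ⊆ closedBall (0:ℂ) ((1 + s j)/2) :=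
    fun j => closedBall_subset_closedBall (by linarith [hs1 j])
  -- uniform Lipschitz bounds
  have equiLip : ∀ j n, ∀ z ∈ closedBall (0:ℂ) (s j), ∀ w ∈ closedBall (0:ℂ) (s j),
      ‖g n z - g n w‖ ≤ κ j * ‖z - w‖ := by
    intro j n
    exact lip_of_bounded (hd n) (hs0 j) (hs1 j)
      (fun ζ hζ => hCb j _ (hmaps j n hζ))
  haveI : ∀ j : ℕ, CompactSpace (closedBall (0:ℂ) (s j)) :=
    fun j => isCompact_iff_compactSpace.mp (isCompact_closedBall _ _)
  set T : ∀ j : ℕ, Set C(closedBall (0:ℂ) (s j), CN N) := fun j =>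
    {h | (∀ x y : closedBall (0:ℂ) (s j), ‖h x - h y‖ ≤ κ j * ‖(x:ℂ) - (y:ℂ)‖) ∧
      ∀ x : closedBall (0:ℂ) (s j), h x ∈ Lc j} with hTdef
  have hTcomp : ∀ j, IsCompact (T j) :=
    fun j => isCompact_lipschitz_set (isCompact_closedBall _ _) (hκ0 j) (hLc j)
  have hcont : ∀ n j, Continuous (fun x : closedBall (0:ℂ) (s j) => g n (x : ℂ)) :=
    fun n j => (((hd n).continuousOn).mono (hsballs j)).restrict
  set R : ℕ → ∀ j : ℕ, C(closedBall (0:ℂ) (s j), CN N) :=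
    fun n j => ⟨fun x => g n (x : ℂ), hcont n j⟩ with hRdef
  have hmem : ∀ n, R n ∈ Set.univ.pi T := by
    intro n
    rw [Set.mem_univ_pi]
    intro j
    constructor
    · intro x y
      exact equiLip j n x x.2 y y.2
    · intro x
      exact hmaps j n (hsmall j x.2)
  obtain ⟨a, _, φ, hφ, hconv⟩ := (isCompact_univ_pi hTcomp).tendsto_subseq hmem
  have hconvj : ∀ j, Tendsto (fun m => R (φ m) j) atTop (𝓝 (a j)) :=
    fun j => (tendsto_pi_nhds.mp hconv) j
  have hunif : ∀ j, TendstoUniformly (fun m (x : closedBall (0:ℂ) (s j)) => g (φ m) (x:ℂ))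
      (fun x => a j x) atTop :=
    fun j => ContinuousMap.tendsto_iff_tendstoUniformly.mp (hconvj j)
  have hpt : ∀ (j : ℕ) (z : ℂ) (hz : z ∈ closedBall (0:ℂ) (s j)),
      Tendsto (fun m => g (φ m) z) atTop (𝓝 (a j ⟨z, hz⟩)) :=
    fun j z hz => (hunif j).tendsto_at ⟨z, hz⟩
  -- the limit function
  set h : ℂ → CN N := fun z =>
    if hz : ∃ j, z ∈ closedBall (0:ℂ) (s j) then a hz.choose ⟨z, hz.choose_spec⟩ else 0
    with hhdef
  have hcons : ∀ (j : ℕ) (z : ℂ) (hz : z ∈ closedBall (0:ℂ) (s j)),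
      h z = a j ⟨z, hz⟩ := by
    intro j z hz
    have hex : ∃ j, z ∈ closedBall (0:ℂ) (s j) := ⟨j, hz⟩
    rw [hhdef]
    simp only [dif_pos hex]
    exact tendsto_nhds_unique (hpt hex.choose z hex.choose_spec) (hpt j z hz)
  have hmemj : ∀ z ∈ ball (0:ℂ) 1, ∃ j, z ∈ closedBall (0:ℂ) (s j) := by
    intro z hz
    obtain ⟨j, hj⟩ := hexh {z} (singleton_subset_iff.mpr hz) isCompact_singleton
    exact ⟨j, hj rfl⟩
  have hTLU : TendstoLocallyUniformlyOn (fun m => g (φ m)) h atTop (ball (0:ℂ) 1) := by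
    rw [tendstoLocallyUniformlyOn_iff_forall_isCompact isOpen_ball]
    intro K hK hKc
    obtain ⟨j, hj⟩ := hexh K hK hKc
    apply TendstoUniformlyOn.mono _ hj
    rw [tendstoUniformlyOn_iff_tendstoUniformly_comp_coe]
    have : (h ∘ (Subtype.val : closedBall (0:ℂ) (s j) → ℂ)) = fun x => a j x := by
      funext x
      exact hcons j x x.2
    rw [this]
    exact hunif j
  have hdiff : DifferentiableOn ℂ h (ball (0:ℂ) 1) :=
    hTLU.differentiableOn (Eventually.of_forall (fun m => hd (φ m))) isOpen_ball
  have hmapsTo : MapsTo h (ball (0:ℂ) 1) Ω := by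
    intro z hz
    obtain ⟨j, hj⟩ := hmemj z hz
    rw [hcons j z hj]
    apply hLcΩ j
    apply (hLc j).isClosed.mem_of_tendsto (hpt j z hj)
    exact Eventually.of_forall (fun m => hmaps j (φ m) (hsmall j hj))
  exact ⟨φ, hφ, h, hdiff, hmapsTo, hTLU⟩

end MontelMain

end Stmt17

open Stmt17 in
theorem stmt_17 {N : ℕ} (Ω : Set (CN N)) (hdom : CNDomain Ω) (hpsc : Pseudoconvex Ω)
    (z₀ : CN N) (hz₀ : z₀ ∈ Ω)
    (hlim : ∀ M : ℝ, 0 < M → ∃ L : Set (CN N), L ⊆ Ω ∧ IsCompact L ∧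
      ∀ z ∈ Ω \ L, M < caratDist Ω z z₀) :
    Taut Ω := by
  intro f hfd hfm
  by_cases hcd : CompactlyDivergentFrom (ball (0:ℂ) 1) Ω f
  · exact Or.inl hcd
  right
  rw [CompactlyDivergentFrom] at hcd
  push_neg at hcd
  obtain ⟨K₀, hK₀b, hK₀c, L₀, hL₀Ω, hL₀c, hfreq⟩ := hcd
  obtain ⟨k, hk, hkP⟩ := extraction_of_frequently_atTop (frequently_atTop.mpr hfreq)
  have hpts : ∀ m : ℕ, ∃ z ∈ K₀, f (k m) z ∈ L₀ := by
    intro m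
    obtain ⟨x, hx1, hx2⟩ := Set.not_disjoint_iff.mp (hkP m)
    obtain ⟨z, hzK, rfl⟩ := hx1
    exact ⟨z, hzK, hx2⟩
  choose zz hzzK hzzL using hpts
  have hK₀ne : K₀.Nonempty := ⟨zz 0, hzzK 0⟩
  obtain ⟨zmax, hzmaxK, hzmax'⟩ := hK₀c.exists_isMaxOn hK₀ne continuous_norm.continuousOn
  have hzmax : ∀ x ∈ K₀, ‖x‖ ≤ ‖zmax‖ := fun x hx => hzmax' hx
  set r₀ : ℝ := ‖zmax‖ with hr₀def
  have hr₀0 : 0 ≤ r₀ := norm_nonneg _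
  have hr₀1 : r₀ < 1 := mem_ball_zero_iff.mp (hK₀b hzmaxK)
  have hK₀sub : K₀ ⊆ closedBall (0:ℂ) r₀ :=
    fun x hx => mem_closedBall_zero_iff.mpr (hzmax x hx)
  -- exhausting radii
  set s : ℕ → ℝ := fun j => max r₀ (1 - 1/(j+2)) with hsdef
  have hs0 : ∀ j, 0 ≤ s j := fun j => le_trans hr₀0 (le_max_left _ _)
  have hs1 : ∀ j, s j < 1 := by
    intro j
    apply max_lt hr₀1
    have : (0:ℝ) < 1/(j+2) := by positivity
    linarith
  have hsr₀ : ∀ j, r₀ ≤ s j := fun j => le_max_left _ _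
  have hexh : ∀ K : Set ℂ, K ⊆ ball (0:ℂ) 1 → IsCompact K →
      ∃ j, K ⊆ closedBall (0:ℂ) (s j) := by
    intro K hKb hKc
    rcases K.eq_empty_or_nonempty with rfl | hKne
    · exact ⟨0, empty_subset _⟩
    obtain ⟨xM, hxK, hxmax'⟩ := hKc.exists_isMaxOn hKne continuous_norm.continuousOn
    have hxmax : ∀ y ∈ K, ‖y‖ ≤ ‖xM‖ := fun y hy => hxmax' hy
    have hrK1 : ‖xM‖ < 1 := mem_ball_zero_iff.mp (hKb hxK)
    obtain ⟨n, hn⟩ := exists_nat_gt (1/(1 - ‖xM‖))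
    refine ⟨n, fun y hy => ?_⟩
    have h1 : (0:ℝ) < 1 - ‖xM‖ := by linarith
    have h2 : (1:ℝ)/(n+2) ≤ 1 - ‖xM‖ := by
      rw [div_le_iff₀ (by positivity)]
      have h3 : (1:ℝ)/(1 - ‖xM‖) < n + 2 := by
        have : (n:ℝ) ≤ n + 2 := by linarith
        linarith
      rw [div_lt_iff₀ h1] at h3
      linarith
    rw [mem_closedBall_zero_iff]
    calc ‖y‖ ≤ ‖xM‖ := hxmax y hy
    _ ≤ 1 - 1/(n+2) := by linarith
    _ ≤ s n := le_max_right _ _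
  -- compact images
  have hradj : ∀ j : ℕ, 0 ≤ (1 + s j)/2 ∧ (1 + s j)/2 < 1 := by
    intro j
    constructor
    · linarith [hs0 j]
    · linarith [hs1 j]
  choose Lc hLcΩ hLcC hLcP using fun j : ℕ =>
    image_in_compact hdom hz₀ hlim hL₀Ω hL₀c (hradj j).1 (hradj j).2
  have hmaps : ∀ (j m : ℕ),
      MapsTo (f (k m)) (closedBall (0:ℂ) ((1 + s j)/2)) (Lc j) := by
    intro j m z hz
    refine hLcP j (f (k m)) (hfd (k m)) (hfm (k m)) ⟨zz m, ?_, hzzL m⟩ z hz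
    have : zz m ∈ closedBall (0:ℂ) r₀ := hK₀sub (hzzK m)
    rw [mem_closedBall_zero_iff] at this ⊢
    calc ‖zz m‖ ≤ r₀ := this
    _ ≤ s j := hsr₀ j
    _ ≤ (1 + s j)/2 := by linarith [hs1 j]
  obtain ⟨φ, hφ, h, hdiff, hmapsTo, hTLU⟩ :=
    montel (fun m => hfd (k m)) hs0 hs1 hexh hLcΩ hLcC hmaps
  exact ⟨k ∘ φ, hk.comp hφ, h, hdiff, hmapsTo, hTLU⟩
end
end
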